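/- arXiv:1006.5280 — 3 statements merged into one kernel-verified Lean document; each statement's English description precedes it below -/
import Mathlib

section
/- If a set Q of quartets defines a phylogenetic tree T with |L(T)| = n, then |Q| ≥ n − 3; moreover, if |Q| = n − 3, then every quartet in Q distinguishes an interior edge of T. -/
noncomputable section

attribute [local instance] Classical.propDecidable

/-- The simple graph on `ℕ` whose edges are the elements of the finite edge set `E`. -/
def graphOfEdges (E : Finset (Sym2 ℕ)) : SimpleGraph ℕ where
  Adj u v := u ≠ v ∧ s(u, v) ∈ E
  symm := by
    constructor
    intro u v h
    refine ⟨h.1.symm, ?_⟩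
    rw [Sym2.eq_swap]
    exact h.2
  loopless := by constructor; intro v h; exact h.1 rfl

/-- The degree of `v` with respect to the edge set `E`. -/
def degOf (E : Finset (Sym2 ℕ)) (v : ℕ) : ℕ := (E.filter (fun e => v ∈ e)).card

/-- A phylogenetic tree: a finite tree (connected acyclic graph), with vertices
taken from `ℕ`, having no vertex of degree 2. -/
structure PhyloTree where
  verts : Finset ℕ
  edges : Finset (Sym2 ℕ)
  edge_verts : ∀ e ∈ edges, ∀ x ∈ e, x ∈ verts
  not_diag : ∀ e ∈ edges, ¬ e.IsDiag
  conn : ∀ u ∈ verts, ∀ v ∈ verts, (graphOfEdges edges).Reachable u v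
  acyclic : (graphOfEdges edges).IsAcyclic
  verts_nonempty : verts.Nonempty
  no_deg_two : ∀ v ∈ verts, degOf edges v ≠ 2

namespace PhyloTree

/-- The underlying simple graph of a phylogenetic tree. -/
def graph (T : PhyloTree) : SimpleGraph ℕ := graphOfEdges T.edges

/-- The set of leaves (vertices of degree 1), i.e. the taxa set `L(T)`. -/
def leaves (T : PhyloTree) : Finset ℕ := T.verts.filter (fun v => degOf T.edges v = 1)

/-- The interior (non-leaf) vertices. -/
def interiorVerts (T : PhyloTree) : Finset ℕ := T.verts.filter (fun v => degOf T.edges v ≠ 1)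

/-- The set `Ė(T)` of interior edges: edges joining two interior vertices. -/
def interiorEdges (T : PhyloTree) : Finset (Sym2 ℕ) :=
  T.edges.filter (fun e => ∀ x ∈ e, degOf T.edges x ≠ 1)

/-- A phylogenetic tree is binary if every interior vertex has degree 3. -/
def IsBinary (T : PhyloTree) : Prop :=
  ∀ v ∈ T.verts, degOf T.edges v ≠ 1 → degOf T.edges v = 3

/-- `T` displays the quartet `ab|cd`: all four are leaves of `T` and the path
from `a` to `b` and the path from `c` to `d` in `T` are vertex-disjoint. -/
def DisplaysQuartet (T : PhyloTree) (a b c d : ℕ) : Prop :=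
  a ∈ T.leaves ∧ b ∈ T.leaves ∧ c ∈ T.leaves ∧ d ∈ T.leaves ∧
  a ≠ b ∧ c ≠ d ∧
  ∃ (p : T.graph.Walk a b) (q : T.graph.Walk c d),
    p.IsPath ∧ q.IsPath ∧ p.support.Disjoint q.support

/-- `T` displays the binary phylogenetic tree `T'`; for binary `T'` this is
equivalent to `T'` being the restriction of `T` to `L(T')`, and it is expressed
by saying that every quartet displayed by `T'` is displayed by `T`. -/
def Displays (T T' : PhyloTree) : Prop :=
  T'.leaves ⊆ T.leaves ∧
  ∀ a b c d : ℕ, T'.DisplaysQuartet a b c d → T.DisplaysQuartet a b c d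

/-- Two phylogenetic trees are the same (isomorphic): equal leaf sets and a graph
isomorphism mapping every leaf to itself. -/
def Iso (T1 T2 : PhyloTree) : Prop :=
  T1.leaves = T2.leaves ∧
  ∃ φ : ℕ → ℕ, Set.BijOn φ ↑T1.verts ↑T2.verts ∧ (∀ l ∈ T1.leaves, φ l = l) ∧
    ∀ u ∈ T1.verts, ∀ v ∈ T1.verts, (s(u, v) ∈ T1.edges ↔ s(φ u, φ v) ∈ T2.edges)

end PhyloTree

/-- A quartet: a binary phylogenetic tree with exactly four leaves. -/
def IsQuartet (q : PhyloTree) : Prop := q.IsBinary ∧ q.leaves.card = 4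

/-- `L(P)`: the union of the leaf sets of the trees in `P`. -/
def leafSet (P : Finset PhyloTree) : Finset ℕ := P.sup PhyloTree.leaves

/-- `P` defines `T`: `T` is the unique (up to leaf-fixing isomorphism) phylogenetic
tree with taxa set `L(P)` displaying every member of `P`. -/
def Defines (P : Finset PhyloTree) (T : PhyloTree) : Prop :=
  T.leaves = leafSet P ∧ (∀ q ∈ P, T.Displays q) ∧
  ∀ T' : PhyloTree, T'.leaves = leafSet P → (∀ q ∈ P, T'.Displays q) → T'.Iso T

/-- `P` is definitive: exactly one phylogenetic tree with taxa set `L(P)` displays `P`. -/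
def Definitive (P : Finset PhyloTree) : Prop := ∃ T, Defines P T

/-- The quartet `ab|cd` distinguishes the edge `e` of `T`: `T` displays `ab|cd`
and `e` is the only edge that the path from `a` to `c` and the path from `b` to
`d` in `T` have in common. -/
def Distinguishes (T : PhyloTree) (a b c d : ℕ) (e : Sym2 ℕ) : Prop :=
  T.DisplaysQuartet a b c d ∧
  ∃ (p : T.graph.Walk a c) (q : T.graph.Walk b d),
    p.IsPath ∧ q.IsPath ∧ p.edges.toFinset ∩ q.edges.toFinset = {e}

/-- The quartet tree `q` distinguishes the edge `e` of `T`: `q` is the quartet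
`ab|cd` for some leaves `a,b,c,d` and `ab|cd` distinguishes `e` in `T`. -/
def QuartetDistinguishes (T q : PhyloTree) (e : Sym2 ℕ) : Prop :=
  ∃ a b c d : ℕ, q.DisplaysQuartet a b c d ∧ Distinguishes T a b c d e


/-! ### Auxiliary development -/

open SimpleGraph

section GraphBasics

lemma graphOfEdges_adj {E : Finset (Sym2 ℕ)} {x y : ℕ} :
    (graphOfEdges E).Adj x y ↔ x ≠ y ∧ s(x, y) ∈ E := Iff.rfl

lemma graphOfEdges_edgeSet {E : Finset (Sym2 ℕ)} (hnd : ∀ e ∈ E, ¬ e.IsDiag) :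
    (graphOfEdges E).edgeSet = ↑E := by
  ext e
  induction e using Sym2.ind with
  | _ x y =>
    simp only [mem_edgeSet, Finset.mem_coe]
    constructor
    · exact fun h => h.2
    · intro h
      exact ⟨fun hxy => hnd _ h (by simp [hxy]), h⟩

/-- crossing lemma: a walk from inside `S` to outside `S` uses an edge crossing `S`. -/
lemma walk_crossing {G : SimpleGraph ℕ} {x y : ℕ} (w : G.Walk x y) (S : Set ℕ)
    (hx : x ∈ S) (hy : y ∉ S) : ∃ u v, s(u, v) ∈ w.edges ∧ u ∈ S ∧ v ∉ S := by
  induction w with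
  | nil => exact absurd hx hy
  | @cons a b c h w ih =>
    by_cases hb : b ∈ S
    · obtain ⟨u, v, huv, hu, hv⟩ := ih hb hy
      exact ⟨u, v, by simp [Walk.edges_cons, huv], hu, hv⟩
    · exact ⟨a, b, by simp [Walk.edges_cons], hx, hb⟩

end GraphBasics

namespace PhyloTree

variable (T : PhyloTree)

lemma graph_adj {x y : ℕ} : T.graph.Adj x y ↔ x ≠ y ∧ s(x, y) ∈ T.edges := Iff.rfl

lemma edgeSet_graph : T.graph.edgeSet = ↑T.edges := graphOfEdges_edgeSet T.not_diag

lemma mem_edges_of_mem_walk_edges {x y : ℕ} {p : T.graph.Walk x y} {f : Sym2 ℕ}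
    (hf : f ∈ p.edges) : f ∈ T.edges := by
  have := p.edges_subset_edgeSet hf
  rwa [T.edgeSet_graph, Finset.mem_coe] at this

lemma leaf_mem_verts {x : ℕ} (hx : x ∈ T.leaves) : x ∈ T.verts :=
  (Finset.mem_filter.mp hx).1

/-- `x` and `y` are separated by the edge `f` in `T`. -/
def Sep (f : Sym2 ℕ) (x y : ℕ) : Prop := ¬ (T.graph.deleteEdges {f}).Reachable x y

lemma Sep.symm {T : PhyloTree} {f : Sym2 ℕ} {x y : ℕ} (h : T.Sep f x y) : T.Sep f y x :=
  fun hr => h hr.symm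

lemma Sep.ne {T : PhyloTree} {f : Sym2 ℕ} {x y : ℕ} (h : T.Sep f x y) : x ≠ y := by
  rintro rfl; exact h (Reachable.refl _)

/-- An edge belongs to a path iff it separates the endpoints (Lemma S). -/
lemma mem_edges_iff_sep {x y : ℕ} {p : T.graph.Walk x y} (hp : p.IsPath) {f : Sym2 ℕ} :
    f ∈ p.edges ↔ T.Sep f x y := by
  constructor
  · intro hf hreach
    obtain ⟨w⟩ := hreach
    set q0 := w.bypass with hq0
    have hq0p : q0.IsPath := w.bypass_isPath
    have hq0e : ∀ e ∈ q0.edges, e ∈ T.graph.edgeSet := fun e he =>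
      (edgeSet_mono (deleteEdges_le _)) (q0.edges_subset_edgeSet he)
    have hfq0 : f ∉ q0.edges := by
      intro hmem
      have := q0.edges_subset_edgeSet hmem
      rw [edgeSet_deleteEdges] at this
      exact this.2 rfl
    let q : T.graph.Walk x y := q0.transfer T.graph hq0e
    have hqp : q.IsPath := hq0p.transfer _
    have : (⟨p, hp⟩ : T.graph.Path x y) = ⟨q, hqp⟩ :=
      isAcyclic_iff_path_unique.mp T.acyclic _ _
    have hpq : p = q := congrArg Subtype.val this
    rw [hpq] at hf
    rw [Walk.edges_transfer] at hf
    exact hfq0 hf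
  · intro hsep
    by_contra hf
    exact hsep ⟨p.toDeleteEdges {f} (by rintro e he rfl; exact hf he)⟩

/-- every edge of a tree is a bridge. -/
lemma sep_of_mem_edges {x y : ℕ} (h : s(x, y) ∈ T.edges) : T.Sep s(x, y) x y := by
  have hxy : x ≠ y := fun hxy => T.not_diag _ h (by simp [hxy])
  have hadj : T.graph.Adj x y := ⟨hxy, h⟩
  have hp : (Walk.cons hadj Walk.nil).IsPath := by
    simp [Walk.cons_isPath_iff, hxy]
  exact (T.mem_edges_iff_sep hp).mp (by simp)

/-- In `G − f`, every vertex of the tree reaches one of the endpoints of `f`. -/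
lemma reach_endpoint {s t : ℕ} {x y : ℕ} (w : T.graph.Walk x y) :
    (T.graph.deleteEdges {s(s, t)}).Reachable x y ∨
    (T.graph.deleteEdges {s(s, t)}).Reachable x s ∨
    (T.graph.deleteEdges {s(s, t)}).Reachable x t := by
  induction w with
  | nil => exact Or.inl (Reachable.refl _)
  | @cons a b c h w ih =>
    by_cases he : s(a, b) = s(s, t)
    · rw [Sym2.eq_iff] at he
      rcases he with ⟨rfl, rfl⟩ | ⟨rfl, rfl⟩
      · exact Or.inr (Or.inl (Reachable.refl _))
      · exact Or.inr (Or.inr (Reachable.refl _))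
    · have hadj : (T.graph.deleteEdges {s(s, t)}).Adj a b := by
        simp only [deleteEdges_adj, Set.mem_singleton_iff]
        exact ⟨h, he⟩
      rcases ih with h1 | h2 | h3
      · exact Or.inl (hadj.reachable.trans h1)
      · exact Or.inr (Or.inl (hadj.reachable.trans h2))
      · exact Or.inr (Or.inr (hadj.reachable.trans h3))

lemma reach_endpoint' {s t : ℕ} {x : ℕ} (hx : x ∈ T.verts) (hs : s ∈ T.verts) :
    (T.graph.deleteEdges {s(s, t)}).Reachable x s ∨
    (T.graph.deleteEdges {s(s, t)}).Reachable x t := by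
  obtain ⟨w⟩ := T.conn x hx s hs
  rcases T.reach_endpoint w with h | h | h
  · exact Or.inl h
  · exact Or.inl h
  · exact Or.inr h

/-- two vertices both separated from `z` by `f` are on the same side. -/
lemma reach_of_sep_sep {f : Sym2 ℕ} (hf : f ∈ T.edges) {x y z : ℕ}
    (hx : x ∈ T.verts) (hy : y ∈ T.verts) (hz : z ∈ T.verts)
    (hxz : T.Sep f x z) (hyz : T.Sep f y z) :
    (T.graph.deleteEdges {f}).Reachable x y := by
  induction f using Sym2.ind with
  | _ s t =>
    have hs : s ∈ T.verts := T.edge_verts _ hf s (by simp)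
    have ht : t ∈ T.verts := T.edge_verts _ hf t (by simp)
    rcases T.reach_endpoint' hx hs with hxs | hxt
    · rcases T.reach_endpoint' hy hs with hys | hyt
      · exact hxs.trans hys.symm
      · rcases T.reach_endpoint' hz hs with hzs | hzt
        · exact absurd (hxs.trans hzs.symm) hxz
        · exact absurd (hyt.trans hzt.symm) hyz
    · rcases T.reach_endpoint' hy hs with hys | hyt
      · rcases T.reach_endpoint' hz hs with hzs | hzt
        · exact absurd (hys.trans hzs.symm) hyz
        · exact absurd (hxt.trans hzt.symm) hxz
      · exact hxt.trans hyt.symm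

end PhyloTree

namespace PhyloTree

variable (T : PhyloTree)

/-- `f` separates `{a,b}` from `{c,d}`. -/
def SepQ (a b c d : ℕ) (f : Sym2 ℕ) : Prop :=
  T.Sep f a c ∧ T.Sep f a d ∧ T.Sep f b c ∧ T.Sep f b d

/-- Characterization of displaying a quartet via separating edges. -/
lemma displaysQuartet_iff {a b c d : ℕ} :
    T.DisplaysQuartet a b c d ↔
      (a ∈ T.leaves ∧ b ∈ T.leaves ∧ c ∈ T.leaves ∧ d ∈ T.leaves ∧ a ≠ b ∧ c ≠ d ∧
        ∃ f ∈ T.edges, T.SepQ a b c d f) := by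
  constructor
  · rintro ⟨ha, hb, hc, hd, hab, hcd, p, q, hp, hq, hdisj⟩
    refine ⟨ha, hb, hc, hd, hab, hcd, ?_⟩
    obtain ⟨w⟩ := T.conn a (T.leaf_mem_verts ha) c (T.leaf_mem_verts hc)
    have hcp : c ∉ p.support := fun hcp => hdisj hcp q.start_mem_support
    obtain ⟨u, v, huv, hu, hv⟩ := walk_crossing w.bypass {z | z ∈ p.support}
      p.start_mem_support hcp
    have hfE : s(u, v) ∈ T.edges := T.mem_edges_of_mem_walk_edges huv
    have hfac : T.Sep s(u, v) a c := (T.mem_edges_iff_sep w.bypass_isPath).mp huv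
    have hfp : s(u, v) ∉ p.edges := fun hmem => hv (p.snd_mem_support_of_mem_edges hmem)
    have hfq : s(u, v) ∉ q.edges := fun hmem =>
      hdisj hu (q.fst_mem_support_of_mem_edges hmem)
    have hrab : (T.graph.deleteEdges {s(u, v)}).Reachable a b :=
      ⟨p.toDeleteEdges {s(u, v)} (by rintro e he rfl; exact hfp he)⟩
    have hrcd : (T.graph.deleteEdges {s(u, v)}).Reachable c d :=
      ⟨q.toDeleteEdges {s(u, v)} (by rintro e he rfl; exact hfq he)⟩
    refine ⟨s(u, v), hfE, hfac, ?_, ?_, ?_⟩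
    · exact fun hr => hfac (hr.trans hrcd.symm)
    · exact fun hr => hfac (hrab.trans hr)
    · exact fun hr => hfac ((hrab.trans hr).trans hrcd.symm)
  · rintro ⟨ha, hb, hc, hd, hab, hcd, f, hfE, s1, s2, s3, s4⟩
    refine ⟨ha, hb, hc, hd, hab, hcd, ?_⟩
    have hrab : (T.graph.deleteEdges {f}).Reachable a b :=
      T.reach_of_sep_sep hfE (T.leaf_mem_verts ha) (T.leaf_mem_verts hb)
        (T.leaf_mem_verts hc) s1 s3
    have hrcd : (T.graph.deleteEdges {f}).Reachable c d :=
      T.reach_of_sep_sep hfE (T.leaf_mem_verts hc) (T.leaf_mem_verts hd)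
        (T.leaf_mem_verts ha) s1.symm s2.symm
    obtain ⟨p0⟩ := hrab
    obtain ⟨q0⟩ := hrcd
    have hp0 : p0.bypass.IsPath := p0.bypass_isPath
    have hq0 : q0.bypass.IsPath := q0.bypass_isPath
    refine ⟨p0.bypass.transfer T.graph (fun e he =>
        (edgeSet_mono (deleteEdges_le _)) (p0.bypass.edges_subset_edgeSet he)),
      q0.bypass.transfer T.graph (fun e he =>
        (edgeSet_mono (deleteEdges_le _)) (q0.bypass.edges_subset_edgeSet he)),
      hp0.transfer _, hq0.transfer _, ?_⟩
    intro x hxp hxq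
    rw [Walk.support_transfer] at hxp hxq
    have hax : (T.graph.deleteEdges {f}).Reachable a x := ⟨p0.bypass.takeUntil x hxp⟩
    have hcx : (T.graph.deleteEdges {f}).Reachable c x := ⟨q0.bypass.takeUntil x hxq⟩
    exact s1 (hax.trans hcx.symm)

/-- If `f` separates `a,c` and `b,d` and the quartet `ab|cd` is displayed then `f`
separates all four cross pairs. -/
lemma sep_cross {a b c d : ℕ} {f : Sym2 ℕ} (hdq : T.DisplaysQuartet a b c d)
    (hac : T.Sep f a c) (hbd : T.Sep f b d) : T.SepQ a b c d f := by
  obtain ⟨ha, hb, hc, hd, hab, hcd, p, q, hp, hq, hdisj⟩ := hdq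
  have hnot : f ∉ p.edges ∨ f ∉ q.edges := by
    by_contra hcon
    push_neg at hcon
    induction f using Sym2.ind with
    | _ u v =>
      exact hdisj (p.fst_mem_support_of_mem_edges hcon.1)
        (q.fst_mem_support_of_mem_edges hcon.2)
  rcases hnot with hfp | hfq
  · have hrab : (T.graph.deleteEdges {f}).Reachable a b :=
      ⟨p.toDeleteEdges {f} (by rintro e he rfl; exact hfp he)⟩
    refine ⟨hac, ?_, ?_, hbd⟩
    · exact fun hr => hbd (hrab.symm.trans hr)
    · exact fun hr => hac (hrab.trans hr)
  · have hrcd : (T.graph.deleteEdges {f}).Reachable c d :=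
      ⟨q.toDeleteEdges {f} (by rintro e he rfl; exact hfq he)⟩
    refine ⟨hac, ?_, ?_, hbd⟩
    · exact fun hr => hac (hr.trans hrcd.symm)
    · exact fun hr => hbd (hr.trans hrcd)

/-- Characterization of distinguishing an edge. -/
lemma distinguishes_iff {a b c d : ℕ} {e : Sym2 ℕ} (hdq : T.DisplaysQuartet a b c d) :
    Distinguishes T a b c d e ↔
      (e ∈ T.edges ∧ T.Sep e a c ∧ T.Sep e b d ∧
        ∀ f ∈ T.edges, T.Sep f a c → T.Sep f b d → f = e) := by
  have hdq' := hdq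
  obtain ⟨ha, hb, hc, hd, hab, hcd, -⟩ := hdq'
  constructor
  · rintro ⟨-, p, q, hp, hq, hint⟩
    have he : e ∈ p.edges.toFinset ∩ q.edges.toFinset := by rw [hint]; simp
    rw [Finset.mem_inter, List.mem_toFinset, List.mem_toFinset] at he
    refine ⟨T.mem_edges_of_mem_walk_edges he.1,
      (T.mem_edges_iff_sep hp).mp he.1, (T.mem_edges_iff_sep hq).mp he.2, ?_⟩
    intro f hfE hfac hfbd
    have : f ∈ p.edges.toFinset ∩ q.edges.toFinset := by
      rw [Finset.mem_inter, List.mem_toFinset, List.mem_toFinset]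
      exact ⟨(T.mem_edges_iff_sep hp).mpr hfac, (T.mem_edges_iff_sep hq).mpr hfbd⟩
    rw [hint] at this
    exact Finset.mem_singleton.mp this
  · rintro ⟨heE, hac, hbd, huniq⟩
    obtain ⟨w1⟩ := T.conn a (T.leaf_mem_verts ha) c (T.leaf_mem_verts hc)
    obtain ⟨w2⟩ := T.conn b (T.leaf_mem_verts hb) d (T.leaf_mem_verts hd)
    refine ⟨hdq, w1.bypass, w2.bypass, w1.bypass_isPath, w2.bypass_isPath, ?_⟩
    ext f
    rw [Finset.mem_inter, List.mem_toFinset, List.mem_toFinset, Finset.mem_singleton]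
    constructor
    · rintro ⟨h1, h2⟩
      exact huniq f (T.mem_edges_of_mem_walk_edges h1)
        ((T.mem_edges_iff_sep w1.bypass_isPath).mp h1)
        ((T.mem_edges_iff_sep w2.bypass_isPath).mp h2)
    · rintro rfl
      exact ⟨(T.mem_edges_iff_sep w1.bypass_isPath).mpr hac,
        (T.mem_edges_iff_sep w2.bypass_isPath).mpr hbd⟩

lemma Iso.card_verts {T1 T2 : PhyloTree} (h : T1.Iso T2) :
    T1.verts.card = T2.verts.card := by
  obtain ⟨-, φ, hbij, -, -⟩ := h
  refine Finset.card_bij (fun a _ => φ a) (fun a ha => ?_) (fun a ha b hb hab => ?_) ?_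
  · exact hbij.mapsTo ha
  · exact hbij.injOn ha hb hab
  · intro b hb
    obtain ⟨a, ha, rfl⟩ := hbij.surjOn hb
    exact ⟨a, ha, rfl⟩

end PhyloTree

lemma card_four {a b c d : ℕ} (hab : a ≠ b) (hac : a ≠ c) (had : a ≠ d)
    (hbc : b ≠ c) (hbd : b ≠ d) (hcd : c ≠ d) : ({a, b, c, d} : Finset ℕ).card = 4 := by
  rw [Finset.card_insert_of_notMem (by simp [hab, hac, had]),
      Finset.card_insert_of_notMem (by simp [hbc, hbd]),
      Finset.card_insert_of_notMem (by simp [hcd]), Finset.card_singleton]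

namespace PhyloTree

lemma not_mem_both_edges {T : PhyloTree} {x y z w : ℕ} {p : T.graph.Walk x y}
    {q : T.graph.Walk z w} (hdisj : p.support.Disjoint q.support) {g : Sym2 ℕ}
    (hgp : g ∈ p.edges) (hgq : g ∈ q.edges) : False := by
  induction g using Sym2.ind with
  | _ u v =>
    exact hdisj (p.fst_mem_support_of_mem_edges hgp) (q.fst_mem_support_of_mem_edges hgq)

lemma DisplaysQuartet.distinct {T : PhyloTree} {a b c d : ℕ} (h : T.DisplaysQuartet a b c d) :
    a ≠ b ∧ a ≠ c ∧ a ≠ d ∧ b ≠ c ∧ b ≠ d ∧ c ≠ d := by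
  obtain ⟨-, -, -, -, hab, hcd, f, -, s1, s2, s3, s4⟩ := (T.displaysQuartet_iff).mp h
  exact ⟨hab, s1.ne, s2.ne, s3.ne, s4.ne, hcd⟩

/-- A quartet tree distinguishes at most one edge of `T`. -/
lemma distinguishes_unique {T q : PhyloTree} (hq4 : q.leaves.card = 4)
    {a b c d a' b' c' d' : ℕ} {e e' : Sym2 ℕ}
    (h1 : q.DisplaysQuartet a b c d) (h2 : q.DisplaysQuartet a' b' c' d')
    (hT1 : Distinguishes T a b c d e) (hT2 : Distinguishes T a' b' c' d' e') : e = e' := by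
  obtain ⟨hab, hac, had, hbc, hbd, hcd⟩ := h1.distinct
  obtain ⟨hab', hac', had', hbc', hbd', hcd'⟩ := h2.distinct
  have hsub1 : ({a, b, c, d} : Finset ℕ) ⊆ q.leaves := by
    intro x hx
    simp only [Finset.mem_insert, Finset.mem_singleton] at hx
    rcases hx with rfl | rfl | rfl | rfl
    exacts [h1.1, h1.2.1, h1.2.2.1, h1.2.2.2.1]
  have hsub2 : ({a', b', c', d'} : Finset ℕ) ⊆ q.leaves := by
    intro x hx
    simp only [Finset.mem_insert, Finset.mem_singleton] at hx
    rcases hx with rfl | rfl | rfl | rfl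
    exacts [h2.1, h2.2.1, h2.2.2.1, h2.2.2.2.1]
  have hset1 : ({a, b, c, d} : Finset ℕ) = q.leaves :=
    Finset.eq_of_subset_of_card_le hsub1
      (by rw [hq4, card_four hab hac had hbc hbd hcd])
  have hset2 : ({a', b', c', d'} : Finset ℕ) = q.leaves :=
    Finset.eq_of_subset_of_card_le hsub2
      (by rw [hq4, card_four hab' hac' had' hbc' hbd' hcd'])
  have hall : ∀ x, x ∈ ({a, b, c, d} : Finset ℕ) →
      (x = a' ∨ x = b') ∨ (x = c' ∨ x = d') := by
    intro x hx
    rw [hset1, ← hset2] at hx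
    simp only [Finset.mem_insert, Finset.mem_singleton] at hx
    tauto
  obtain ⟨heE, heac, hebd, huniq⟩ := (T.distinguishes_iff hT1.1).mp hT1
  obtain ⟨he'E, h'ac, h'bd, -⟩ := (T.distinguishes_iff hT2.1).mp hT2
  obtain ⟨s11, s12, s21, s22⟩ := T.sep_cross hT2.1 h'ac h'bd
  have hsep' : ∀ x y : ℕ, (x = a' ∨ x = b') → (y = c' ∨ y = d') → T.Sep e' x y := by
    rintro x y (rfl | rfl) (rfl | rfl) <;> assumption
  obtain ⟨-, -, -, -, -, -, g, hgE, t11, t12, t21, t22⟩ := (q.displaysQuartet_iff).mp h2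
  have hqsep : ∀ x y : ℕ, (x = a' ∨ x = b') → (y = c' ∨ y = d') → q.Sep g x y := by
    rintro x y (rfl | rfl) (rfl | rfl) <;> assumption
  have h1' := h1
  obtain ⟨-, -, -, -, -, -, p1, q1, hp1, hq1, hd1⟩ := h1'
  have qcon : q.Sep g a b → q.Sep g c d → False := fun s t =>
    not_mem_both_edges hd1 ((q.mem_edges_iff_sep hp1).mpr s)
      ((q.mem_edges_iff_sep hq1).mpr t)
  have pig1 : ∀ x y z : ℕ, x ≠ y → x ≠ z → y ≠ z →
      (x = a' ∨ x = b') → (y = a' ∨ y = b') → (z = a' ∨ z = b') → False := by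
    rintro x y z hxy hxz hyz (rfl | rfl) (rfl | rfl) (rfl | rfl) <;> simp_all
  have pig2 : ∀ x y z : ℕ, x ≠ y → x ≠ z → y ≠ z →
      (x = c' ∨ x = d') → (y = c' ∨ y = d') → (z = c' ∨ z = d') → False := by
    rintro x y z hxy hxz hyz (rfl | rfl) (rfl | rfl) (rfl | rfl) <;> simp_all
  have goal2 : T.Sep e' a c ∧ T.Sep e' b d := by
    rcases hall a (by simp) with ha' | ha' <;>
      rcases hall b (by simp) with hb' | hb' <;>
        rcases hall c (by simp) with hc' | hc' <;>
          rcases hall d (by simp) with hd' | hd' <;>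
    first
      | exact ⟨hsep' a c ha' hc', hsep' b d hb' hd'⟩
      | exact ⟨hsep' a c ha' hc', (hsep' d b hd' hb').symm⟩
      | exact ⟨(hsep' c a hc' ha').symm, hsep' b d hb' hd'⟩
      | exact ⟨(hsep' c a hc' ha').symm, (hsep' d b hd' hb').symm⟩
      | exact (qcon (hqsep a b ha' hb') (hqsep c d hc' hd')).elim
      | exact (qcon (hqsep b a hb' ha').symm (hqsep d c hd' hc').symm).elim
      | exact (pig1 a b c hab hac hbc ha' hb' hc').elim
      | exact (pig1 a b d hab had hbd ha' hb' hd').elim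
      | exact (pig1 a c d hac had hcd ha' hc' hd').elim
      | exact (pig1 b c d hbc hbd hcd hb' hc' hd').elim
      | exact (pig2 a b c hab hac hbc ha' hb' hc').elim
      | exact (pig2 a b d hab had hbd ha' hb' hd').elim
      | exact (pig2 a c d hac had hcd ha' hc' hd').elim
      | exact (pig2 b c d hbc hbd hcd hb' hc' hd').elim
  exact (huniq e' he'E goal2.1 goal2.2).symm

end PhyloTree

/-! ### Contraction of an interior edge -/

lemma PhyloTree.no_triangle (T : PhyloTree) {x y z : ℕ} (h1 : s(x, y) ∈ T.edges)
    (h2 : s(y, z) ∈ T.edges) (h3 : s(x, z) ∈ T.edges) : False := by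
  have hxy : x ≠ y := fun h => T.not_diag _ h1 (by simp [h])
  have hyz : y ≠ z := fun h => T.not_diag _ h2 (by simp [h])
  have hxz : x ≠ z := fun h => T.not_diag _ h3 (by simp [h])
  let p : T.graph.Walk x z := Walk.cons (show T.graph.Adj x y from ⟨hxy, h1⟩) (Walk.cons (show T.graph.Adj y z from ⟨hyz, h2⟩) Walk.nil)
  have hp : p.IsPath := by
    rw [Walk.isPath_def]
    simp only [p, Walk.support_cons, Walk.support_nil]
    simp [hxy, hyz, hxz]
  have hadj : T.graph.Adj z x := ⟨fun h => hxz h.symm, by rw [Sym2.eq_swap]; exact h3⟩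
  have hcyc := SimpleGraph.Path.cons_isCycle ⟨p, hp⟩ hadj (by
    intro hmem
    simp only [p, Walk.edges_cons, Walk.edges_nil, List.mem_cons,
      List.not_mem_nil, or_false] at hmem
    rcases hmem with h | h <;> rw [Sym2.eq_iff] at h <;> omega)
  exact T.acyclic _ hcyc

def cmap (u v x : ℕ) : ℕ := if x = v then u else x

lemma cmap_apply_ne {u v x : ℕ} (h : x ≠ v) : cmap u v x = x := if_neg h

lemma cmap_v {u v : ℕ} : cmap u v v = u := if_pos rfl

lemma cmap_eq_cases {u v a b : ℕ} (h : cmap u v a = cmap u v b) :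
    a = b ∨ (a = u ∧ b = v) ∨ (a = v ∧ b = u) := by
  unfold cmap at h; split_ifs at h <;> omega

lemma cmap_map_id {u v : ℕ} {g : Sym2 ℕ} (hg : v ∉ g) : Sym2.map (cmap u v) g = g := by
  induction g using Sym2.ind with
  | _ x y =>
    rw [Sym2.mem_iff] at hg
    push_neg at hg
    rw [Sym2.map_pair_eq, cmap_apply_ne (fun h => hg.1 h.symm),
      cmap_apply_ne (fun h => hg.2 h.symm)]

def cedges (T : PhyloTree) (u v : ℕ) : Finset (Sym2 ℕ) :=
  (T.edges.erase s(u, v)).image (Sym2.map (cmap u v))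

section Contraction

variable {T : PhyloTree} {u v : ℕ}

lemma cmap_edge_inj (T : PhyloTree) (he : s(u, v) ∈ T.edges) :
    ∀ g ∈ T.edges.erase s(u, v), ∀ g' ∈ T.edges.erase s(u, v),
      Sym2.map (cmap u v) g = Sym2.map (cmap u v) g' → g = g' := by
  have hne : u ≠ v := fun h => T.not_diag _ he (by simp [h])
  intro g hg g' hg' hmap
  obtain ⟨hgne, hgE⟩ := Finset.mem_erase.mp hg
  obtain ⟨hgne', hgE'⟩ := Finset.mem_erase.mp hg'
  by_cases h1 : v ∈ g <;> by_cases h2 : v ∈ g'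
  · -- v in both
    obtain ⟨w, rfl⟩ := Sym2.mem_iff_exists.mp h1
    obtain ⟨w', rfl⟩ := Sym2.mem_iff_exists.mp h2
    have hwv : w ≠ v := fun h => T.not_diag _ hgE (by simp [h])
    have hwv' : w' ≠ v := fun h => T.not_diag _ hgE' (by simp [h])
    have hwu : w ≠ u := fun h => hgne (by rw [h, Sym2.eq_swap])
    have hwu' : w' ≠ u := fun h => hgne' (by rw [h, Sym2.eq_swap])
    rw [Sym2.map_pair_eq, Sym2.map_pair_eq, cmap_v, cmap_apply_ne hwv,
      cmap_apply_ne hwv', Sym2.eq_iff] at hmap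
    rcases hmap with ⟨-, rfl⟩ | ⟨h3, -⟩
    · rfl
    · exact absurd h3.symm hwu'
  · -- v in g only : triangle
    obtain ⟨w, rfl⟩ := Sym2.mem_iff_exists.mp h1
    have hwv : w ≠ v := fun h => T.not_diag _ hgE (by simp [h])
    have hwu : w ≠ u := fun h => hgne (by rw [h, Sym2.eq_swap])
    rw [Sym2.map_pair_eq, cmap_v, cmap_apply_ne hwv, cmap_map_id h2] at hmap
    rw [← hmap] at hgE'
    -- edges : s(u,v), s(v,w), s(u,w) : triangle u v w
    exact absurd (T.no_triangle he hgE hgE') id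
  · -- v in g' only : triangle
    obtain ⟨w, rfl⟩ := Sym2.mem_iff_exists.mp h2
    have hwv : w ≠ v := fun h => T.not_diag _ hgE' (by simp [h])
    have hwu : w ≠ u := fun h => hgne' (by rw [h, Sym2.eq_swap])
    rw [Sym2.map_pair_eq, cmap_v, cmap_apply_ne hwv, cmap_map_id h1] at hmap
    rw [hmap] at hgE
    exact absurd (T.no_triangle he hgE' hgE) id
  · rw [cmap_map_id h1, cmap_map_id h2] at hmap
    exact hmap

/-- Pushing reachability forward to the contracted graph. -/
lemma contract_push (he : s(u, v) ∈ T.edges) (D D' : Set (Sym2 ℕ))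
    (hD : ∀ g, g ∈ T.edges → g ≠ s(u, v) → g ∉ D → Sym2.map (cmap u v) g ∉ D') :
    ∀ {x y : ℕ}, (T.graph.deleteEdges D).Walk x y →
      ((graphOfEdges (cedges T u v)).deleteEdges D').Reachable (cmap u v x) (cmap u v y) := by
  intro x y w
  induction w with
  | nil => exact Reachable.refl _
  | @cons a b c h w ih =>
    rw [deleteEdges_adj] at h
    obtain ⟨⟨hab, habE⟩, habD⟩ := h
    by_cases hcase : s(a, b) = s(u, v)
    · have : cmap u v a = cmap u v b := by
        rw [Sym2.eq_iff] at hcase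
        rcases hcase with ⟨rfl, rfl⟩ | ⟨rfl, rfl⟩ <;> simp [cmap]
      rw [this]
      exact ih
    · have hadj : ((graphOfEdges (cedges T u v)).deleteEdges D').Adj
          (cmap u v a) (cmap u v b) := by
        rw [deleteEdges_adj]
        refine ⟨⟨?_, ?_⟩, ?_⟩
        · intro hcm
          rcases cmap_eq_cases hcm with h' | ⟨rfl, rfl⟩ | ⟨rfl, rfl⟩
          · exact hab h'
          · exact hcase rfl
          · exact hcase Sym2.eq_swap
        · rw [← Sym2.map_pair_eq]
          exact Finset.mem_image_of_mem _ (Finset.mem_erase.mpr ⟨hcase, habE⟩)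
        · rw [← Sym2.map_pair_eq]
          exact hD _ habE hcase habD
      exact hadj.reachable.trans ih

lemma cmap_reach (he : s(u, v) ∈ T.edges) (D : Set (Sym2 ℕ)) (heD : s(u, v) ∉ D)
    {x y : ℕ} (h : cmap u v x = cmap u v y) :
    (T.graph.deleteEdges D).Reachable x y := by
  have hne : u ≠ v := fun h => T.not_diag _ he (by simp [h])
  rcases cmap_eq_cases h with rfl | ⟨rfl, rfl⟩ | ⟨rfl, rfl⟩
  · exact Reachable.refl _
  · exact Adj.reachable (by rw [deleteEdges_adj]; exact ⟨⟨hne, he⟩, heD⟩)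
  · refine Adj.reachable (G := T.graph.deleteEdges D) ?_
    rw [deleteEdges_adj, Sym2.eq_swap]
    exact ⟨⟨hne.symm, by rw [Sym2.eq_swap]; exact he⟩, heD⟩

/-- Lifting reachability back from the contracted graph. -/
lemma contract_lift (he : s(u, v) ∈ T.edges) (D D' : Set (Sym2 ℕ)) (heD : s(u, v) ∉ D)
    (hD : ∀ g, g ∈ T.edges → g ≠ s(u, v) → Sym2.map (cmap u v) g ∉ D' → g ∉ D) :
    ∀ {p q : ℕ}, ((graphOfEdges (cedges T u v)).deleteEdges D').Walk p q →
      ∀ {x y : ℕ}, x ∈ T.verts → y ∈ T.verts → cmap u v x = p → cmap u v y = q →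
      (T.graph.deleteEdges D).Reachable x y := by
  intro p q w
  induction w with
  | nil =>
    intro x y hx hy hxp hyp
    exact cmap_reach he D heD (hxp.trans hyp.symm)
  | @cons a b c h w ih =>
    intro x y hx hy hxp hyp
    rw [deleteEdges_adj] at h
    obtain ⟨⟨hab, habE⟩, habD'⟩ := h
    obtain ⟨g0, hg0, hg0map⟩ := Finset.mem_image.mp habE
    obtain ⟨hg0ne, hg0E⟩ := Finset.mem_erase.mp hg0
    have hg0D : g0 ∉ D := hD _ hg0E hg0ne (by rw [hg0map]; exact habD')
    induction g0 using Sym2.ind with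
    | _ x2 z2 =>
      have hx2 : x2 ∈ T.verts := T.edge_verts _ hg0E x2 (by simp)
      have hz2 : z2 ∈ T.verts := T.edge_verts _ hg0E z2 (by simp)
      have hx2z2 : x2 ≠ z2 := fun h => T.not_diag _ hg0E (by simp [h])
      have hadj : (T.graph.deleteEdges D).Adj x2 z2 := by
        rw [deleteEdges_adj]
        exact ⟨⟨hx2z2, hg0E⟩, hg0D⟩
      rw [Sym2.map_pair_eq, Sym2.eq_iff] at hg0map
      rcases hg0map with ⟨hpa, hpb⟩ | ⟨hpa, hpb⟩
      · have r1 : (T.graph.deleteEdges D).Reachable x x2 :=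
          cmap_reach he D heD (hxp.trans hpa.symm)
        have r2 := ih hz2 hy hpb hyp
        exact (r1.trans hadj.reachable).trans r2
      · have r1 : (T.graph.deleteEdges D).Reachable x z2 :=
          cmap_reach he D heD (hxp.trans hpb.symm)
        have r2 := ih hx2 hy hpa hyp
        exact (r1.trans hadj.reachable.symm).trans r2

end Contraction

lemma deg_pos_of_mem {T : PhyloTree} {x : ℕ} {g : Sym2 ℕ} (hg : g ∈ T.edges) (hx : x ∈ g) :
    0 < degOf T.edges x :=
  Finset.card_pos.mpr ⟨g, Finset.mem_filter.mpr ⟨hg, hx⟩⟩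

section Contraction2

variable {T : PhyloTree} {u v : ℕ}

lemma contract_deg_other (he : s(u, v) ∈ T.edges) {x : ℕ} (hxu : x ≠ u) (hxv : x ≠ v) :
    degOf (cedges T u v) x = degOf T.edges x := by
  unfold degOf
  have himg : (cedges T u v).filter (fun g => x ∈ g) =
      ((T.edges.erase s(u, v)).filter (fun g => x ∈ g)).image (Sym2.map (cmap u v)) := by
    ext g
    simp only [cedges, Finset.mem_filter, Finset.mem_image]
    constructor
    · rintro ⟨⟨g0, hg0, rfl⟩, hxg⟩
      refine ⟨g0, ⟨hg0, ?_⟩, rfl⟩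
      obtain ⟨y, hy, hyx⟩ := Sym2.mem_map.mp hxg
      have hyv : y ≠ v := by
        rintro rfl
        rw [cmap_v] at hyx
        exact hxu hyx.symm
      rw [cmap_apply_ne hyv] at hyx
      exact hyx ▸ hy
    · rintro ⟨g0, ⟨hg0, hxg0⟩, rfl⟩
      exact ⟨⟨g0, hg0, rfl⟩, Sym2.mem_map.mpr ⟨x, hxg0, cmap_apply_ne hxv⟩⟩
  rw [himg, Finset.card_image_of_injOn (fun g hg g' hg' =>
    cmap_edge_inj T he g (Finset.mem_filter.mp hg).1 g' (Finset.mem_filter.mp hg').1)]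
  congr 1
  ext g
  simp only [Finset.mem_filter, Finset.mem_erase]
  constructor
  · rintro ⟨⟨-, hgE⟩, hxg⟩
    exact ⟨hgE, hxg⟩
  · rintro ⟨hgE, hxg⟩
    refine ⟨⟨?_, hgE⟩, hxg⟩
    rintro rfl
    rw [Sym2.mem_iff] at hxg
    rcases hxg with rfl | rfl
    · exact hxu rfl
    · exact hxv rfl

lemma mem_both_eq {g : Sym2 ℕ} {u v : ℕ} (hu : u ∈ g) (hv : v ∈ g) (hne : u ≠ v) :
    g = s(u, v) := by
  induction g using Sym2.ind with
  | _ x y =>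
    rw [Sym2.mem_iff] at hu hv
    rw [Sym2.eq_iff]
    rcases hu with rfl | rfl <;> rcases hv with h | h <;> omega

lemma contract_deg_u (he : s(u, v) ∈ T.edges) (hne : u ≠ v) :
    degOf (cedges T u v) u = (degOf T.edges u - 1) + (degOf T.edges v - 1) := by
  classical
  unfold degOf
  set A := (T.edges.erase s(u, v)).filter (fun g => u ∈ g) with hA
  set B := (T.edges.erase s(u, v)).filter (fun g => v ∈ g) with hB
  have himg : (cedges T u v).filter (fun g => u ∈ g) = (A ∪ B).image (Sym2.map (cmap u v)) := by
    ext g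
    simp only [cedges, Finset.mem_filter, Finset.mem_image, Finset.mem_union, hA, hB]
    constructor
    · rintro ⟨⟨g0, hg0, rfl⟩, hug⟩
      refine ⟨g0, ?_, rfl⟩
      obtain ⟨y, hy, hyu⟩ := Sym2.mem_map.mp hug
      by_cases hyv : y = v
      · subst hyv
        exact Or.inr ⟨hg0, hy⟩
      · rw [cmap_apply_ne hyv] at hyu
        subst hyu
        exact Or.inl ⟨hg0, hy⟩
    · rintro ⟨g0, hg0, rfl⟩
      rcases hg0 with ⟨hg0, hug0⟩ | ⟨hg0, hvg0⟩
      · exact ⟨⟨g0, hg0, rfl⟩, Sym2.mem_map.mpr ⟨u, hug0, cmap_apply_ne hne⟩⟩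
      · exact ⟨⟨g0, hg0, rfl⟩, Sym2.mem_map.mpr ⟨v, hvg0, cmap_v⟩⟩
  have hsub : A ∪ B ⊆ T.edges.erase s(u, v) := by
    intro g hg
    rcases Finset.mem_union.mp hg with h | h
    exacts [(Finset.mem_filter.mp h).1, (Finset.mem_filter.mp h).1]
  rw [himg, Finset.card_image_of_injOn (fun g hg g' hg' =>
    cmap_edge_inj T he g (hsub hg) g' (hsub hg'))]
  have hdisj : Disjoint A B := by
    rw [Finset.disjoint_left]
    intro g hgA hgB
    obtain ⟨hgA', hug⟩ := Finset.mem_filter.mp hgA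
    obtain ⟨-, hvg⟩ := Finset.mem_filter.mp hgB
    exact (Finset.mem_erase.mp hgA').1 (mem_both_eq hug hvg hne)
  rw [Finset.card_union_of_disjoint hdisj]
  have hcardA : A.card = degOf T.edges u - 1 := by
    rw [hA, Finset.filter_erase, Finset.card_erase_of_mem
      (Finset.mem_filter.mpr ⟨he, by simp⟩)]
    rfl
  have hcardB : B.card = degOf T.edges v - 1 := by
    rw [hB, Finset.filter_erase, Finset.card_erase_of_mem
      (Finset.mem_filter.mpr ⟨he, by simp⟩)]
    rfl
  rw [hcardA, hcardB]
  rfl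

/-- interior edge data -/
lemma interior_edge_data (T : PhyloTree) (hi : s(u, v) ∈ T.interiorEdges) :
    s(u, v) ∈ T.edges ∧ u ≠ v ∧ u ∈ T.verts ∧ v ∈ T.verts ∧
      3 ≤ degOf T.edges u ∧ 3 ≤ degOf T.edges v := by
  obtain ⟨he, hd⟩ := Finset.mem_filter.mp hi
  have hne : u ≠ v := fun h => T.not_diag _ he (by simp [h])
  have hu : u ∈ T.verts := T.edge_verts _ he u (by simp)
  have hv : v ∈ T.verts := T.edge_verts _ he v (by simp)
  have hdu := hd u (by simp)
  have hdv := hd v (by simp)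
  have h2u := T.no_deg_two u hu
  have h2v := T.no_deg_two v hv
  have hpu := deg_pos_of_mem he (Sym2.mem_mk_left u v)
  have hpv := deg_pos_of_mem he (Sym2.mem_mk_right u v)
  exact ⟨he, hne, hu, hv, by omega, by omega⟩

end Contraction2

/-- The contraction `T/e` of the interior edge `e = s(u,v)`, identifying `v` with `u`. -/
def PhyloTree.contract (T : PhyloTree) (u v : ℕ) (hi : s(u, v) ∈ T.interiorEdges) :
    PhyloTree where
  verts := T.verts.erase v
  edges := cedges T u v
  edge_verts := by
    obtain ⟨he, hne, hu, hv, hdu, hdv⟩ := interior_edge_data T hi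
    intro g hg x hx
    obtain ⟨g0, hg0, rfl⟩ := Finset.mem_image.mp hg
    obtain ⟨y, hy, rfl⟩ := Sym2.mem_map.mp hx
    have hyV : y ∈ T.verts := T.edge_verts _ (Finset.mem_erase.mp hg0).2 y hy
    by_cases hyv : y = v
    · subst hyv
      rw [cmap_v]
      exact Finset.mem_erase.mpr ⟨hne, hu⟩
    · rw [cmap_apply_ne hyv]
      exact Finset.mem_erase.mpr ⟨hyv, hyV⟩
  not_diag := by
    obtain ⟨he, hne, hu, hv, hdu, hdv⟩ := interior_edge_data T hi
    intro g hg
    obtain ⟨g0, hg0, rfl⟩ := Finset.mem_image.mp hg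
    obtain ⟨hg0ne, hg0E⟩ := Finset.mem_erase.mp hg0
    induction g0 using Sym2.ind with
    | _ x y =>
      rw [Sym2.map_pair_eq, Sym2.mk_isDiag_iff]
      intro hxy
      rcases cmap_eq_cases hxy with h | ⟨rfl, rfl⟩ | ⟨rfl, rfl⟩
      · exact T.not_diag _ hg0E (by simp [h])
      · exact hg0ne rfl
      · exact hg0ne Sym2.eq_swap
  conn := by
    obtain ⟨he, hne, hu, hv, hdu, hdv⟩ := interior_edge_data T hi
    intro x hx y hy
    obtain ⟨hxv, hxV⟩ := Finset.mem_erase.mp hx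
    obtain ⟨hyv, hyV⟩ := Finset.mem_erase.mp hy
    obtain ⟨w⟩ := T.conn x hxV y hyV
    have w' : (T.graph.deleteEdges ∅).Walk x y := by rw [deleteEdges_empty]; exact w
    have hre := contract_push he ∅ ∅ (by simp) w'
    rw [deleteEdges_empty, cmap_apply_ne hxv, cmap_apply_ne hyv] at hre
    exact hre
  acyclic := by
    obtain ⟨he, hne, hu, hv, hdu, hdv⟩ := interior_edge_data T hi
    rw [isAcyclic_iff_forall_adj_isBridge]
    intro p q hadj
    obtain ⟨hpq, hmem⟩ := hadj
    rw [isBridge_iff]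
    intro hreach
    have hreach' : ((graphOfEdges (cedges T u v)).deleteEdges {s(p, q)}).Reachable p q :=
      hreach
    obtain ⟨g0, hg0, hg0map⟩ := Finset.mem_image.mp hmem
    obtain ⟨hg0ne, hg0E⟩ := Finset.mem_erase.mp hg0
    have heD : s(u, v) ∉ ({g0} : Set (Sym2 ℕ)) := by
      simp only [Set.mem_singleton_iff]
      exact fun h => hg0ne h.symm
    induction g0 using Sym2.ind with
    | _ x2 y2 =>
      have hx2 : x2 ∈ T.verts := T.edge_verts _ hg0E x2 (by simp)
      have hy2 : y2 ∈ T.verts := T.edge_verts _ hg0E y2 (by simp)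
      have hsep := T.sep_of_mem_edges hg0E
      rw [Sym2.map_pair_eq, Sym2.eq_iff] at hg0map
      rcases hg0map with ⟨hpa, hpb⟩ | ⟨hpa, hpb⟩
      · refine hsep (contract_lift he {s(x2, y2)} {s(p, q)} heD ?_
          (hreach'.some) hx2 hy2 hpa hpb)
        intro g hgE hgne hmap
        simp only [Set.mem_singleton_iff] at hmap ⊢
        rintro rfl
        apply hmap
        rw [Sym2.map_pair_eq, hpa, hpb]
      · refine hsep (contract_lift he {s(x2, y2)} {s(p, q)} heD ?_
          (hreach'.symm.some) hx2 hy2 hpa hpb)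
        intro g hgE hgne hmap
        simp only [Set.mem_singleton_iff] at hmap ⊢
        rintro rfl
        apply hmap
        rw [Sym2.map_pair_eq, hpa, hpb, Sym2.eq_swap]
  verts_nonempty := by
    obtain ⟨he, hne, hu, hv, hdu, hdv⟩ := interior_edge_data T hi
    exact ⟨u, Finset.mem_erase.mpr ⟨hne, hu⟩⟩
  no_deg_two := by
    obtain ⟨he, hne, hu, hv, hdu, hdv⟩ := interior_edge_data T hi
    intro x hx
    obtain ⟨hxv, hxV⟩ := Finset.mem_erase.mp hx
    by_cases hxu : x = u
    · subst hxu
      rw [contract_deg_u he hne]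
      omega
    · rw [contract_deg_other he hxu hxv]
      exact T.no_deg_two x hxV

section Contraction3

variable {T : PhyloTree} {u v : ℕ} (hi : s(u, v) ∈ T.interiorEdges)

lemma contract_verts_card : (T.contract u v hi).verts.card = T.verts.card - 1 := by
  obtain ⟨he, hne, hu, hv, hdu, hdv⟩ := interior_edge_data T hi
  show (T.verts.erase v).card = T.verts.card - 1
  rw [Finset.card_erase_of_mem hv]

lemma contract_leaves : (T.contract u v hi).leaves = T.leaves := by
  obtain ⟨he, hne, hu, hv, hdu, hdv⟩ := interior_edge_data T hi
  ext x
  show x ∈ (T.verts.erase v).filter (fun z => degOf (cedges T u v) z = 1) ↔ _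
  rw [PhyloTree.leaves]
  simp only [Finset.mem_filter, Finset.mem_erase]
  by_cases hxv : x = v
  · subst hxv
    constructor
    · rintro ⟨⟨h, -⟩, -⟩
      exact absurd rfl h
    · rintro ⟨-, h⟩
      omega
  by_cases hxu : x = u
  · subst hxu
    rw [contract_deg_u he hne]
    constructor
    · rintro ⟨-, h⟩
      omega
    · rintro ⟨-, h⟩
      omega
  · rw [contract_deg_other he hxu hxv]
    constructor
    · rintro ⟨⟨-, h1⟩, h2⟩
      exact ⟨h1, h2⟩
    · rintro ⟨h1, h2⟩
      exact ⟨⟨hxv, h1⟩, h2⟩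

lemma contract_sep {g : Sym2 ℕ} (hg : g ∈ T.edges.erase s(u, v)) {x y : ℕ}
    (hx : x ∈ T.verts) (hy : y ∈ T.verts) (hxv : x ≠ v) (hyv : y ≠ v) :
    (T.contract u v hi).Sep (Sym2.map (cmap u v) g) x y ↔ T.Sep g x y := by
  obtain ⟨he, hne, hu, hv, hdu, hdv⟩ := interior_edge_data T hi
  obtain ⟨hgne, hgE⟩ := Finset.mem_erase.mp hg
  constructor
  · intro hsep hr
    obtain ⟨w⟩ := hr
    refine hsep ?_
    have hpush := contract_push he {g} {Sym2.map (cmap u v) g} ?_ w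
    · rw [cmap_apply_ne hxv, cmap_apply_ne hyv] at hpush
      exact hpush
    · intro g' hg'E hg'ne hg'D
      simp only [Set.mem_singleton_iff] at hg'D ⊢
      intro hmapEq
      exact hg'D (cmap_edge_inj T he g' (Finset.mem_erase.mpr ⟨hg'ne, hg'E⟩) g hg hmapEq)
  · intro hsep hr
    obtain ⟨w⟩ := hr
    refine hsep (contract_lift he {g} {Sym2.map (cmap u v) g} ?_ ?_ w hx hy
      (cmap_apply_ne hxv) (cmap_apply_ne hyv))
    · simp only [Set.mem_singleton_iff]
      exact fun h => hgne h.symm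
    · intro g' hg'E hg'ne hmap
      simp only [Set.mem_singleton_iff] at hmap ⊢
      rintro rfl
      exact hmap rfl

lemma leaf_ne_of_deg {x y : ℕ} (hx : x ∈ T.leaves) (hy : 3 ≤ degOf T.edges y) : x ≠ y := by
  rintro rfl
  have := (Finset.mem_filter.mp hx).2
  omega

lemma contract_displays {a b c d : ℕ} (hq : T.DisplaysQuartet a b c d)
    (hnd : ¬ Distinguishes T a b c d s(u, v)) :
    (T.contract u v hi).DisplaysQuartet a b c d := by
  obtain ⟨he, hne, hu, hv, hdu, hdv⟩ := interior_edge_data T hi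
  have hq' := hq
  rw [T.displaysQuartet_iff] at hq'
  obtain ⟨ha, hb, hc, hd, hab, hcd, f0, hf0E, s0⟩ := hq'
  have hfex : ∃ f ∈ T.edges, f ≠ s(u, v) ∧ T.Sep f a c ∧ T.Sep f b d := by
    by_cases hf0 : f0 = s(u, v)
    · rw [T.distinguishes_iff hq] at hnd
      push_neg at hnd
      obtain ⟨f, hfE, hfac, hfbd, hfne⟩ := hnd he (hf0 ▸ s0.1) (hf0 ▸ s0.2.2.2)
      exact ⟨f, hfE, hfne, hfac, hfbd⟩
    · exact ⟨f0, hf0E, hf0, s0.1, s0.2.2.2⟩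
  obtain ⟨f, hfE, hfne, hfac, hfbd⟩ := hfex
  obtain ⟨q1, q2, q3, q4⟩ := T.sep_cross hq hfac hfbd
  have hgmem : f ∈ T.edges.erase s(u, v) := Finset.mem_erase.mpr ⟨hfne, hfE⟩
  have hav : a ≠ v := leaf_ne_of_deg ha hdv
  have hbv : b ≠ v := leaf_ne_of_deg hb hdv
  have hcv : c ≠ v := leaf_ne_of_deg hc hdv
  have hdv' : d ≠ v := leaf_ne_of_deg hd hdv
  have haV := T.leaf_mem_verts ha
  have hbV := T.leaf_mem_verts hb
  have hcV := T.leaf_mem_verts hc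
  have hdV := T.leaf_mem_verts hd
  rw [(T.contract u v hi).displaysQuartet_iff]
  refine ⟨?_, ?_, ?_, ?_, hab, hcd, Sym2.map (cmap u v) f, ?_, ?_, ?_, ?_, ?_⟩
  · rw [contract_leaves hi]; exact ha
  · rw [contract_leaves hi]; exact hb
  · rw [contract_leaves hi]; exact hc
  · rw [contract_leaves hi]; exact hd
  · exact Finset.mem_image_of_mem _ hgmem
  · exact (contract_sep hi hgmem haV hcV hav hcv).mpr q1
  · exact (contract_sep hi hgmem haV hdV hav hdv').mpr q2
  · exact (contract_sep hi hgmem hbV hcV hbv hcv).mpr q3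
  · exact (contract_sep hi hgmem hbV hdV hbv hdv').mpr q4

end Contraction3

/-! ### Resolving a vertex of high degree -/

def redges (T : PhyloTree) (w n1 n2 w' : ℕ) : Finset (Sym2 ℕ) :=
  insert s(w, w') (insert s(w', n1) (insert s(w', n2)
    ((T.edges.erase s(w, n1)).erase s(w, n2))))

section Resolution

variable {T : PhyloTree} {w n1 n2 w' : ℕ}

lemma mem_redges {g : Sym2 ℕ} :
    g ∈ redges T w n1 n2 w' ↔
      g = s(w, w') ∨ g = s(w', n1) ∨ g = s(w', n2) ∨
        (g ∈ T.edges ∧ g ≠ s(w, n1) ∧ g ≠ s(w, n2)) := by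
  simp only [redges, Finset.mem_insert, Finset.mem_erase]
  tauto

/-- basic data for a resolution -/
structure ResData (T : PhyloTree) (w n1 n2 w' : ℕ) : Prop where
  h1 : s(w, n1) ∈ T.edges
  h2 : s(w, n2) ∈ T.edges
  hn : n1 ≠ n2
  hw' : w' ∉ T.verts
  hdw : 4 ≤ degOf T.edges w

namespace ResData

lemma hwV (R : ResData T w n1 n2 w') : w ∈ T.verts := T.edge_verts _ R.h1 w (by simp)
lemma hn1V (R : ResData T w n1 n2 w') : n1 ∈ T.verts := T.edge_verts _ R.h1 n1 (by simp)
lemma hn2V (R : ResData T w n1 n2 w') : n2 ∈ T.verts := T.edge_verts _ R.h2 n2 (by simp)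
lemma hwn1 (R : ResData T w n1 n2 w') : w ≠ n1 :=
  fun h => T.not_diag _ R.h1 (by simp [h])
lemma hwn2 (R : ResData T w n1 n2 w') : w ≠ n2 :=
  fun h => T.not_diag _ R.h2 (by simp [h])
lemma hw'w (R : ResData T w n1 n2 w') : w' ≠ w := fun h => R.hw' (h ▸ R.hwV)
lemma hw'n1 (R : ResData T w n1 n2 w') : w' ≠ n1 := fun h => R.hw' (h ▸ R.hn1V)
lemma hw'n2 (R : ResData T w n1 n2 w') : w' ≠ n2 := fun h => R.hw' (h ▸ R.hn2V)

lemma hEw' (R : ResData T w n1 n2 w') : ∀ g ∈ T.edges, w' ∉ g :=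
  fun g hg hmem => R.hw' (T.edge_verts _ hg w' hmem)

lemma redges_not_diag (R : ResData T w n1 n2 w') :
    ∀ g ∈ redges T w n1 n2 w', ¬ g.IsDiag := by
  intro g hg
  rcases mem_redges.mp hg with rfl | rfl | rfl | ⟨hgE, -, -⟩
  · intro hd; rw [Sym2.mk_isDiag_iff] at hd; exact R.hw'w hd.symm
  · intro hd; rw [Sym2.mk_isDiag_iff] at hd; exact R.hw'n1 hd
  · intro hd; rw [Sym2.mk_isDiag_iff] at hd; exact R.hw'n2 hd
  · exact T.not_diag _ hgE

lemma w'_nbr (R : ResData T w n1 n2 w') {z : ℕ}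
    (hz : s(w', z) ∈ redges T w n1 n2 w') : z = w ∨ z = n1 ∨ z = n2 := by
  rcases mem_redges.mp hz with h | h | h | ⟨hgE, -, -⟩
  · rw [Sym2.eq_iff] at h
    rcases h with ⟨h, -⟩ | ⟨-, h⟩
    · exact absurd h R.hw'w
    · exact Or.inl h
  · rw [Sym2.eq_iff] at h
    rcases h with ⟨-, h⟩ | ⟨h, -⟩
    · exact Or.inr (Or.inl h)
    · exact absurd h R.hw'n1
  · rw [Sym2.eq_iff] at h
    rcases h with ⟨-, h⟩ | ⟨h, -⟩
    · exact Or.inr (Or.inr h)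
    · exact absurd h R.hw'n2
  · exact absurd (Sym2.mem_mk_left w' z) (R.hEw' _ hgE)

/-- push reachability into the resolved graph -/
lemma resolve_push (R : ResData T w n1 n2 w') (D D' : Set (Sym2 ℕ))
    (hold : ∀ g, g ∈ T.edges → g ≠ s(w, n1) → g ≠ s(w, n2) → g ∉ D → g ∉ D')
    (hww' : s(w, w') ∉ D')
    (hd1 : s(w, n1) ∉ D → s(w', n1) ∉ D')
    (hd2 : s(w, n2) ∉ D → s(w', n2) ∉ D') :
    ∀ {x y : ℕ}, (T.graph.deleteEdges D).Walk x y →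
      ((graphOfEdges (redges T w n1 n2 w')).deleteEdges D').Reachable x y := by
  intro x y p
  induction p with
  | nil => exact Reachable.refl _
  | @cons a b c h p ih =>
    rw [deleteEdges_adj] at h
    obtain ⟨⟨hab, habE⟩, habD⟩ := h
    have key : ∀ z1 z2 : ℕ, s(z1, z2) = s(w, n1) ∨ s(z1, z2) = s(w, n2) →
        s(z1, z2) ∉ D →
        ((graphOfEdges (redges T w n1 n2 w')).deleteEdges D').Reachable z1 z2 ∨
        ((graphOfEdges (redges T w n1 n2 w')).deleteEdges D').Reachable z2 z1 := by
      intro z1 z2 hz hzD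
      have hadjw : ((graphOfEdges (redges T w n1 n2 w')).deleteEdges D').Adj w w' := by
        rw [deleteEdges_adj]
        exact ⟨⟨fun h => R.hw'w h.symm, mem_redges.mpr (Or.inl rfl)⟩, hww'⟩
      rcases hz with hz | hz
      · have hadj1 : ((graphOfEdges (redges T w n1 n2 w')).deleteEdges D').Adj w' n1 := by
          rw [deleteEdges_adj]
          exact ⟨⟨R.hw'n1, mem_redges.mpr (Or.inr (Or.inl rfl))⟩, hd1 (hz ▸ hzD)⟩
        rw [Sym2.eq_iff] at hz
        rcases hz with ⟨rfl, rfl⟩ | ⟨rfl, rfl⟩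
        · exact Or.inl (hadjw.reachable.trans hadj1.reachable)
        · exact Or.inr (hadjw.reachable.trans hadj1.reachable)
      · have hadj2 : ((graphOfEdges (redges T w n1 n2 w')).deleteEdges D').Adj w' n2 := by
          rw [deleteEdges_adj]
          exact ⟨⟨R.hw'n2, mem_redges.mpr (Or.inr (Or.inr (Or.inl rfl)))⟩, hd2 (hz ▸ hzD)⟩
        rw [Sym2.eq_iff] at hz
        rcases hz with ⟨rfl, rfl⟩ | ⟨rfl, rfl⟩
        · exact Or.inl (hadjw.reachable.trans hadj2.reachable)
        · exact Or.inr (hadjw.reachable.trans hadj2.reachable)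
    by_cases hc : s(a, b) = s(w, n1) ∨ s(a, b) = s(w, n2)
    · rcases key a b hc habD with hr | hr
      · exact hr.trans ih
      · exact hr.symm.trans ih
    · push_neg at hc
      have hadj : ((graphOfEdges (redges T w n1 n2 w')).deleteEdges D').Adj a b := by
        rw [deleteEdges_adj]
        exact ⟨⟨hab, mem_redges.mpr (Or.inr (Or.inr (Or.inr ⟨habE, hc.1, hc.2⟩)))⟩,
          hold _ habE hc.1 hc.2 habD⟩
      exact hadj.reachable.trans ih

/-- lift reachability back from the resolved graph; `w'` is sent to `w`. -/
lemma resolve_lift (R : ResData T w n1 n2 w') (D D' : Set (Sym2 ℕ))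
    (hold : ∀ g, g ∈ T.edges → g ≠ s(w, n1) → g ≠ s(w, n2) → g ∉ D' → g ∉ D)
    (hd1 : s(w', n1) ∉ D' → s(w, n1) ∉ D)
    (hd2 : s(w', n2) ∉ D' → s(w, n2) ∉ D) :
    ∀ {x y : ℕ}, ((graphOfEdges (redges T w n1 n2 w')).deleteEdges D').Walk x y →
      (T.graph.deleteEdges D).Reachable (cmap w w' x) (cmap w w' y) := by
  intro x y p
  induction p with
  | nil => exact Reachable.refl _
  | @cons a b c h p ih =>
    rw [deleteEdges_adj] at h
    obtain ⟨⟨hab, habE⟩, habD⟩ := h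
    rcases mem_redges.mp habE with hg | hg | hg | ⟨hgE, hg1, hg2⟩
    · -- s(a,b) = s(w,w') : endpoints collapse
      have : cmap w w' a = cmap w w' b := by
        rw [Sym2.eq_iff] at hg
        rcases hg with ⟨rfl, rfl⟩ | ⟨rfl, rfl⟩ <;> simp [cmap]
      rw [this]
      exact ih
    · -- s(a,b) = s(w',n1)
      have hadj : (T.graph.deleteEdges D).Adj w n1 := by
        rw [deleteEdges_adj]
        exact ⟨⟨R.hwn1, R.h1⟩, hd1 (hg ▸ habD)⟩
      rw [Sym2.eq_iff] at hg
      rcases hg with ⟨rfl, rfl⟩ | ⟨rfl, rfl⟩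
      · rw [cmap_v]
        rw [cmap_apply_ne (Ne.symm R.hw'n1)] at ih
        exact hadj.reachable.trans ih
      · rw [cmap_apply_ne (Ne.symm R.hw'n1)]
        rw [cmap_v] at ih
        exact hadj.reachable.symm.trans ih
    · -- s(a,b) = s(w',n2)
      have hadj : (T.graph.deleteEdges D).Adj w n2 := by
        rw [deleteEdges_adj]
        exact ⟨⟨R.hwn2, R.h2⟩, hd2 (hg ▸ habD)⟩
      rw [Sym2.eq_iff] at hg
      rcases hg with ⟨rfl, rfl⟩ | ⟨rfl, rfl⟩
      · rw [cmap_v]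
        rw [cmap_apply_ne (Ne.symm R.hw'n2)] at ih
        exact hadj.reachable.trans ih
      · rw [cmap_apply_ne (Ne.symm R.hw'n2)]
        rw [cmap_v] at ih
        exact hadj.reachable.symm.trans ih
    · -- old edge
      have haw' : a ≠ w' := fun h => R.hEw' _ hgE (h ▸ Sym2.mem_mk_left a b)
      have hbw' : b ≠ w' := fun h => R.hEw' _ hgE (h ▸ Sym2.mem_mk_right a b)
      have hadj : (T.graph.deleteEdges D).Adj a b := by
        rw [deleteEdges_adj]
        exact ⟨⟨hab, hgE⟩, hold _ hgE hg1 hg2 habD⟩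
      rw [cmap_apply_ne haw']
      rw [cmap_apply_ne hbw'] at ih
      exact hadj.reachable.trans ih

end ResData

end Resolution

lemma walk_edge_vert_mem_support {G : SimpleGraph ℕ} {x y : ℕ} (p : G.Walk x y)
    {e : Sym2 ℕ} (he : e ∈ p.edges) {z : ℕ} (hz : z ∈ e) : z ∈ p.support := by
  induction e using Sym2.ind with
  | _ a b =>
    rcases Sym2.mem_iff.mp hz with rfl | rfl
    · exact p.fst_mem_support_of_mem_edges he
    · exact p.snd_mem_support_of_mem_edges he

namespace ResData

variable {T : PhyloTree} {w n1 n2 w' : ℕ}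

/-- Any reachability from `w'` in the resolved graph minus some edges starts with a step
to `w`, `n1` or `n2`, and the rest can be carried out in `T` minus both split edges. -/
lemma first_step (R : ResData T w n1 n2 w') {D' : Set (Sym2 ℕ)} {t : ℕ}
    (hreach : ((graphOfEdges (redges T w n1 n2 w')).deleteEdges D').Reachable w' t)
    (ht : t ≠ w') :
    ∃ z, (z = w ∨ z = n1 ∨ z = n2) ∧ s(w', z) ∉ D' ∧
      (T.graph.deleteEdges {s(w, n1), s(w, n2)}).Reachable z t := by
  obtain ⟨p0⟩ := hreach
  set p := p0.bypass with hpdef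
  have hp : p.IsPath := p0.bypass_isPath
  obtain ⟨z, hadj, p', hpeq⟩ := Walk.exists_eq_cons_of_ne (Ne.symm ht) p
  rw [hpeq, Walk.cons_isPath_iff] at hp
  obtain ⟨hp', hw's⟩ := hp
  rw [deleteEdges_adj] at hadj
  obtain ⟨⟨hne', hmem⟩, hD'⟩ := hadj
  refine ⟨z, R.w'_nbr hmem, hD', ?_⟩
  refine ⟨p'.transfer _ ?_⟩
  intro e he
  have heG' : e ∈ (graphOfEdges (redges T w n1 n2 w')).edgeSet :=
    edgeSet_mono (deleteEdges_le _) (p'.edges_subset_edgeSet he)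
  rw [graphOfEdges_edgeSet R.redges_not_diag] at heG'
  have hw'e : w' ∉ e := fun hmem' => hw's (walk_edge_vert_mem_support p' he hmem')
  rcases mem_redges.mp (Finset.mem_coe.mp heG') with rfl | rfl | rfl | ⟨hE, hne1, hne2⟩
  · exact absurd (Sym2.mem_mk_right w w') hw'e
  · exact absurd (Sym2.mem_mk_left w' n1) hw'e
  · exact absurd (Sym2.mem_mk_left w' n2) hw'e
  · rw [edgeSet_deleteEdges]
    refine ⟨by rw [T.edgeSet_graph]; exact Finset.mem_coe.mpr hE, ?_⟩
    simp only [Set.mem_insert_iff, Set.mem_singleton_iff]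
    push_neg
    exact ⟨hne1, hne2⟩

lemma pair_anti1 : (T.graph.deleteEdges {s(w, n1), s(w, n2)}) ≤
    T.graph.deleteEdges {s(w, n1)} :=
  deleteEdges_anti (by simp)

lemma pair_anti2 : (T.graph.deleteEdges {s(w, n1), s(w, n2)}) ≤
    T.graph.deleteEdges {s(w, n2)} :=
  deleteEdges_anti (by simp)

lemma bridge_ww' (R : ResData T w n1 n2 w') :
    ¬ ((graphOfEdges (redges T w n1 n2 w')).deleteEdges {s(w, w')}).Reachable w w' := by
  intro hreach
  obtain ⟨z, hz, hzD', hr⟩ := R.first_step hreach.symm (Ne.symm R.hw'w)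
  rcases hz with rfl | rfl | rfl
  · exact hzD' (by rw [Sym2.eq_swap]; rfl)
  · exact T.sep_of_mem_edges R.h1 (hr.mono pair_anti1).symm
  · exact T.sep_of_mem_edges R.h2 (hr.mono pair_anti2).symm

lemma bridge_w'n1 (R : ResData T w n1 n2 w') :
    ¬ ((graphOfEdges (redges T w n1 n2 w')).deleteEdges {s(w', n1)}).Reachable w' n1 := by
  intro hreach
  obtain ⟨z, hz, hzD', hr⟩ := R.first_step hreach (Ne.symm R.hw'n1)
  rcases hz with rfl | hz | hz
  · exact T.sep_of_mem_edges R.h1 (hr.mono pair_anti1)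
  · exact hzD' (by rw [hz]; exact Set.mem_singleton _)
  · -- z = n2 : w adj n2 then n2 → n1
    have hadj : (T.graph.deleteEdges {s(w, n1)}).Adj w n2 := by
      rw [deleteEdges_adj]
      refine ⟨⟨R.hwn2, R.h2⟩, ?_⟩
      have e1 := R.hn
      have e2 := R.hwn1
      simp only [Set.mem_singleton_iff, Sym2.eq_iff]
      omega
    rw [hz] at hr
    exact T.sep_of_mem_edges R.h1 (hadj.reachable.trans (hr.mono pair_anti1))

lemma bridge_w'n2 (R : ResData T w n1 n2 w') :
    ¬ ((graphOfEdges (redges T w n1 n2 w')).deleteEdges {s(w', n2)}).Reachable w' n2 := by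
  intro hreach
  obtain ⟨z, hz, hzD', hr⟩ := R.first_step hreach (Ne.symm R.hw'n2)
  rcases hz with rfl | hz | hz
  · exact T.sep_of_mem_edges R.h2 (hr.mono pair_anti2)
  · -- z = n1
    have hadj : (T.graph.deleteEdges {s(w, n2)}).Adj w n1 := by
      rw [deleteEdges_adj]
      refine ⟨⟨R.hwn1, R.h1⟩, ?_⟩
      have e1 := R.hn
      have e2 := R.hwn2
      simp only [Set.mem_singleton_iff, Sym2.eq_iff]
      omega
    rw [hz] at hr
    exact T.sep_of_mem_edges R.h2 (hadj.reachable.trans (hr.mono pair_anti2))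
  · exact hzD' (by rw [hz]; exact Set.mem_singleton _)

end ResData

namespace ResData

variable {T : PhyloTree} {w n1 n2 w' : ℕ}

lemma deg_other (R : ResData T w n1 n2 w') {x : ℕ} (hxw : x ≠ w) (hxw' : x ≠ w')
    (hx1 : x ≠ n1) (hx2 : x ≠ n2) :
    degOf (redges T w n1 n2 w') x = degOf T.edges x := by
  unfold degOf
  congr 1
  ext g
  simp only [Finset.mem_filter]
  constructor
  · rintro ⟨hg, hxg⟩
    rcases mem_redges.mp hg with rfl | rfl | rfl | ⟨hE, -, -⟩
    · rw [Sym2.mem_iff] at hxg; omega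
    · rw [Sym2.mem_iff] at hxg; omega
    · rw [Sym2.mem_iff] at hxg; omega
    · exact ⟨hE, hxg⟩
  · rintro ⟨hE, hxg⟩
    refine ⟨mem_redges.mpr (Or.inr (Or.inr (Or.inr ⟨hE, ?_, ?_⟩))), hxg⟩
    · rintro rfl; rw [Sym2.mem_iff] at hxg; omega
    · rintro rfl; rw [Sym2.mem_iff] at hxg; omega

lemma deg_n1 (R : ResData T w n1 n2 w') :
    degOf (redges T w n1 n2 w') n1 = degOf T.edges n1 := by
  have e1 := R.hwn1
  have e2 := R.hw'n1
  have e3 := R.hn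
  have hfil : (redges T w n1 n2 w').filter (fun g => n1 ∈ g) =
      insert s(w', n1) ((T.edges.filter (fun g => n1 ∈ g)).erase s(w, n1)) := by
    ext g
    simp only [Finset.mem_filter, Finset.mem_insert, Finset.mem_erase]
    constructor
    · rintro ⟨hg, hn1g⟩
      rcases mem_redges.mp hg with rfl | rfl | rfl | ⟨hE, h1, h2⟩
      · rw [Sym2.mem_iff] at hn1g; omega
      · exact Or.inl rfl
      · rw [Sym2.mem_iff] at hn1g; omega
      · exact Or.inr ⟨h1, hE, hn1g⟩
    · rintro (rfl | ⟨hne, hE, hn1g⟩)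
      · exact ⟨mem_redges.mpr (Or.inr (Or.inl rfl)), Sym2.mem_mk_right w' n1⟩
      · refine ⟨mem_redges.mpr (Or.inr (Or.inr (Or.inr ⟨hE, hne, ?_⟩))), hn1g⟩
        rintro rfl
        rw [Sym2.mem_iff] at hn1g
        omega
  have hnot : s(w', n1) ∉ (T.edges.filter (fun g => n1 ∈ g)).erase s(w, n1) := fun hmem =>
    R.hEw' _ (Finset.mem_filter.mp (Finset.mem_erase.mp hmem).2).1 (Sym2.mem_mk_left w' n1)
  have hm : s(w, n1) ∈ T.edges.filter (fun g => n1 ∈ g) :=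
    Finset.mem_filter.mpr ⟨R.h1, Sym2.mem_mk_right w n1⟩
  have hpos : 0 < (T.edges.filter (fun g => n1 ∈ g)).card := Finset.card_pos.mpr ⟨_, hm⟩
  unfold degOf
  rw [hfil, Finset.card_insert_of_notMem hnot, Finset.card_erase_of_mem hm]
  omega

lemma deg_n2 (R : ResData T w n1 n2 w') :
    degOf (redges T w n1 n2 w') n2 = degOf T.edges n2 := by
  have e1 := R.hwn2
  have e2 := R.hw'n2
  have e3 := R.hn
  have hfil : (redges T w n1 n2 w').filter (fun g => n2 ∈ g) =
      insert s(w', n2) ((T.edges.filter (fun g => n2 ∈ g)).erase s(w, n2)) := by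
    ext g
    simp only [Finset.mem_filter, Finset.mem_insert, Finset.mem_erase]
    constructor
    · rintro ⟨hg, hn2g⟩
      rcases mem_redges.mp hg with rfl | rfl | rfl | ⟨hE, h1, h2⟩
      · rw [Sym2.mem_iff] at hn2g; omega
      · rw [Sym2.mem_iff] at hn2g; omega
      · exact Or.inl rfl
      · exact Or.inr ⟨h2, hE, hn2g⟩
    · rintro (rfl | ⟨hne, hE, hn2g⟩)
      · exact ⟨mem_redges.mpr (Or.inr (Or.inr (Or.inl rfl))), Sym2.mem_mk_right w' n2⟩
      · refine ⟨mem_redges.mpr (Or.inr (Or.inr (Or.inr ⟨hE, ?_, hne⟩))), hn2g⟩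
        rintro rfl
        rw [Sym2.mem_iff] at hn2g
        omega
  have hnot : s(w', n2) ∉ (T.edges.filter (fun g => n2 ∈ g)).erase s(w, n2) := fun hmem =>
    R.hEw' _ (Finset.mem_filter.mp (Finset.mem_erase.mp hmem).2).1 (Sym2.mem_mk_left w' n2)
  have hm : s(w, n2) ∈ T.edges.filter (fun g => n2 ∈ g) :=
    Finset.mem_filter.mpr ⟨R.h2, Sym2.mem_mk_right w n2⟩
  have hpos : 0 < (T.edges.filter (fun g => n2 ∈ g)).card := Finset.card_pos.mpr ⟨_, hm⟩
  unfold degOf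
  rw [hfil, Finset.card_insert_of_notMem hnot, Finset.card_erase_of_mem hm]
  omega

lemma deg_w (R : ResData T w n1 n2 w') :
    degOf (redges T w n1 n2 w') w = degOf T.edges w - 1 := by
  have e1 := R.hwn1
  have e2 := R.hwn2
  have e3 := R.hn
  have e4 := R.hw'w
  have hfil : (redges T w n1 n2 w').filter (fun g => w ∈ g) =
      insert s(w, w') (((T.edges.filter (fun g => w ∈ g)).erase s(w, n1)).erase s(w, n2)) := by
    ext g
    simp only [Finset.mem_filter, Finset.mem_insert, Finset.mem_erase]
    constructor
    · rintro ⟨hg, hwg⟩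
      rcases mem_redges.mp hg with rfl | rfl | rfl | ⟨hE, h1, h2⟩
      · exact Or.inl rfl
      · rw [Sym2.mem_iff] at hwg; omega
      · rw [Sym2.mem_iff] at hwg; omega
      · exact Or.inr ⟨h2, h1, hE, hwg⟩
    · rintro (rfl | ⟨hne2, hne1, hE, hwg⟩)
      · exact ⟨mem_redges.mpr (Or.inl rfl), Sym2.mem_mk_left w w'⟩
      · exact ⟨mem_redges.mpr (Or.inr (Or.inr (Or.inr ⟨hE, hne1, hne2⟩))), hwg⟩
  have hm1 : s(w, n1) ∈ T.edges.filter (fun g => w ∈ g) :=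
    Finset.mem_filter.mpr ⟨R.h1, Sym2.mem_mk_left w n1⟩
  have hm2 : s(w, n2) ∈ (T.edges.filter (fun g => w ∈ g)).erase s(w, n1) := by
    refine Finset.mem_erase.mpr ⟨?_, Finset.mem_filter.mpr ⟨R.h2, Sym2.mem_mk_left w n2⟩⟩
    rw [Ne, Sym2.eq_iff]
    omega
  have hnot : s(w, w') ∉ ((T.edges.filter (fun g => w ∈ g)).erase s(w, n1)).erase s(w, n2) :=
    fun hmem => R.hEw' _
      (Finset.mem_filter.mp (Finset.mem_erase.mp (Finset.mem_erase.mp hmem).2).2).1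
      (Sym2.mem_mk_right w w')
  have hdw := R.hdw
  unfold degOf at hdw ⊢
  rw [hfil, Finset.card_insert_of_notMem hnot, Finset.card_erase_of_mem hm2,
    Finset.card_erase_of_mem hm1]
  omega

lemma deg_w' (R : ResData T w n1 n2 w') : degOf (redges T w n1 n2 w') w' = 3 := by
  have e1 := R.hw'w
  have e2 := R.hw'n1
  have e3 := R.hw'n2
  have e4 := R.hn
  have e5 := R.hwn1
  have e6 := R.hwn2
  have hfil : (redges T w n1 n2 w').filter (fun g => w' ∈ g) =
      {s(w, w'), s(w', n1), s(w', n2)} := by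
    ext g
    simp only [Finset.mem_filter, Finset.mem_insert, Finset.mem_singleton]
    constructor
    · rintro ⟨hg, hwg⟩
      rcases mem_redges.mp hg with rfl | rfl | rfl | ⟨hE, -, -⟩
      · exact Or.inl rfl
      · exact Or.inr (Or.inl rfl)
      · exact Or.inr (Or.inr rfl)
      · exact absurd hwg (R.hEw' _ hE)
    · rintro (rfl | rfl | rfl)
      · exact ⟨mem_redges.mpr (Or.inl rfl), Sym2.mem_mk_right w w'⟩
      · exact ⟨mem_redges.mpr (Or.inr (Or.inl rfl)), Sym2.mem_mk_left w' n1⟩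
      · exact ⟨mem_redges.mpr (Or.inr (Or.inr (Or.inl rfl))), Sym2.mem_mk_left w' n2⟩
  unfold degOf
  rw [hfil]
  rw [Finset.card_insert_of_notMem (by
    simp only [Finset.mem_insert, Finset.mem_singleton, Sym2.eq_iff]
    omega)]
  rw [Finset.card_insert_of_notMem (by
    simp only [Finset.mem_singleton, Sym2.eq_iff]
    omega)]
  rw [Finset.card_singleton]

end ResData

/-- The resolution of `T` at `w`, splitting off neighbours `n1, n2` to a new vertex `w'`. -/
def PhyloTree.resolve (T : PhyloTree) (w n1 n2 w' : ℕ) (R : ResData T w n1 n2 w') :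
    PhyloTree where
  verts := insert w' T.verts
  edges := redges T w n1 n2 w'
  edge_verts := by
    intro g hg x hx
    rcases mem_redges.mp hg with rfl | rfl | rfl | ⟨hgE, -, -⟩
    · rcases Sym2.mem_iff.mp hx with rfl | rfl
      · exact Finset.mem_insert_of_mem R.hwV
      · exact Finset.mem_insert_self _ _
    · rcases Sym2.mem_iff.mp hx with rfl | rfl
      · exact Finset.mem_insert_self _ _
      · exact Finset.mem_insert_of_mem R.hn1V
    · rcases Sym2.mem_iff.mp hx with rfl | rfl
      · exact Finset.mem_insert_self _ _
      · exact Finset.mem_insert_of_mem R.hn2V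
    · exact Finset.mem_insert_of_mem (T.edge_verts _ hgE x hx)
  not_diag := R.redges_not_diag
  conn := by
    have hreach : ∀ z ∈ insert w' T.verts,
        (graphOfEdges (redges T w n1 n2 w')).Reachable z w := by
      intro z hz
      rcases Finset.mem_insert.mp hz with rfl | hz
      · exact Adj.reachable ⟨R.hw'w, by rw [Sym2.eq_swap]; exact mem_redges.mpr (Or.inl rfl)⟩
      · obtain ⟨p⟩ := T.conn z hz w R.hwV
        have p' : (T.graph.deleteEdges ∅).Walk z w := by rw [deleteEdges_empty]; exact p
        have hpush := R.resolve_push ∅ ∅ (by simp) (by simp) (by simp) (by simp) p'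
        rwa [deleteEdges_empty] at hpush
    intro x hx y hy
    exact (hreach x hx).trans (hreach y hy).symm
  acyclic := by
    rw [isAcyclic_iff_forall_adj_isBridge]
    intro p q hadj
    rw [isBridge_iff]
    intro hreach
    obtain ⟨hpq, hmem⟩ := hadj
    have hreach' : ((graphOfEdges (redges T w n1 n2 w')).deleteEdges {s(p, q)}).Reachable p q :=
      hreach
    rcases mem_redges.mp hmem with hg | hg | hg | ⟨hgE, hg1, hg2⟩
    · rw [Sym2.eq_iff] at hg
      rcases hg with ⟨rfl, rfl⟩ | ⟨rfl, rfl⟩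
      · exact R.bridge_ww' hreach'
      · rw [show s(p, q) = s(q, p) from Sym2.eq_swap] at hreach'
        exact R.bridge_ww' hreach'.symm
    · rw [Sym2.eq_iff] at hg
      rcases hg with ⟨rfl, rfl⟩ | ⟨rfl, rfl⟩
      · exact R.bridge_w'n1 hreach'
      · rw [show s(p, q) = s(q, p) from Sym2.eq_swap] at hreach'
        exact R.bridge_w'n1 hreach'.symm
    · rw [Sym2.eq_iff] at hg
      rcases hg with ⟨rfl, rfl⟩ | ⟨rfl, rfl⟩
      · exact R.bridge_w'n2 hreach'
      · rw [show s(p, q) = s(q, p) from Sym2.eq_swap] at hreach'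
        exact R.bridge_w'n2 hreach'.symm
    · -- old edge
      have hpw' : p ≠ w' := fun h => R.hEw' _ hgE (h ▸ Sym2.mem_mk_left p q)
      have hqw' : q ≠ w' := fun h => R.hEw' _ hgE (h ▸ Sym2.mem_mk_right p q)
      have hlift := R.resolve_lift {s(p, q)} {s(p, q)}
        (fun _ _ _ _ h => h)
        (fun _ hmem' => hg1 (Set.mem_singleton_iff.mp hmem').symm)
        (fun _ hmem' => hg2 (Set.mem_singleton_iff.mp hmem').symm)
        hreach'.some
      rw [cmap_apply_ne hpw', cmap_apply_ne hqw'] at hlift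
      exact T.sep_of_mem_edges hgE hlift
  verts_nonempty := ⟨w', Finset.mem_insert_self _ _⟩
  no_deg_two := by
    intro x hx
    by_cases hxw' : x = w'
    · subst hxw'
      rw [R.deg_w']
      omega
    by_cases hxw : x = w
    · subst hxw
      rw [R.deg_w]
      have := R.hdw
      omega
    by_cases hx1 : x = n1
    · subst hx1
      rw [R.deg_n1]
      exact T.no_deg_two _ R.hn1V
    by_cases hx2 : x = n2
    · subst hx2
      rw [R.deg_n2]
      exact T.no_deg_two _ R.hn2V
    · rw [R.deg_other hxw hxw' hx1 hx2]
      exact T.no_deg_two x ((Finset.mem_insert.mp hx).resolve_left hxw')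

section Resolution2

variable {T : PhyloTree} {w n1 n2 w' : ℕ}

lemma resolve_verts_card (R : ResData T w n1 n2 w') :
    (T.resolve w n1 n2 w' R).verts.card = T.verts.card + 1 := by
  show (insert w' T.verts).card = _
  rw [Finset.card_insert_of_notMem R.hw']

lemma resolve_leaves (R : ResData T w n1 n2 w') :
    (T.resolve w n1 n2 w' R).leaves = T.leaves := by
  ext x
  show x ∈ (insert w' T.verts).filter (fun z => degOf (redges T w n1 n2 w') z = 1) ↔ _
  rw [PhyloTree.leaves]
  simp only [Finset.mem_filter, Finset.mem_insert]
  by_cases hxw' : x = w'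
  · subst hxw'
    constructor
    · rintro ⟨-, hdeg⟩
      rw [R.deg_w'] at hdeg
      omega
    · rintro ⟨hV, -⟩
      exact (R.hw' hV).elim
  by_cases hxw : x = w
  · subst hxw
    have hdw := R.hdw
    constructor
    · rintro ⟨-, hdeg⟩
      rw [R.deg_w] at hdeg
      omega
    · rintro ⟨-, hdeg⟩
      omega
  by_cases hx1 : x = n1
  · subst hx1
    rw [R.deg_n1]
    exact ⟨fun h => ⟨R.hn1V, h.2⟩, fun h => ⟨Or.inr h.1, h.2⟩⟩
  by_cases hx2 : x = n2
  · subst hx2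
    rw [R.deg_n2]
    exact ⟨fun h => ⟨R.hn2V, h.2⟩, fun h => ⟨Or.inr h.1, h.2⟩⟩
  · rw [R.deg_other hxw hxw' hx1 hx2]
    constructor
    · rintro ⟨hmem, hdeg⟩
      exact ⟨hmem.resolve_left hxw', hdeg⟩
    · rintro ⟨hV, hdeg⟩
      exact ⟨Or.inr hV, hdeg⟩

lemma resolve_sep (R : ResData T w n1 n2 w') {f : Sym2 ℕ} (hf : f ∈ T.edges) :
    ∃ f' ∈ redges T w n1 n2 w', ∀ x y : ℕ, x ≠ w' → y ≠ w' →
      T.Sep f x y → (T.resolve w n1 n2 w' R).Sep f' x y := by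
  have e3 := R.hn
  have e5 := R.hwn1
  have e6 := R.hwn2
  by_cases h1 : f = s(w, n1)
  · subst h1
    refine ⟨s(w', n1), mem_redges.mpr (Or.inr (Or.inl rfl)), ?_⟩
    intro x y hx hy hs hr
    have hlift := R.resolve_lift {s(w, n1)} {s(w', n1)}
      (fun g _ hg1 _ _ hmem => hg1 (Set.mem_singleton_iff.mp hmem))
      (fun h => (h (Set.mem_singleton _)).elim)
      (fun _ hmem => by
        rw [Set.mem_singleton_iff, Sym2.eq_iff] at hmem
        omega)
      hr.some
    rw [cmap_apply_ne hx, cmap_apply_ne hy] at hlift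
    exact hs hlift
  by_cases h2 : f = s(w, n2)
  · subst h2
    refine ⟨s(w', n2), mem_redges.mpr (Or.inr (Or.inr (Or.inl rfl))), ?_⟩
    intro x y hx hy hs hr
    have hlift := R.resolve_lift {s(w, n2)} {s(w', n2)}
      (fun g _ _ hg2 _ hmem => hg2 (Set.mem_singleton_iff.mp hmem))
      (fun _ hmem => by
        rw [Set.mem_singleton_iff, Sym2.eq_iff] at hmem
        omega)
      (fun h => (h (Set.mem_singleton _)).elim)
      hr.some
    rw [cmap_apply_ne hx, cmap_apply_ne hy] at hlift
    exact hs hlift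
  · refine ⟨f, mem_redges.mpr (Or.inr (Or.inr (Or.inr ⟨hf, h1, h2⟩))), ?_⟩
    intro x y hx hy hs hr
    have hlift := R.resolve_lift {f} {f}
      (fun _ _ _ _ h => h)
      (fun _ hmem => h1 (Set.mem_singleton_iff.mp hmem).symm)
      (fun _ hmem => h2 (Set.mem_singleton_iff.mp hmem).symm)
      hr.some
    rw [cmap_apply_ne hx, cmap_apply_ne hy] at hlift
    exact hs hlift

lemma leaf_ne_w' (R : ResData T w n1 n2 w') {x : ℕ} (hx : x ∈ T.leaves) : x ≠ w' :=
  fun h => R.hw' (h ▸ PhyloTree.leaf_mem_verts T hx)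

lemma resolve_displays (R : ResData T w n1 n2 w') {a b c d : ℕ}
    (hq : T.DisplaysQuartet a b c d) :
    (T.resolve w n1 n2 w' R).DisplaysQuartet a b c d := by
  rw [T.displaysQuartet_iff] at hq
  obtain ⟨ha, hb, hc, hd, hab, hcd, f, hfE, s1, s2, s3, s4⟩ := hq
  obtain ⟨f', hf'mem, hf'⟩ := resolve_sep R hfE
  rw [(T.resolve w n1 n2 w' R).displaysQuartet_iff]
  refine ⟨?_, ?_, ?_, ?_, hab, hcd, f', hf'mem, ?_, ?_, ?_, ?_⟩
  · rw [resolve_leaves R]; exact ha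
  · rw [resolve_leaves R]; exact hb
  · rw [resolve_leaves R]; exact hc
  · rw [resolve_leaves R]; exact hd
  · exact hf' a c (leaf_ne_w' R ha) (leaf_ne_w' R hc) s1
  · exact hf' a d (leaf_ne_w' R ha) (leaf_ne_w' R hd) s2
  · exact hf' b c (leaf_ne_w' R hb) (leaf_ne_w' R hc) s3
  · exact hf' b d (leaf_ne_w' R hb) (leaf_ne_w' R hd) s4

end Resolution2

/-- If `T` is not binary (and has at least two vertices) we can resolve some vertex. -/
lemma exists_resolution (T : PhyloTree) (hnb : ¬ T.IsBinary) (hcard : 2 ≤ T.verts.card) :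
    ∃ w n1 n2 w', Nonempty (ResData T w n1 n2 w') := by
  rw [PhyloTree.IsBinary] at hnb
  push_neg at hnb
  obtain ⟨w, hwV, hw1, hw3⟩ := hnb
  have hw2 := T.no_deg_two w hwV
  -- degree of w is at least one
  have hpos : 0 < degOf T.edges w := by
    obtain ⟨y, hyV, hyw⟩ := Finset.exists_mem_ne (s := T.verts) (by omega) w
    obtain ⟨p⟩ := T.conn w hwV y hyV
    obtain ⟨z, hadj, -, -⟩ := Walk.exists_eq_cons_of_ne (Ne.symm hyw) p
    exact deg_pos_of_mem hadj.2 (Sym2.mem_mk_left w z)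
  have hdw : 4 ≤ degOf T.edges w := by omega
  have h2 : 1 < (T.edges.filter (fun g => w ∈ g)).card := by
    unfold degOf at hdw
    omega
  obtain ⟨e1, he1, e2, he2, hne⟩ := Finset.one_lt_card.mp h2
  obtain ⟨he1E, hwe1⟩ := Finset.mem_filter.mp he1
  obtain ⟨he2E, hwe2⟩ := Finset.mem_filter.mp he2
  obtain ⟨x1, rfl⟩ := Sym2.mem_iff_exists.mp hwe1
  obtain ⟨x2, rfl⟩ := Sym2.mem_iff_exists.mp hwe2
  obtain ⟨w', hw'⟩ := Infinite.exists_notMem_finset T.verts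
  refine ⟨w, x1, x2, w', ⟨⟨he1E, he2E, ?_, hw', hdw⟩⟩⟩
  rintro rfl
  exact hne rfl


/-! ### Counting edges and interior edges -/

namespace PhyloTree

lemma sum_deg (T : PhyloTree) : ∑ v ∈ T.verts, degOf T.edges v = 2 * T.edges.card := by
  have h1 : ∑ v ∈ T.verts, degOf T.edges v
      = ∑ e ∈ T.edges, (T.verts.filter (fun v => v ∈ e)).card := by
    unfold degOf
    simp_rw [Finset.card_filter]
    rw [Finset.sum_comm]
  have h2 : ∀ e ∈ T.edges, (T.verts.filter (fun v => v ∈ e)).card = 2 := by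
    intro e he
    induction e using Sym2.ind with
    | _ a b =>
      have hab : a ≠ b := fun h => T.not_diag _ he (by simp [h])
      have ha : a ∈ T.verts := T.edge_verts _ he a (by simp)
      have hb : b ∈ T.verts := T.edge_verts _ he b (by simp)
      have hset : T.verts.filter (fun v => v ∈ s(a, b)) = {a, b} := by
        ext v
        simp only [Finset.mem_filter, Sym2.mem_iff, Finset.mem_insert, Finset.mem_singleton]
        constructor
        · rintro ⟨-, h⟩; exact h
        · rintro (rfl | rfl)
          · exact ⟨ha, Or.inl rfl⟩
          · exact ⟨hb, Or.inr rfl⟩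
      rw [hset, Finset.card_insert_of_notMem (by simp [hab]), Finset.card_singleton]
  rw [h1, Finset.sum_congr rfl h2, Finset.sum_const, smul_eq_mul, mul_comm]

lemma edges_card (T : PhyloTree) : T.edges.card + 1 = T.verts.card := by
  classical
  set S : Set ℕ := ↑T.verts with hS
  haveI : Fintype S := FinsetCoe.fintype T.verts
  set G' : SimpleGraph S := T.graph.induce S with hG'
  have hlift : ∀ (x y : ℕ) (p : T.graph.Walk x y) (hx : x ∈ T.verts) (hy : y ∈ T.verts),
      G'.Reachable ⟨x, hx⟩ ⟨y, hy⟩ := by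
    intro x y p
    induction p with
    | nil => exact fun hx hy => Reachable.refl _
    | @cons a b c h p ih =>
      intro hx hy
      have hbV : b ∈ T.verts := T.edge_verts _ h.2 b (by simp)
      have hadj : G'.Adj ⟨a, hx⟩ ⟨b, hbV⟩ := h
      exact hadj.reachable.trans (ih hbV hy)
  have hconn : G'.Connected := by
    have hne : Nonempty ↥S := by
      obtain ⟨x, hx⟩ := T.verts_nonempty
      exact ⟨⟨x, hx⟩⟩
    refine Connected.mk ?_
    intro x y
    obtain ⟨p⟩ := T.conn x.1 x.2 y.1 y.2
    have := hlift x.1 y.1 p x.2 y.2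
    simpa using this
  have hacyc : G'.IsAcyclic := by
    intro v c hc
    have hinj : Function.Injective (SimpleGraph.Embedding.induce (G := T.graph) S).toHom :=
      Subtype.val_injective
    exact T.acyclic _ (hc.map hinj)
  have htree : G'.IsTree := ⟨hconn, hacyc⟩
  have hcard := htree.card_edgeFinset
  have hbij : G'.edgeFinset.card = T.edges.card := by
    refine Finset.card_bij (fun e _ => Sym2.map Subtype.val e) ?_ ?_ ?_
    · intro e he
      induction e using Sym2.ind with
      | _ a b =>
        rw [mem_edgeFinset, mem_edgeSet] at he
        show Sym2.map Subtype.val s(a, b) ∈ T.edges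
        rw [Sym2.map_pair_eq]
        exact he.2
    · intro e he e' he' hmap
      exact Sym2.map.injective Subtype.val_injective hmap
    · intro g hg
      induction g using Sym2.ind with
      | _ a b =>
        have ha : a ∈ T.verts := T.edge_verts _ hg a (by simp)
        have hb : b ∈ T.verts := T.edge_verts _ hg b (by simp)
        have hab : a ≠ b := fun h => T.not_diag _ hg (by simp [h])
        refine ⟨s(⟨a, ha⟩, ⟨b, hb⟩), ?_, by exact Sym2.map_pair_eq _ _ _⟩
        rw [mem_edgeFinset, mem_edgeSet]
        exact show T.graph.Adj a b from ⟨hab, hg⟩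
    -- done
  rw [← hbij, hcard]
  exact Fintype.card_of_subtype (p := fun x => x ∈ S) T.verts (fun x => Finset.mem_coe.symm)

lemma no_leaf_edge (T : PhyloTree) (hV : 3 ≤ T.verts.card) {a b : ℕ}
    (hab : s(a, b) ∈ T.edges) (ha : degOf T.edges a = 1) (hb : degOf T.edges b = 1) :
    False := by
  have haV : a ∈ T.verts := T.edge_verts _ hab a (by simp)
  have hbV : b ∈ T.verts := T.edge_verts _ hab b (by simp)
  have hne : a ≠ b := fun h => T.not_diag _ hab (by simp [h])
  have hex : ∃ c ∈ T.verts, c ≠ a ∧ c ≠ b := by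
    by_contra hcon
    push_neg at hcon
    have hsub : T.verts ⊆ {a, b} := by
      intro c hc
      rcases Classical.em (c = a) with rfl | h1
      · simp
      rcases hcon c hc h1 with rfl
      simp
    have := Finset.card_le_card hsub
    have : T.verts.card ≤ 2 := le_trans this (by
      apply le_trans (Finset.card_insert_le _ _)
      simp)
    omega
  obtain ⟨c, hcV, hca, hcb⟩ := hex
  obtain ⟨p0⟩ := T.conn a haV c hcV
  have hp : p0.bypass.IsPath := p0.bypass_isPath
  obtain ⟨z, hadj, p1, hpeq⟩ := Walk.exists_eq_cons_of_ne (Ne.symm hca) p0.bypass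
  rw [hpeq, Walk.cons_isPath_iff] at hp
  obtain ⟨hp1, hasup⟩ := hp
  -- unique edge at a forces z = b
  have huniq : ∀ g ∈ T.edges, a ∈ g → g = s(a, b) := by
    intro g hg hag
    have h1 : (T.edges.filter (fun g => a ∈ g)).card ≤ 1 := le_of_eq ha
    exact Finset.card_le_one.mp h1 g (Finset.mem_filter.mpr ⟨hg, hag⟩)
      s(a, b) (Finset.mem_filter.mpr ⟨hab, by simp⟩)
  have hz : z = b := by
    have := huniq s(a, z) hadj.2 (by simp)
    rw [Sym2.eq_iff] at this
    rcases this with ⟨-, h⟩ | ⟨h, -⟩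
    · exact h
    · exact absurd h (fun h' => T.not_diag _ hab (by simp [h']))
  subst hz
  -- now decompose p1 from z (the former b)
  obtain ⟨y, hadj2, p2, hpeq2⟩ := Walk.exists_eq_cons_of_ne (Ne.symm hcb) p1
  have huniqb : ∀ g ∈ T.edges, z ∈ g → g = s(a, z) := by
    intro g hg hbg
    have h1 : (T.edges.filter (fun g => z ∈ g)).card ≤ 1 := le_of_eq hb
    exact Finset.card_le_one.mp h1 g (Finset.mem_filter.mpr ⟨hg, hbg⟩)
      s(a, z) (Finset.mem_filter.mpr ⟨hab, by simp⟩)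
  have hy : y = a := by
    have h2 := huniqb s(z, y) hadj2.2 (by simp)
    rw [Sym2.eq_iff] at h2
    rcases h2 with ⟨h3, -⟩ | ⟨-, h3⟩
    · exact absurd h3 (fun h' => T.not_diag _ hab (by simp [h'.symm]))
    · exact h3
  -- a appears in p1's support
  apply hasup
  rw [hpeq2, Walk.support_cons]
  exact List.mem_cons_of_mem _ (hy ▸ p2.start_mem_support)

lemma interior_edges_card (T : PhyloTree) (hbin : T.IsBinary) (hn4 : 4 ≤ T.leaves.card) :
    T.interiorEdges.card + 3 = T.leaves.card := by
  classical
  set n := T.leaves.card with hn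
  set i := T.interiorVerts.card with hi
  have hpart : n + i = T.verts.card := by
    rw [hn, hi, leaves, interiorVerts]
    exact Finset.card_filter_add_card_filter_not _
  have hsum1 : ∑ v ∈ T.leaves, degOf T.edges v = n := by
    calc ∑ v ∈ T.leaves, degOf T.edges v = ∑ _v ∈ T.leaves, 1 :=
          Finset.sum_congr rfl (fun x hx => (Finset.mem_filter.mp hx).2)
      _ = n := by rw [Finset.sum_const, smul_eq_mul, mul_one]
  have hsum2 : ∑ v ∈ T.interiorVerts, degOf T.edges v = 3 * i := by
    calc ∑ v ∈ T.interiorVerts, degOf T.edges v = ∑ _v ∈ T.interiorVerts, 3 :=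
          Finset.sum_congr rfl (fun x hx => hbin x (Finset.mem_filter.mp hx).1
            (Finset.mem_filter.mp hx).2)
      _ = 3 * i := by rw [Finset.sum_const, smul_eq_mul, mul_comm]
  have hsplit : ∑ v ∈ T.leaves, degOf T.edges v + ∑ v ∈ T.interiorVerts, degOf T.edges v
      = ∑ v ∈ T.verts, degOf T.edges v := by
    rw [leaves, interiorVerts]
    exact Finset.sum_filter_add_sum_filter_not _ _ _
  have hhs := T.sum_deg
  have hec := T.edges_card
  -- n + 3i = 2 |E|, |E| + 1 = n + i
  have hE : 2 * T.edges.card = n + 3 * i := by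
    rw [← hhs, ← hsplit, hsum1, hsum2]
  -- leaf edges
  have hV3 : 3 ≤ T.verts.card := by
    have : T.leaves ⊆ T.verts := Finset.filter_subset _ _
    have := Finset.card_le_card this
    omega
  have hchoice : ∀ x ∈ T.leaves, ∃ g, g ∈ T.edges ∧ x ∈ g := by
    intro x hx
    have h1 : (T.edges.filter (fun g => x ∈ g)).card = 1 := (Finset.mem_filter.mp hx).2
    obtain ⟨g, hg⟩ := Finset.card_eq_one.mp h1
    have : g ∈ T.edges.filter (fun g => x ∈ g) := by rw [hg]; simp
    exact ⟨g, (Finset.mem_filter.mp this).1, (Finset.mem_filter.mp this).2⟩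
  choose φ hφ using hchoice
  have hLE : (T.edges.filter (fun g => ∃ x ∈ g, degOf T.edges x = 1)).card = n := by
    rw [hn]
    refine (Finset.card_bij (fun x hx => φ x hx) ?_ ?_ ?_).symm
    · intro x hx
      refine Finset.mem_filter.mpr ⟨(hφ x hx).1, x, (hφ x hx).2, (Finset.mem_filter.mp hx).2⟩
    · intro x hx y hy hxy
      by_contra hne
      have hxy' : φ x hx = φ y hy := hxy
      have hx1 := (Finset.mem_filter.mp hx).2
      have hy1 := (Finset.mem_filter.mp hy).2
      have hmem : φ x hx = s(x, y) := mem_both_eq (hφ x hx).2 (hxy' ▸ (hφ y hy).2) hne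
      exact T.no_leaf_edge hV3 (hmem ▸ (hφ x hx).1) hx1 hy1
    · intro g hg
      obtain ⟨hgE, x, hxg, hx1⟩ := Finset.mem_filter.mp hg
      have hxV : x ∈ T.verts := T.edge_verts _ hgE x hxg
      have hxL : x ∈ T.leaves := Finset.mem_filter.mpr ⟨hxV, hx1⟩
      refine ⟨x, hxL, ?_⟩
      have h1 : (T.edges.filter (fun g => x ∈ g)).card ≤ 1 := le_of_eq hx1
      exact (Finset.card_le_one.mp h1 g (Finset.mem_filter.mpr ⟨hgE, hxg⟩)
        (φ x hxL) (Finset.mem_filter.mpr ⟨(hφ x hxL).1, (hφ x hxL).2⟩)).symm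
  have hcompl : T.interiorEdges.card + n = T.edges.card := by
    rw [← hLE, interiorEdges]
    have heq : T.edges.filter (fun g => ∃ x ∈ g, degOf T.edges x = 1)
        = T.edges.filter (fun g => ¬ ∀ x ∈ g, degOf T.edges x ≠ 1) := by
      ext g
      simp only [Finset.mem_filter]
      constructor
      · rintro ⟨hg, x, hxg, hx1⟩
        exact ⟨hg, fun h => h x hxg hx1⟩
      · rintro ⟨hg, h⟩
        push_neg at h
        obtain ⟨x, hxg, hx1⟩ := h
        exact ⟨hg, x, hxg, hx1⟩
    rw [heq]
    exact Finset.card_filter_add_card_filter_not _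
  omega

end PhyloTree

/-- **Lemma 2, part 2.** If a set `Q` of quartets defines a phylogenetic tree `T`
with `|L(T)| = n`, then `|Q| ≥ n - 3`, and in case of equality every quartet in
`Q` distinguishes an interior edge of `T`. -/
theorem defines_card_lower_bound
    (Q : Finset PhyloTree) (hQ : ∀ q ∈ Q, IsQuartet q)
    (T : PhyloTree) (n : ℕ) (hn : T.leaves.card = n)
    (hdef : Defines Q T) :
    (n : ℤ) - 3 ≤ (Q.card : ℤ) ∧
    ((Q.card : ℤ) = (n : ℤ) - 3 →
      ∀ q ∈ Q, ∃ e ∈ T.interiorEdges, QuartetDistinguishes T q e) := by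
  obtain ⟨hleaves, hdisp, huniq⟩ := hdef
  by_cases hn4 : 4 ≤ n
  swap
  · constructor
    · omega
    · intro heq q hq
      exfalso
      have hQ0 : Q.card = 0 := by omega
      rw [Finset.card_eq_zero] at hQ0
      subst hQ0
      exact absurd hq (Finset.notMem_empty q)
  · -- main case : n ≥ 4
    have hVc : 4 ≤ T.verts.card := by
      have h1 : T.leaves.card ≤ T.verts.card :=
        Finset.card_le_card (Finset.filter_subset _ _)
      omega
    -- Step 1 : T is binary
    have hbin : T.IsBinary := by
      by_contra hnb
      obtain ⟨w, n1, n2, w', ⟨R⟩⟩ := exists_resolution T hnb (by omega)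
      have h1 : (T.resolve w n1 n2 w' R).leaves = leafSet Q := by
        rw [resolve_leaves R, hleaves]
      have h2 : ∀ q ∈ Q, (T.resolve w n1 n2 w' R).Displays q := by
        intro q hq
        obtain ⟨hsub, hdq⟩ := hdisp q hq
        exact ⟨by rw [resolve_leaves R]; exact hsub,
          fun a b c d h => resolve_displays R (hdq a b c d h)⟩
      have hcards := (huniq _ h1 h2).card_verts
      rw [resolve_verts_card R] at hcards
      omega
    -- Step 2 : every interior edge is distinguished by some quartet of Q
    have hdist : ∀ e ∈ T.interiorEdges, ∃ q ∈ Q, QuartetDistinguishes T q e := by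
      intro e
      induction e using Sym2.ind with
      | _ u v =>
        intro hi
        by_contra hcon
        push_neg at hcon
        have h1 : (T.contract u v hi).leaves = leafSet Q := by
          rw [contract_leaves hi, hleaves]
        have h2 : ∀ q ∈ Q, (T.contract u v hi).Displays q := by
          intro q hq
          obtain ⟨hsub, hdq⟩ := hdisp q hq
          refine ⟨by rw [contract_leaves hi]; exact hsub, fun a b c d h => ?_⟩
          refine contract_displays hi (hdq a b c d h) ?_
          intro hdistin
          exact hcon q hq ⟨a, b, c, d, h, hdistin⟩
        have hcards := (huniq _ h1 h2).card_verts
        rw [contract_verts_card hi] at hcards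
        omega
    -- Step 3 : counting
    have hEcard : T.interiorEdges.card + 3 = n := by
      rw [← hn]
      exact T.interior_edges_card hbin (by omega)
    choose ψ hψ1 hψ2 using hdist
    set ψ' : Sym2 ℕ → PhyloTree :=
      fun e => if h : e ∈ T.interiorEdges then ψ e h else T with hψ'
    have hkey : ∀ e (he : e ∈ T.interiorEdges), ψ' e = ψ e he := fun e he => dif_pos he
    have hψ'mem : ∀ e ∈ T.interiorEdges, ψ' e ∈ Q := by
      intro e he
      rw [hkey e he]
      exact hψ1 e he
    have hψ'dist : ∀ e (he : e ∈ T.interiorEdges), QuartetDistinguishes T (ψ' e) e := by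
      intro e he
      rw [hkey e he]
      exact hψ2 e he
    have hinj : Set.InjOn ψ' ↑T.interiorEdges := by
      intro e₁ h₁ e₂ h₂ heqψ
      rw [Finset.mem_coe] at h₁ h₂
      rw [hkey e₁ h₁, hkey e₂ h₂] at heqψ
      obtain ⟨a, b, c, d, hdq₁, hdist₁⟩ := hψ2 e₁ h₁
      obtain ⟨a', b', c', d', hdq₂, hdist₂⟩ := hψ2 e₂ h₂
      rw [heqψ] at hdq₁
      have hq4 : (ψ e₂ h₂).leaves.card = 4 := (hQ _ (hψ1 e₂ h₂)).2
      exact PhyloTree.distinguishes_unique hq4 hdq₁ hdq₂ hdist₁ hdist₂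
    have hcard_le : T.interiorEdges.card ≤ Q.card :=
      Finset.card_le_card_of_injOn ψ' hψ'mem hinj
    refine ⟨by omega, ?_⟩
    intro heq q hq
    have hQcard : Q.card = T.interiorEdges.card := by omega
    have himg : T.interiorEdges.image ψ' = Q := by
      apply Finset.eq_of_subset_of_card_le
      · intro q' hq'
        obtain ⟨e, he, rfl⟩ := Finset.mem_image.mp hq'
        exact hψ'mem e he
      · rw [Finset.card_image_of_injOn hinj, ← hQcard]
    rw [← himg] at hq
    obtain ⟨e, he, heq'⟩ := Finset.mem_image.mp hq
    exact ⟨e, he, heq' ▸ hψ'dist e he⟩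
end
end

section
/- Let T be a binary phylogenetic tree and let Q be an excess-free set of quartets displayed by T with L(Q) = L(T) such that every interior edge of T is distinguished by an element of Q. Then (Q, Exc(Q)) is a patchwork. -/
noncomputable section

attribute [local instance] Classical.propDecidable

/-- The excess of a set `Q` of quartets: `exc(Q) = |L(Q)| - 3 - |Q|`. -/
def excQ (Q : Finset PhyloTree) : ℤ := ((leafSet Q).card : ℤ) - 3 - (Q.card : ℤ)

/-- `Exc(Q) = {Q' ⊆ Q : exc(Q') = 0}`, the collection of excess-free subsets of `Q`. -/
def ExcSet (Q : Finset PhyloTree) : Set (Finset PhyloTree) :=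
  {Q' | Q' ⊆ Q ∧ excQ Q' = 0}

/-- `(Q, 𝒞)` is a patchwork: whenever `C1, C2 ∈ 𝒞` intersect, both `C1 ∩ C2`
and `C1 ∪ C2` belong to `𝒞`. -/
def IsPatchwork {α : Type*} [DecidableEq α] (𝒞 : Set (Finset α)) : Prop :=
  ∀ C1 ∈ 𝒞, ∀ C2 ∈ 𝒞, (C1 ∩ C2).Nonempty → C1 ∩ C2 ∈ 𝒞 ∧ C1 ∪ C2 ∈ 𝒞


namespace Aux
open SimpleGraph

def sym2Verts : Sym2 ℕ → Finset ℕ :=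
  Sym2.lift ⟨fun a b => {a, b}, by intro a b; simp [Finset.pair_comm]⟩

lemma mem_sym2Verts {v : ℕ} {e : Sym2 ℕ} : v ∈ sym2Verts e ↔ v ∈ e := by
  induction e using Sym2.ind with
  | _ a b => simp [sym2Verts, Sym2.mem_iff]

def vertsOf (E : Finset (Sym2 ℕ)) : Finset ℕ := E.biUnion sym2Verts

lemma mem_vertsOf {v : ℕ} {E : Finset (Sym2 ℕ)} :
    v ∈ vertsOf E ↔ ∃ e ∈ E, v ∈ e := by
  simp [vertsOf, mem_sym2Verts]

lemma adj_graphOfEdges {E : Finset (Sym2 ℕ)} {u v : ℕ} :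
    (graphOfEdges E).Adj u v ↔ u ≠ v ∧ s(u, v) ∈ E := Iff.rfl

lemma mem_E_of_mem_edgeSet {E : Finset (Sym2 ℕ)} {e : Sym2 ℕ}
    (h : e ∈ (graphOfEdges E).edgeSet) : e ∈ E := by
  induction e using Sym2.ind with
  | _ a b => exact h.2

lemma not_isDiag_of_mem_edgeSet {E : Finset (Sym2 ℕ)} {e : Sym2 ℕ}
    (h : e ∈ (graphOfEdges E).edgeSet) : ¬ e.IsDiag := by
  induction e using Sym2.ind with
  | _ a b => simpa [Sym2.isDiag_iff_proj_eq] using h.1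

lemma mem_edgeSet_graphOfEdges {E : Finset (Sym2 ℕ)} {e : Sym2 ℕ}
    (h1 : e ∈ E) (h2 : ¬ e.IsDiag) : e ∈ (graphOfEdges E).edgeSet := by
  induction e using Sym2.ind with
  | _ a b =>
    refine ⟨?_, h1⟩
    simpa [Sym2.isDiag_iff_proj_eq] using h2

lemma walk_edges_mem {E : Finset (Sym2 ℕ)} {u v : ℕ} (p : (graphOfEdges E).Walk u v)
    {e : Sym2 ℕ} (he : e ∈ p.edges) : e ∈ E :=
  mem_E_of_mem_edgeSet (p.edges_subset_edgeSet he)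

lemma mem_support_of_mem_edges {E : Finset (Sym2 ℕ)} {u v x : ℕ}
    (p : (graphOfEdges E).Walk u v) {e : Sym2 ℕ} (he : e ∈ p.edges) (hx : x ∈ e) :
    x ∈ p.support := by
  induction e using Sym2.ind with
  | _ a b =>
    rcases Sym2.mem_iff.1 hx with rfl | rfl
    · exact p.fst_mem_support_of_mem_edges he
    · exact p.snd_mem_support_of_mem_edges he

/-- Transfer a walk to the graph of a different edge set containing its edges. -/
def transferW {E E' : Finset (Sym2 ℕ)} {u v : ℕ} (p : (graphOfEdges E).Walk u v)
    (h : ∀ e ∈ p.edges, e ∈ E') : (graphOfEdges E').Walk u v :=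
  p.transfer (graphOfEdges E') (by
    intro e he
    exact mem_edgeSet_graphOfEdges (h e he)
      (not_isDiag_of_mem_edgeSet (p.edges_subset_edgeSet he)))

@[simp] lemma transferW_edges {E E' : Finset (Sym2 ℕ)} {u v : ℕ}
    (p : (graphOfEdges E).Walk u v) (h : ∀ e ∈ p.edges, e ∈ E') :
    (transferW p h).edges = p.edges := Walk.edges_transfer _ _

@[simp] lemma transferW_support {E E' : Finset (Sym2 ℕ)} {u v : ℕ}
    (p : (graphOfEdges E).Walk u v) (h : ∀ e ∈ p.edges, e ∈ E') :
    (transferW p h).support = p.support := Walk.support_transfer _ _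

lemma graphOfEdges_mono {E E' : Finset (Sym2 ℕ)} (h : E' ⊆ E) :
    graphOfEdges E' ≤ graphOfEdges E := by
  intro u v hadj
  exact ⟨hadj.1, h hadj.2⟩

lemma acyclic_mono {E E' : Finset (Sym2 ℕ)} (h : E' ⊆ E)
    (hac : (graphOfEdges E).IsAcyclic) : (graphOfEdges E').IsAcyclic := by
  intro v c hc
  exact hac (c.mapLe (graphOfEdges_mono h)) (hc.mapLe _)

end Aux

namespace Aux
open SimpleGraph

lemma sym2_eq_of_mem {x y : ℕ} {e : Sym2 ℕ} (hx : x ∈ e) (hy : y ∈ e) (hxy : x ≠ y) :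
    e = s(x, y) := by
  have := (Sym2.mem_and_mem_iff hxy).1 ⟨hx, hy⟩
  exact this.symm ▸ rfl

lemma card_sym2Verts {e : Sym2 ℕ} (h : ¬ e.IsDiag) : (sym2Verts e).card = 2 := by
  induction e using Sym2.ind with
  | _ a b =>
    rw [Sym2.isDiag_iff_proj_eq] at h
    simp only [sym2Verts, Sym2.lift_mk]
    rw [Finset.card_insert_of_notMem (by simpa using h), Finset.card_singleton]

lemma vertsOf_mono {E E' : Finset (Sym2 ℕ)} (h : E' ⊆ E) : vertsOf E' ⊆ vertsOf E := by
  intro v hv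
  rcases mem_vertsOf.1 hv with ⟨e, he, hve⟩
  exact mem_vertsOf.2 ⟨e, h he, hve⟩

lemma handshake (E : Finset (Sym2 ℕ)) (hd : ∀ e ∈ E, ¬ e.IsDiag) :
    ∑ v ∈ vertsOf E, degOf E v = 2 * E.card := by
  have key : ∀ v ∈ vertsOf E, degOf E v = ∑ e ∈ E, if v ∈ e then 1 else 0 := by
    intro v _
    unfold degOf
    exact Finset.card_filter _ _
  rw [Finset.sum_congr rfl key, Finset.sum_comm]
  rw [Finset.sum_congr rfl (g := fun _ => 2) ?_, Finset.sum_const, smul_eq_mul, mul_comm]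
  intro e he
  have h1 : ∑ v ∈ vertsOf E, (if v ∈ e then 1 else 0) = ((vertsOf E).filter (fun v => v ∈ e)).card :=
    (Finset.card_filter _ _).symm
  have h2 : (vertsOf E).filter (fun v => v ∈ e) = sym2Verts e := by
    ext v
    simp only [Finset.mem_filter, mem_sym2Verts, mem_vertsOf]
    exact ⟨fun h => h.2, fun h => ⟨⟨e, he, h⟩, h⟩⟩
  rw [h1, h2, card_sym2Verts (hd e he)]

lemma sym2_exists (e : Sym2 ℕ) : ∃ x y, e = s(x, y) := by
  obtain ⟨x, y⟩ := e
  exact ⟨x, y, rfl⟩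

lemma reach_of_mem_support {E : Finset (Sym2 ℕ)} {u v z : ℕ}
    (p : (graphOfEdges E).Walk u v) (hz : z ∈ p.support) :
    (graphOfEdges E).Reachable u z := ⟨p.takeUntil z hz⟩

lemma walk_reach_erase {E : Finset (Sym2 ℕ)} {x y u w : ℕ}
    (p : (graphOfEdges E).Walk u w) :
    (s(x, y) ∉ p.edges ∧ (graphOfEdges (E.erase s(x, y))).Reachable u w) ∨
    (graphOfEdges (E.erase s(x, y))).Reachable u x ∨
    (graphOfEdges (E.erase s(x, y))).Reachable u y := by
  induction p with
  | nil => exact Or.inl ⟨by simp, Reachable.refl _⟩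
  | cons h p ih =>
    rename_i a b c
    by_cases he : s(a, b) = s(x, y)
    · rcases Sym2.eq_iff.1 he with ⟨rfl, rfl⟩ | ⟨rfl, rfl⟩
      · exact Or.inr (Or.inl (Reachable.refl _))
      · exact Or.inr (Or.inr (Reachable.refl _))
    · have hadj : (graphOfEdges (E.erase s(x, y))).Adj a b :=
        ⟨h.1, Finset.mem_erase.2 ⟨he, h.2⟩⟩
      rcases ih with ⟨hne, hr⟩ | hr | hr
      · refine Or.inl ⟨?_, hadj.reachable.trans hr⟩
        simp only [Walk.edges_cons, List.mem_cons]
        rintro (hh | hh)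
        · exact he hh.symm
        · exact hne hh
      · exact Or.inr (Or.inl (hadj.reachable.trans hr))
      · exact Or.inr (Or.inr (hadj.reachable.trans hr))

lemma bridge_not_reach {E : Finset (Sym2 ℕ)} {x y : ℕ}
    (hac : (graphOfEdges E).IsAcyclic) (hxy : x ≠ y) (he : s(x, y) ∈ E) :
    ¬ (graphOfEdges (E.erase s(x, y))).Reachable x y := by
  intro ⟨q⟩
  have hadj : (graphOfEdges E).Adj x y := ⟨hxy, he⟩
  have hb := (isAcyclic_iff_forall_adj_isBridge.1 hac) hadj
  rw [isBridge_iff_adj_and_forall_walk_mem_edges] at hb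
  have hq : ∀ e ∈ q.edges, e ∈ E := fun e hqe =>
    Finset.mem_of_mem_erase (walk_edges_mem q hqe)
  have := hb (transferW q hq)
  rw [transferW_edges] at this
  have := walk_edges_mem q this
  exact (Finset.mem_erase.1 this).1 rfl

lemma forest_bound : ∀ E : Finset (Sym2 ℕ), (∀ e ∈ E, ¬ e.IsDiag) →
    (graphOfEdges E).IsAcyclic → E.Nonempty → E.card + 1 ≤ (vertsOf E).card := by
  intro E
  induction E using Finset.strongInduction with
  | _ E ih =>
    intro hd hac ⟨e, he⟩
    obtain ⟨xx, yy, rfl⟩ := sym2_exists e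
    have hxy : xx ≠ yy := by
      intro h; exact hd _ he (by simp [h, Sym2.isDiag_iff_proj_eq])
    set E₂ : Finset (Sym2 ℕ) := E.erase s(xx, yy) with hE₂
    set R : Set ℕ := {w | (graphOfEdges E₂).Reachable xx w} with hR
    set Ex : Finset (Sym2 ℕ) := E₂.filter (fun f => ∀ z ∈ f, z ∈ R) with hEx
    set Ey : Finset (Sym2 ℕ) := E₂.filter (fun f => ¬ ∀ z ∈ f, z ∈ R) with hEy
    have hE₂sub : E₂ ⊂ E := Finset.erase_ssubset he
    have hExsub : Ex ⊆ E₂ := Finset.filter_subset _ _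
    have hEysub : Ey ⊆ E₂ := Finset.filter_subset _ _
    have hcard2 : Ex.card + Ey.card = E₂.card := Finset.card_filter_add_card_filter_not _
    -- closure: all endpoints of an Ey edge avoid R
    have closure : ∀ f ∈ E₂, ∀ z ∈ f, z ∈ R → ∀ z' ∈ f, z' ∈ R := by
      intro f hf z hz hzR z' hz'
      by_cases hzz : z = z'
      · exact hzz ▸ hzR
      · have : f = s(z, z') := sym2_eq_of_mem hz hz' hzz
        have hadj : (graphOfEdges E₂).Adj z z' := ⟨hzz, this ▸ hf⟩
        exact hzR.trans hadj.reachable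
    have hEy_avoid : ∀ f ∈ Ey, ∀ z ∈ f, z ∉ R := by
      intro f hf z hz hzR
      rcases Finset.mem_filter.1 hf with ⟨hf2, hnall⟩
      exact hnall (closure f hf2 z hz hzR)
    have hVx : ∀ v ∈ vertsOf Ex, v ∈ R := by
      intro v hv
      rcases mem_vertsOf.1 hv with ⟨f, hf, hvf⟩
      exact (Finset.mem_filter.1 hf).2 v hvf
    have hVy : ∀ v ∈ vertsOf Ey, v ∉ R := by
      intro v hv
      rcases mem_vertsOf.1 hv with ⟨f, hf, hvf⟩
      exact hEy_avoid f hf v hvf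
    have hxR : xx ∈ R := Reachable.refl _
    have hyR : yy ∉ R := bridge_not_reach hac hxy he
    set A : Finset ℕ := insert xx (vertsOf Ex) with hA
    set B : Finset ℕ := insert yy (vertsOf Ey) with hB
    have hAR : ∀ v ∈ A, v ∈ R := by
      intro v hv
      rcases Finset.mem_insert.1 hv with rfl | hv
      · exact hxR
      · exact hVx v hv
    have hBR : ∀ v ∈ B, v ∉ R := by
      intro v hv
      rcases Finset.mem_insert.1 hv with rfl | hv
      · exact hyR
      · exact hVy v hv
    have hdisj : Disjoint A B := by
      rw [Finset.disjoint_left]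
      intro v hvA hvB
      exact hBR v hvB (hAR v hvA)
    have hsubV : A ∪ B ⊆ vertsOf E := by
      have hx' : xx ∈ vertsOf E := mem_vertsOf.2 ⟨s(xx, yy), he, by simp⟩
      have hy' : yy ∈ vertsOf E := mem_vertsOf.2 ⟨s(xx, yy), he, by simp⟩
      intro v hv
      rcases Finset.mem_union.1 hv with hv | hv
      · rcases Finset.mem_insert.1 hv with h | hv
        · exact h ▸ hx'
        · exact vertsOf_mono (hExsub.trans (Finset.erase_subset _ _)) hv
      · rcases Finset.mem_insert.1 hv with h | hv
        · exact h ▸ hy'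
        · exact vertsOf_mono (hEysub.trans (Finset.erase_subset _ _)) hv
    have hcx : Ex.card + 1 ≤ A.card := by
      rcases Finset.eq_empty_or_nonempty Ex with h | h
      · have h1 : 1 ≤ A.card := Finset.card_pos.2 ⟨xx, Finset.mem_insert_self _ _⟩
        have h2 : Ex.card = 0 := by rw [h]; rfl
        omega
      · calc Ex.card + 1 ≤ (vertsOf Ex).card :=
              ih Ex (lt_of_le_of_lt hExsub hE₂sub)
                (fun f hf => hd f (hExsub.trans (Finset.erase_subset _ _) hf))
                (acyclic_mono (hExsub.trans (Finset.erase_subset _ _)) hac) h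
          _ ≤ A.card := Finset.card_le_card (Finset.subset_insert _ _)
    have hcy : Ey.card + 1 ≤ B.card := by
      rcases Finset.eq_empty_or_nonempty Ey with h | h
      · have h1 : 1 ≤ B.card := Finset.card_pos.2 ⟨yy, Finset.mem_insert_self _ _⟩
        have h2 : Ey.card = 0 := by rw [h]; rfl
        omega
      · calc Ey.card + 1 ≤ (vertsOf Ey).card :=
              ih Ey (lt_of_le_of_lt hEysub hE₂sub)
                (fun f hf => hd f (hEysub.trans (Finset.erase_subset _ _) hf))
                (acyclic_mono (hEysub.trans (Finset.erase_subset _ _)) hac) h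
          _ ≤ B.card := Finset.card_le_card (Finset.subset_insert _ _)
    have hE2pos : E₂.card + 1 = E.card := by
      rw [hE₂, Finset.card_erase_of_mem he]
      have : 1 ≤ E.card := Finset.card_pos.2 ⟨_, he⟩
      omega
    calc E.card + 1 = (Ex.card + 1) + (Ey.card + 1) := by omega
      _ ≤ A.card + B.card := Nat.add_le_add hcx hcy
      _ = (A ∪ B).card := (Finset.card_union_of_disjoint hdisj).symm
      _ ≤ (vertsOf E).card := Finset.card_le_card hsubV

lemma reachable_empty_eq {u v : ℕ} (h : (graphOfEdges (∅ : Finset (Sym2 ℕ))).Reachable u v) :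
    u = v := by
  obtain ⟨p⟩ := h
  cases p with
  | nil => rfl
  | cons h p => exact absurd h.2 (by simp)

lemma tree_count : ∀ (E : Finset (Sym2 ℕ)) (W : Finset ℕ),
    (∀ e ∈ E, ¬ e.IsDiag) → (∀ e ∈ E, ∀ z ∈ e, z ∈ W) →
    (∀ u ∈ W, ∀ v ∈ W, (graphOfEdges E).Reachable u v) →
    (graphOfEdges E).IsAcyclic → W.Nonempty → E.card + 1 = W.card := by
  intro E
  induction E using Finset.strongInduction with
  | _ E ih =>
    intro W hd hew hconn hac hW
    rcases Finset.eq_empty_or_nonempty E with rfl | ⟨e, he⟩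
    · obtain ⟨w, hw⟩ := hW
      have : W = {w} := by
        apply Finset.eq_singleton_iff_unique_mem.2
        exact ⟨hw, fun v hv => reachable_empty_eq (hconn v hv w hw)⟩
      simp [this]
    · obtain ⟨xx, yy, rfl⟩ := sym2_exists e
      have hxy : xx ≠ yy := by
        intro h; exact hd _ he (by simp [h, Sym2.isDiag_iff_proj_eq])
      set E₂ : Finset (Sym2 ℕ) := E.erase s(xx, yy) with hE₂
      set R : Set ℕ := {w | (graphOfEdges E₂).Reachable xx w} with hR
      set Ex : Finset (Sym2 ℕ) := E₂.filter (fun f => ∀ z ∈ f, z ∈ R) with hEx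
      set Ey : Finset (Sym2 ℕ) := E₂.filter (fun f => ¬ ∀ z ∈ f, z ∈ R) with hEy
      set Wx : Finset ℕ := W.filter (fun v => v ∈ R) with hWx
      set Wy : Finset ℕ := W.filter (fun v => v ∉ R) with hWy
      have hE₂sub : E₂ ⊂ E := Finset.erase_ssubset he
      have hE₂sub' : E₂ ⊆ E := Finset.erase_subset _ _
      have hExsub : Ex ⊆ E₂ := Finset.filter_subset _ _
      have hEysub : Ey ⊆ E₂ := Finset.filter_subset _ _
      have closure : ∀ f ∈ E₂, ∀ z ∈ f, z ∈ R → ∀ z' ∈ f, z' ∈ R := by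
        intro f hf z hz hzR z' hz'
        by_cases hzz : z = z'
        · exact hzz ▸ hzR
        · exact hzR.trans (Adj.reachable ⟨hzz, (sym2_eq_of_mem hz hz' hzz) ▸ hf⟩)
      have hxR : xx ∈ R := Reachable.refl _
      have hyR : yy ∉ R := bridge_not_reach hac hxy he
      have hxW : xx ∈ W := hew _ he xx (by simp)
      have hyW : yy ∈ W := hew _ he yy (by simp)
      -- walks in E₂ starting in R stay in R
      have walkR : ∀ (u v : ℕ), u ∈ R → (graphOfEdges E₂).Reachable u v → v ∈ R := by
        intro u v hu hr
        exact Reachable.trans hu hr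
      -- membership of walk supports in R
      have supR : ∀ (u v : ℕ) (p : (graphOfEdges E₂).Walk u v), u ∈ R →
          ∀ z ∈ p.support, z ∈ R := by
        intro u v p hu z hz
        exact walkR u z hu (reach_of_mem_support p hz)
      -- connectivity on the x side
      have hconnx : ∀ u ∈ Wx, ∀ v ∈ Wx, (graphOfEdges Ex).Reachable u v := by
        intro u hu v hv
        have hu' : u ∈ R := (Finset.mem_filter.1 hu).2
        have hv' : v ∈ R := (Finset.mem_filter.1 hv).2
        obtain ⟨p⟩ := (Reachable.symm hu').trans hv'
        refine ⟨transferW p ?_⟩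
        intro f hf
        refine Finset.mem_filter.2 ⟨walk_edges_mem p hf, ?_⟩
        intro z hz
        exact supR u v p hu' z (mem_support_of_mem_edges p hf hz)
      -- connectivity on the y side
      have reach_y : ∀ u ∈ Wy, (graphOfEdges E₂).Reachable u yy := by
        intro u hu
        have huW : u ∈ W := (Finset.mem_filter.1 hu).2 |> fun _ => (Finset.mem_filter.1 hu).1
        have huR : u ∉ R := (Finset.mem_filter.1 hu).2
        obtain ⟨p⟩ := hconn u huW yy hyW
        rcases walk_reach_erase (x := xx) (y := yy) p with ⟨hne, hr⟩ | hr | hr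
        · exact hr
        · exact absurd (walkR xx u hxR hr.symm) huR
        · exact hr
      have hconny : ∀ u ∈ Wy, ∀ v ∈ Wy, (graphOfEdges Ey).Reachable u v := by
        intro u hu v hv
        have huR : u ∉ R := (Finset.mem_filter.1 hu).2
        obtain ⟨p⟩ := (reach_y u hu).trans (reach_y v hv).symm
        refine ⟨transferW p ?_⟩
        intro f hf
        refine Finset.mem_filter.2 ⟨walk_edges_mem p hf, ?_⟩
        intro hall
        obtain ⟨z1, z2, rfl⟩ := sym2_exists f
        have hz1R : z1 ∈ R := hall z1 (by simp)
        have hz1 : (graphOfEdges E₂).Reachable u z1 :=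
          reach_of_mem_support p (mem_support_of_mem_edges p hf (by simp))
        exact huR (hz1R.trans hz1.symm)
      have hEy_avoid : ∀ f ∈ Ey, ∀ z ∈ f, z ∉ R := by
        intro f hf z hz hzR
        exact (Finset.mem_filter.1 hf).2 (closure f (Finset.mem_filter.1 hf).1 z hz hzR)
      have hWxne : Wx.Nonempty := ⟨xx, Finset.mem_filter.2 ⟨hxW, hxR⟩⟩
      have hWyne : Wy.Nonempty := ⟨yy, Finset.mem_filter.2 ⟨hyW, hyR⟩⟩
      have hewx : ∀ f ∈ Ex, ∀ z ∈ f, z ∈ Wx := by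
        intro f hf z hz
        refine Finset.mem_filter.2 ⟨hew f (hE₂sub' (hExsub hf)) z hz, ?_⟩
        exact (Finset.mem_filter.1 hf).2 z hz
      have hewy : ∀ f ∈ Ey, ∀ z ∈ f, z ∈ Wy := by
        intro f hf z hz
        exact Finset.mem_filter.2 ⟨hew f (hE₂sub' (hEysub hf)) z hz, hEy_avoid f hf z hz⟩
      have ihx : Ex.card + 1 = Wx.card :=
        ih Ex (lt_of_le_of_lt hExsub hE₂sub)
          Wx (fun f hf => hd f (hE₂sub' (hExsub hf))) hewx hconnx
          (acyclic_mono (hExsub.trans hE₂sub') hac) hWxne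
      have ihy : Ey.card + 1 = Wy.card :=
        ih Ey (lt_of_le_of_lt hEysub hE₂sub)
          Wy (fun f hf => hd f (hE₂sub' (hEysub hf))) hewy hconny
          (acyclic_mono (hEysub.trans hE₂sub') hac) hWyne
      have hcard2 : Ex.card + Ey.card = E₂.card := Finset.card_filter_add_card_filter_not _
      have hcardW : Wx.card + Wy.card = W.card := Finset.card_filter_add_card_filter_not _
      have hE2c : E₂.card + 1 = E.card := by
        rw [hE₂, Finset.card_erase_of_mem he]
        have : 1 ≤ E.card := Finset.card_pos.2 ⟨_, he⟩
        omega
      omega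

lemma path_eq {E : Finset (Sym2 ℕ)} (hac : (graphOfEdges E).IsAcyclic) {u v : ℕ}
    {p q : (graphOfEdges E).Walk u v} (hp : p.IsPath) (hq : q.IsPath) : p = q := by
  have := hac.path_unique ⟨p, hp⟩ ⟨q, hq⟩
  exact congrArg Subtype.val this

lemma path_triangle {E : Finset (Sym2 ℕ)} (hac : (graphOfEdges E).IsAcyclic) {a b c : ℕ}
    {p : (graphOfEdges E).Walk a b} {q : (graphOfEdges E).Walk b c}
    {r : (graphOfEdges E).Walk a c} (hr : r.IsPath) :
    ∀ e ∈ r.edges, e ∈ p.edges ∨ e ∈ q.edges := by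
  intro e he
  have h1 : r = (p.append q).bypass := path_eq hac hr (Walk.bypass_isPath _)
  have h2 : e ∈ (p.append q).edges := Walk.edges_bypass_subset _ (h1 ▸ he)
  rw [Walk.edges_append, List.mem_append] at h2
  exact h2

lemma reverse_path_edges {E : Finset (Sym2 ℕ)} (hac : (graphOfEdges E).IsAcyclic) {a b : ℕ}
    {p : (graphOfEdges E).Walk a b} {q : (graphOfEdges E).Walk b a}
    (hp : p.IsPath) (hq : q.IsPath) : ∀ e, e ∈ p.edges ↔ e ∈ q.edges := by
  intro e
  have : q = p.reverse := path_eq hac hq hp.reverse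
  rw [this, Walk.edges_reverse, List.mem_reverse]

lemma two_edges_at_interior {E : Finset (Sym2 ℕ)} {u v x : ℕ}
    (p : (graphOfEdges E).Walk u v) (hp : p.IsPath) (hx : x ∈ p.support)
    (hxu : x ≠ u) (hxv : x ≠ v) :
    ∃ f₁ f₂ : Sym2 ℕ, f₁ ≠ f₂ ∧ f₁ ∈ p.edges ∧ f₂ ∈ p.edges ∧ x ∈ f₁ ∧ x ∈ f₂ := by
  set q1 := p.takeUntil x hx with hq1
  set q2 := p.dropUntil x hx with hq2
  have hspec : q1.append q2 = p := p.take_spec hx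
  have hq1p : q1.IsPath := hp.takeUntil hx
  have hq2p : q2.IsPath := hp.dropUntil hx
  have hnodup : (q1.support ++ q2.support.tail).Nodup := by
    have := hp.support_nodup
    rw [← hspec, Walk.support_append] at this
    exact this
  -- q2 is not nil
  cases hq2c : q2 with
  | nil => exact absurd rfl hxv
  | cons hadj2 q2' =>
    rename_i w2
    -- q1 reversed is not nil
    cases hq1c : q1.reverse with
    | nil => exact absurd rfl hxu
    | cons hadj1 q1' =>
      rename_i w1
      refine ⟨s(x, w1), s(x, w2), ?_, ?_, ?_, by simp, by simp⟩
      · -- distinctness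
        intro hcontra
        have hw1 : w1 = w2 := by
          rcases Sym2.eq_iff.1 hcontra with ⟨_, h⟩ | ⟨h1, h2⟩
          · exact h
          · exact h2.trans h1
        -- w1 ∈ q1.support, w2 ∈ q2.support.tail, contradiction with nodup
        have hw1s : w1 ∈ q1.support := by
          have : w1 ∈ q1.reverse.support := by rw [hq1c]; simp [Walk.support_cons]
          rwa [Walk.support_reverse, List.mem_reverse] at this
        have hw2s : w2 ∈ q2.support.tail := by
          rw [hq2c]; simp [Walk.support_cons]
        rw [List.nodup_append] at hnodup
        exact hnodup.2.2 w1 hw1s w2 hw2s hw1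
      · -- s(x, w1) ∈ p.edges
        have : s(x, w1) ∈ q1.reverse.edges := by rw [hq1c]; simp [Walk.edges_cons]
        rw [Walk.edges_reverse, List.mem_reverse] at this
        rw [← hspec, Walk.edges_append, List.mem_append]
        exact Or.inl this
      · have : s(x, w2) ∈ q2.edges := by rw [hq2c]; simp [Walk.edges_cons]
        rw [← hspec, Walk.edges_append, List.mem_append]
        exact Or.inr this

end Aux

namespace Aux
open SimpleGraph

lemma graph_eq (T : PhyloTree) : T.graph = graphOfEdges T.edges := rfl

/-- `e` lies on the (unique) path from `x` to `y` in `T`. -/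
def onPath (T : PhyloTree) (x y : ℕ) (e : Sym2 ℕ) : Prop :=
  ∃ p : (graphOfEdges T.edges).Walk x y, p.IsPath ∧ e ∈ p.edges

lemma onPath_symm {T : PhyloTree} {x y : ℕ} {e : Sym2 ℕ} (h : onPath T x y e) :
    onPath T y x e := by
  obtain ⟨p, hp, he⟩ := h
  exact ⟨p.reverse, hp.reverse, by rwa [Walk.edges_reverse, List.mem_reverse]⟩

lemma exists_path (T : PhyloTree) {x y : ℕ} (hx : x ∈ T.verts) (hy : y ∈ T.verts) :
    ∃ p : (graphOfEdges T.edges).Walk x y, p.IsPath := by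
  obtain ⟨w⟩ := T.conn x hx y hy
  exact ⟨w.bypass, Walk.bypass_isPath w⟩

lemma onPath_triangle {T : PhyloTree} {x y z : ℕ} {e : Sym2 ℕ}
    (hx : x ∈ T.verts) (hy : y ∈ T.verts) (hz : z ∈ T.verts)
    (h : onPath T x z e) : onPath T x y e ∨ onPath T y z e := by
  obtain ⟨r, hr, he⟩ := h
  obtain ⟨p, hp⟩ := exists_path T hx hy
  obtain ⟨q, hq⟩ := exists_path T hy hz
  rcases path_triangle (p := p) (q := q) T.acyclic hr e he with h | h
  · exact Or.inl ⟨p, hp, h⟩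
  · exact Or.inr ⟨q, hq, h⟩

lemma leaves_subset_verts (T : PhyloTree) : T.leaves ⊆ T.verts :=
  Finset.filter_subset _ _

lemma onPath_not_both {T : PhyloTree} {a b c d : ℕ} {e : Sym2 ℕ}
    (hT : T.DisplaysQuartet a b c d) :
    ¬ (onPath T a b e ∧ onPath T c d e) := by
  rintro ⟨⟨p, hp, hep⟩, ⟨q, hq, heq⟩⟩
  obtain ⟨_, _, _, _, _, _, pab, pcd, hpab, hpcd, hdisj⟩ := hT
  have h1 : p = pab := path_eq T.acyclic hp hpab
  have h2 : q = pcd := path_eq T.acyclic hq hpcd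
  obtain ⟨z1, z2, rfl⟩ := sym2_exists e
  have hz1p : z1 ∈ pab.support := h1 ▸ mem_support_of_mem_edges p hep (by simp)
  have hz1q : z1 ∈ pcd.support := h2 ▸ mem_support_of_mem_edges q heq (by simp)
  exact hdisj hz1p hz1q

lemma pairing_logic (P : ℕ → ℕ → Prop) (hsymm : ∀ x y, P x y → P y x)
    (a b c d a2 b2 c2 d2 : ℕ)
    (hne : a2 ≠ b2 ∧ a2 ≠ c2 ∧ a2 ≠ d2 ∧ b2 ≠ c2 ∧ b2 ≠ d2 ∧ c2 ≠ d2)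
    (hset : ∀ x : ℕ, (x = a2 ∨ x = b2 ∨ x = c2 ∨ x = d2) ↔ (x = a ∨ x = b ∨ x = c ∨ x = d))
    (hP : P a2 c2 ∧ P b2 d2) :
    (P a c ∧ P b d) ∨ (P a d ∧ P b c) ∨ (P a b ∧ P c d) := by
  obtain ⟨h1, h2⟩ := hP
  have h1' := hsymm _ _ h1
  have h2' := hsymm _ _ h2
  have ha := (hset a2).1 (Or.inl rfl)
  have hb := (hset b2).1 (Or.inr (Or.inl rfl))
  have hc := (hset c2).1 (Or.inr (Or.inr (Or.inl rfl)))
  have hd := (hset d2).1 (Or.inr (Or.inr (Or.inr rfl)))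
  obtain ⟨n1, n2, n3, n4, n5, n6⟩ := hne
  rcases ha with rfl|rfl|rfl|rfl <;> rcases hb with rfl|rfl|rfl|rfl <;>
    rcases hc with rfl|rfl|rfl|rfl <;> rcases hd with rfl|rfl|rfl|rfl <;>
    first
      | (exact absurd rfl n1) | (exact absurd rfl n2) | (exact absurd rfl n3)
      | (exact absurd rfl n4) | (exact absurd rfl n5) | (exact absurd rfl n6)
      | tauto

lemma mid_of_pairs {T : PhyloTree} {a b c d : ℕ} {e : Sym2 ℕ}
    (hT : T.DisplaysQuartet a b c d)
    (hP : (onPath T a c e ∧ onPath T b d e) ∨ (onPath T a d e ∧ onPath T b c e) ∨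
      (onPath T a b e ∧ onPath T c d e)) :
    onPath T a c e ∧ onPath T b d e := by
  obtain ⟨ha, hb, hc, hd, -, -, -⟩ := id hT
  have ha' := leaves_subset_verts T ha
  have hb' := leaves_subset_verts T hb
  have hc' := leaves_subset_verts T hc
  have hd' := leaves_subset_verts T hd
  have hdisj := onPath_not_both (e := e) hT
  rcases hP with h | h | h
  · exact h
  · obtain ⟨had, hbc⟩ := h
    constructor
    · by_contra hac
      have h1 : onPath T c d e := by
        rcases onPath_triangle (y := c) ha' hc' hd' had with h | h
        · exact absurd h hac
        · exact h
      have h2 : onPath T a b e := by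
        rcases onPath_triangle (y := a) hb' ha' hc' hbc with h | h
        · exact onPath_symm h
        · exact absurd h (fun hh => hac hh)
      exact hdisj ⟨h2, h1⟩
    · by_contra hbd
      have h1 : onPath T a b e := by
        rcases onPath_triangle (y := b) ha' hb' hd' had with h | h
        · exact h
        · exact absurd h hbd
      have h2 : onPath T c d e := by
        rcases onPath_triangle (y := d) hb' hd' hc' hbc with h | h
        · exact absurd h hbd
        · exact onPath_symm h
      exact hdisj ⟨h1, h2⟩
  · exact absurd h hdisj

lemma displays_distinct {q : PhyloTree} {a b c d : ℕ} (h : q.DisplaysQuartet a b c d) :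
    a ≠ b ∧ a ≠ c ∧ a ≠ d ∧ b ≠ c ∧ b ≠ d ∧ c ≠ d := by
  obtain ⟨_, _, _, _, hab, hcd, p, r, hp, hr, hdisj⟩ := h
  have hap : a ∈ p.support := Walk.start_mem_support p
  have hbp : b ∈ p.support := Walk.end_mem_support p
  have hcr : c ∈ r.support := Walk.start_mem_support r
  have hdr : d ∈ r.support := Walk.end_mem_support r
  refine ⟨hab, ?_, ?_, ?_, ?_, hcd⟩ <;> intro hh <;> subst hh
  · exact hdisj hap hcr
  · exact hdisj hap hdr
  · exact hdisj hbp hcr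
  · exact hdisj hbp hdr

lemma displays_leaves_eq {q : PhyloTree} (hq4 : q.leaves.card = 4) {a b c d : ℕ}
    (h : q.DisplaysQuartet a b c d) : ({a, b, c, d} : Finset ℕ) = q.leaves := by
  obtain ⟨n1, n2, n3, n4, n5, n6⟩ := displays_distinct h
  obtain ⟨ha, hb, hc, hd, -, -, -⟩ := id h
  apply Finset.eq_of_subset_of_card_le
  · intro x hx
    simp only [Finset.mem_insert, Finset.mem_singleton] at hx
    rcases hx with rfl | rfl | rfl | rfl <;> assumption
  · rw [hq4]
    rw [Finset.card_insert_of_notMem (by simp [n1, n2, n3]),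
      Finset.card_insert_of_notMem (by simp [n4, n5]),
      Finset.card_insert_of_notMem (by simp [n6]), Finset.card_singleton]

lemma quartet_dist_unique (T : PhyloTree) {q : PhyloTree} (hq4 : q.leaves.card = 4)
    {e1 e2 : Sym2 ℕ} (h1 : QuartetDistinguishes T q e1) (h2 : QuartetDistinguishes T q e2) :
    e1 = e2 := by
  obtain ⟨a, b, c, d, hq1, hT1, p1, r1, hp1, hr1, hint1⟩ := h1
  obtain ⟨a2, b2, c2, d2, hq2, hT2, p2, r2, hp2, hr2, hint2⟩ := h2
  have he2p : e2 ∈ p2.edges ∧ e2 ∈ r2.edges := by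
    have : e2 ∈ p2.edges.toFinset ∩ r2.edges.toFinset := by rw [hint2]; simp
    simp only [Finset.mem_inter, List.mem_toFinset] at this
    exact this
  have hset : ∀ x : ℕ, (x = a2 ∨ x = b2 ∨ x = c2 ∨ x = d2) ↔ (x = a ∨ x = b ∨ x = c ∨ x = d) := by
    have e1s := displays_leaves_eq hq4 hq1
    have e2s := displays_leaves_eq hq4 hq2
    intro x
    have := Finset.ext_iff.1 (e2s.trans e1s.symm) x
    simpa using this
  have hP : (onPath T a c e2 ∧ onPath T b d e2) ∨ (onPath T a d e2 ∧ onPath T b c e2) ∨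
      (onPath T a b e2 ∧ onPath T c d e2) := by
    apply pairing_logic (fun x y => onPath T x y e2) (fun x y h => onPath_symm h)
      a b c d a2 b2 c2 d2 (displays_distinct hq2) hset
    exact ⟨⟨p2, hp2, he2p.1⟩, ⟨r2, hr2, he2p.2⟩⟩
  obtain ⟨⟨pp, hpp, hepp⟩, ⟨rr, hrr, herr⟩⟩ := mid_of_pairs hT1 hP
  have hp1' : pp = p1 := path_eq T.acyclic hpp hp1
  have hr1' : rr = r1 := path_eq T.acyclic hrr hr1
  have : e2 ∈ p1.edges.toFinset ∩ r1.edges.toFinset := by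
    simp only [Finset.mem_inter, List.mem_toFinset]
    exact ⟨hp1' ▸ hepp, hr1' ▸ herr⟩
  rw [hint1] at this
  have := Finset.mem_singleton.1 this
  exact this.symm

end Aux

namespace Aux
open SimpleGraph

/-- The edge set of the unique path between `s` and `t` in `T` (empty if none exists). -/
def pathEdges (T : PhyloTree) (s t : ℕ) : Finset (Sym2 ℕ) :=
  if h : ∃ p : (graphOfEdges T.edges).Walk s t, p.IsPath then h.choose.edges.toFinset else ∅

lemma pathEdges_eq {T : PhyloTree} {s t : ℕ} (p : (graphOfEdges T.edges).Walk s t)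
    (hp : p.IsPath) : pathEdges T s t = p.edges.toFinset := by
  have hex : ∃ p : (graphOfEdges T.edges).Walk s t, p.IsPath := ⟨p, hp⟩
  rw [pathEdges, dif_pos hex]
  rw [path_eq T.acyclic hex.choose_spec hp]

lemma pathEdges_subset {T : PhyloTree} {s t : ℕ} {e : Sym2 ℕ}
    (he : e ∈ pathEdges T s t) : e ∈ T.edges := by
  rw [pathEdges] at he
  split_ifs at he with h
  · exact walk_edges_mem h.choose (List.mem_toFinset.1 he)
  · simp at he

lemma steiner (T : PhyloTree) (S : Finset ℕ) (hS : S ⊆ T.leaves)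
    (E' : Finset (Sym2 ℕ)) (hne : E'.Nonempty) (hEi : E' ⊆ T.interiorEdges)
    (hwit : ∀ e ∈ E', ∃ a b c d : ℕ, a ∈ S ∧ b ∈ S ∧ c ∈ S ∧ d ∈ S ∧
      Distinguishes T a b c d e) :
    E'.card + 3 ≤ S.card := by
  classical
  set F : Finset (Sym2 ℕ) := S.biUnion (fun s => S.biUnion (fun t => pathEdges T s t)) with hF
  have memF : ∀ {e : Sym2 ℕ}, e ∈ F ↔ ∃ s ∈ S, ∃ t ∈ S, e ∈ pathEdges T s t := by
    intro e
    simp [hF, Finset.mem_biUnion]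
  have hFT : F ⊆ T.edges := by
    intro e he
    obtain ⟨s, _, t, _, he⟩ := memF.1 he
    exact pathEdges_subset he
  have hFd : ∀ e ∈ F, ¬ e.IsDiag := fun e he => T.not_diag e (hFT he)
  have hFac : (graphOfEdges F).IsAcyclic := acyclic_mono hFT T.acyclic
  -- path edges between S-points are in F
  have pathF : ∀ {s t : ℕ}, s ∈ S → t ∈ S → ∀ (p : (graphOfEdges T.edges).Walk s t),
      p.IsPath → ∀ e ∈ p.edges, e ∈ F := by
    intro s t hs ht p hp e he
    exact memF.2 ⟨s, hs, t, ht, (pathEdges_eq p hp) ▸ List.mem_toFinset.2 he⟩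
  -- witnesses: E' edges are in F, and their endpoints have F-degree ≥ 3
  have hkey : ∀ e ∈ E', e ∈ F ∧ ∀ u ∈ e, 3 ≤ degOf F u := by
    intro e heE
    obtain ⟨a, b, c, d, ha, hb, hc, hd, hdist⟩ := hwit e heE
    obtain ⟨hTq, p, r, hp, hr, hint⟩ := hdist
    have heint : e ∈ p.edges.toFinset ∩ r.edges.toFinset := by rw [hint]; simp
    have hep : e ∈ p.edges := List.mem_toFinset.1 (Finset.mem_inter.1 heint).1
    have her : e ∈ r.edges := List.mem_toFinset.1 (Finset.mem_inter.1 heint).2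
    have hepF : e ∈ F := pathF ha hc p hp e hep
    refine ⟨hepF, ?_⟩
    intro u hu
    -- u is an interior vertex of T, hence not a leaf
    have heI : e ∈ T.interiorEdges := hEi heE
    have hudeg : degOf T.edges u ≠ 1 := (Finset.mem_filter.1 heI).2 u hu
    have hua : u ≠ a := by
      intro h; exact hudeg (h ▸ (Finset.mem_filter.1 (hS ha)).2)
    have huc : u ≠ c := by
      intro h; exact hudeg (h ▸ (Finset.mem_filter.1 (hS hc)).2)
    have hub : u ≠ b := by
      intro h; exact hudeg (h ▸ (Finset.mem_filter.1 (hS hb)).2)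
    have hud : u ≠ d := by
      intro h; exact hudeg (h ▸ (Finset.mem_filter.1 (hS hd)).2)
    have hup : u ∈ p.support := mem_support_of_mem_edges p hep hu
    have hur : u ∈ r.support := mem_support_of_mem_edges r her hu
    obtain ⟨f₁, f₂, h12, hf₁, hf₂, hu₁, hu₂⟩ := two_edges_at_interior p hp hup hua huc
    obtain ⟨g₁, g₂, hg12, hg₁, hg₂, hv₁, hv₂⟩ := two_edges_at_interior r hr hur hub hud
    -- pick an edge of p at u different from e, same for r
    obtain ⟨fp, hfpe, hfp, hufp⟩ : ∃ f, f ≠ e ∧ f ∈ p.edges ∧ u ∈ f := by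
      by_cases h : f₁ = e
      · exact ⟨f₂, fun hh => h12 (h.trans hh.symm), hf₂, hu₂⟩
      · exact ⟨f₁, h, hf₁, hu₁⟩
    obtain ⟨fr, hfre, hfr, hufr⟩ : ∃ f, f ≠ e ∧ f ∈ r.edges ∧ u ∈ f := by
      by_cases h : g₁ = e
      · exact ⟨g₂, fun hh => hg12 (h.trans hh.symm), hg₂, hv₂⟩
      · exact ⟨g₁, h, hg₁, hv₁⟩
    have hfpfr : fp ≠ fr := by
      intro hh
      have : fp ∈ p.edges.toFinset ∩ r.edges.toFinset :=
        Finset.mem_inter.2 ⟨List.mem_toFinset.2 hfp, List.mem_toFinset.2 (hh ▸ hfr)⟩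
      rw [hint] at this
      exact hfpe (Finset.mem_singleton.1 this)
    -- the three distinct edges e, fp, fr are in F and contain u
    have hsub : ({e, fp, fr} : Finset (Sym2 ℕ)) ⊆ F.filter (fun f => u ∈ f) := by
      intro f hf
      simp only [Finset.mem_insert, Finset.mem_singleton] at hf
      rcases hf with rfl | rfl | rfl
      · exact Finset.mem_filter.2 ⟨hepF, hu⟩
      · exact Finset.mem_filter.2 ⟨pathF ha hc p hp _ hfp, hufp⟩
      · exact Finset.mem_filter.2 ⟨pathF hb hd r hr _ hfr, hufr⟩
    have hcard3 : ({e, fp, fr} : Finset (Sym2 ℕ)).card = 3 := by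
      rw [Finset.card_insert_of_notMem (by simp [Ne.symm hfpe, Ne.symm hfre]),
        Finset.card_insert_of_notMem (by simp [hfpfr]), Finset.card_singleton]
    calc 3 = ({e, fp, fr} : Finset (Sym2 ℕ)).card := hcard3.symm
      _ ≤ (F.filter (fun f => u ∈ f)).card := Finset.card_le_card hsub
  have hE'F : E' ⊆ F := fun e he => (hkey e he).1
  have hFne : F.Nonempty := hne.mono hE'F
  -- every vertex of F has degree ≥ 1
  set VF : Finset ℕ := vertsOf F with hVF
  have hdeg1 : ∀ v ∈ VF, 1 ≤ degOf F v := by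
    intro v hv
    obtain ⟨f, hf, hvf⟩ := mem_vertsOf.1 hv
    exact Finset.card_pos.2 ⟨f, Finset.mem_filter.2 ⟨hf, hvf⟩⟩
  -- degree-1 vertices of F are in S
  have hL1S : ∀ v ∈ VF, degOf F v = 1 → v ∈ S := by
    intro v hv hdv
    obtain ⟨f, hf, hvf⟩ := mem_vertsOf.1 hv
    obtain ⟨s, hs, t, ht, hfst⟩ := memF.1 hf
    rw [pathEdges] at hfst
    split_ifs at hfst with hex
    · set p := hex.choose with hpdef
      have hp : p.IsPath := hex.choose_spec
      have hfp : f ∈ p.edges := List.mem_toFinset.1 hfst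
      have hvsup : v ∈ p.support := mem_support_of_mem_edges p hfp hvf
      by_cases hvs : v = s
      · exact hvs ▸ hs
      by_cases hvt : v = t
      · exact hvt ▸ ht
      exfalso
      obtain ⟨f₁, f₂, h12, hf₁, hf₂, hu₁, hu₂⟩ := two_edges_at_interior p hp hvsup hvs hvt
      have hsub : ({f₁, f₂} : Finset (Sym2 ℕ)) ⊆ F.filter (fun g => v ∈ g) := by
        intro g hg
        simp only [Finset.mem_insert, Finset.mem_singleton] at hg
        rcases hg with rfl | rfl
        · exact Finset.mem_filter.2 ⟨pathF hs ht p hp _ hf₁, hu₁⟩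
        · exact Finset.mem_filter.2 ⟨pathF hs ht p hp _ hf₂, hu₂⟩
      have : 2 ≤ degOf F v := by
        calc 2 = ({f₁, f₂} : Finset (Sym2 ℕ)).card := by
              rw [Finset.card_insert_of_notMem (by simp [h12]), Finset.card_singleton]
          _ ≤ _ := Finset.card_le_card hsub
      omega
    · simp at hfst
  -- partition VF by degree
  set L1 : Finset ℕ := VF.filter (fun v => degOf F v = 1) with hL1
  set Vg : Finset ℕ := VF.filter (fun v => ¬ degOf F v = 1) with hVg
  set V2 : Finset ℕ := Vg.filter (fun v => degOf F v = 2) with hV2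
  set I3 : Finset ℕ := Vg.filter (fun v => ¬ degOf F v = 2) with hI3
  have hcardVF : L1.card + (V2.card + I3.card) = VF.card := by
    rw [hV2, hI3, Finset.card_filter_add_card_filter_not, hL1, hVg,
      Finset.card_filter_add_card_filter_not]
  have hsumdeg : ∑ v ∈ VF, degOf F v = 2 * F.card := handshake F hFd
  have hsum_split : ∑ v ∈ VF, degOf F v =
      ∑ v ∈ L1, degOf F v + (∑ v ∈ V2, degOf F v + ∑ v ∈ I3, degOf F v) := by
    rw [hV2, hI3, Finset.sum_filter_add_sum_filter_not, hL1, hVg,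
      Finset.sum_filter_add_sum_filter_not]
  have hsumL1 : ∑ v ∈ L1, degOf F v = L1.card := by
    rw [Finset.sum_congr rfl (fun v hv => (Finset.mem_filter.1 hv).2), Finset.sum_const,
      smul_eq_mul, mul_one]
  have hsumV2 : ∑ v ∈ V2, degOf F v = 2 * V2.card := by
    rw [Finset.sum_congr rfl (fun v hv => (Finset.mem_filter.1 hv).2), Finset.sum_const,
      smul_eq_mul, mul_comm]
  have hsumI3 : 3 * I3.card ≤ ∑ v ∈ I3, degOf F v := by
    rw [mul_comm, ← smul_eq_mul, ← Finset.sum_const]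
    apply Finset.sum_le_sum
    intro v hv
    have h1 : v ∈ VF := (Finset.mem_filter.1 ((Finset.mem_filter.1 hv).1)).1
    have h2 : degOf F v ≠ 1 := (Finset.mem_filter.1 ((Finset.mem_filter.1 hv).1)).2
    have h3 : degOf F v ≠ 2 := (Finset.mem_filter.1 hv).2
    have := hdeg1 v h1
    omega
  have hforest : F.card + 1 ≤ VF.card := forest_bound F hFd hFac hFne
  -- I3 bound via handshake
  have hI3bound : I3.card + 2 ≤ L1.card := by
    have h1 : L1.card + (2 * V2.card + 3 * I3.card) ≤ 2 * F.card := by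
      rw [← hsumdeg, hsum_split, hsumL1, hsumV2]; omega
    omega
  -- edges with both endpoints in I3 form a forest on I3
  set I3E : Finset (Sym2 ℕ) := F.filter (fun f => ∀ z ∈ f, z ∈ I3) with hI3E
  have hE'I3 : E' ⊆ I3E := by
    intro e he
    refine Finset.mem_filter.2 ⟨hE'F he, ?_⟩
    intro z hz
    have h3 := (hkey e he).2 z hz
    have hzVF : z ∈ VF := mem_vertsOf.2 ⟨e, hE'F he, hz⟩
    refine Finset.mem_filter.2 ⟨Finset.mem_filter.2 ⟨hzVF, by omega⟩, by omega⟩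
  have hI3Esub : I3E ⊆ F := Finset.filter_subset _ _
  have hI3Ene : I3E.Nonempty := hne.mono hE'I3
  have hI3Eforest : I3E.card + 1 ≤ (vertsOf I3E).card :=
    forest_bound I3E (fun e he => hFd e (hI3Esub he))
      (acyclic_mono hI3Esub hFac) hI3Ene
  have hVI3E : vertsOf I3E ⊆ I3 := by
    intro v hv
    obtain ⟨f, hf, hvf⟩ := mem_vertsOf.1 hv
    exact (Finset.mem_filter.1 hf).2 v hvf
  have hchain : E'.card + 1 ≤ I3.card :=
    le_trans (by exact Nat.add_le_add_right (Finset.card_le_card hE'I3) 1)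
      (le_trans hI3Eforest (Finset.card_le_card hVI3E))
  have hL1Scard : L1.card ≤ S.card := by
    apply Finset.card_le_card
    intro v hv
    exact hL1S v (Finset.mem_filter.1 hv).1 (Finset.mem_filter.1 hv).2
  omega

end Aux

namespace Aux
open SimpleGraph

lemma unique_edge_of_deg_one {E : Finset (Sym2 ℕ)} {x : ℕ} (h : degOf E x = 1)
    {e f : Sym2 ℕ} (he : e ∈ E) (hxe : x ∈ e) (hf : f ∈ E) (hxf : x ∈ f) : e = f := by
  have := Finset.card_le_one.1 (le_of_eq h)
  exact this e (Finset.mem_filter.2 ⟨he, hxe⟩) f (Finset.mem_filter.2 ⟨hf, hxf⟩)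

lemma deg_pos_of_binary (T : PhyloTree) (hbin : T.IsBinary) {v : ℕ} (hv : v ∈ T.verts) :
    degOf T.edges v = 1 ∨ degOf T.edges v = 3 := by
  by_cases h : degOf T.edges v = 1
  · exact Or.inl h
  · exact Or.inr (hbin v hv h)

lemma no_leaf_leaf_edge (T : PhyloTree) (h3 : 3 ≤ T.leaves.card) {x y : ℕ}
    (he : s(x, y) ∈ T.edges) (hx : degOf T.edges x = 1) (hy : degOf T.edges y = 1) :
    False := by
  have hxy : x ≠ y := by
    intro h
    exact T.not_diag _ he (by simp [h, Sym2.isDiag_iff_proj_eq])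
  -- a third leaf
  obtain ⟨w, hwL, hwxy⟩ : ∃ w ∈ T.leaves, w ∉ ({x, y} : Finset ℕ) := by
    apply Finset.not_subset.1
    intro hsub
    have hle := Finset.card_le_card hsub
    have h2 : ({x, y} : Finset ℕ).card ≤ 2 := Finset.card_insert_le _ _ |>.trans (by simp)
    omega
  have hwx : w ≠ x := fun h => hwxy (by simp [h])
  have hwy : w ≠ y := fun h => hwxy (by simp [h])
  have hwv : w ∈ T.verts := leaves_subset_verts T hwL
  have hxv : x ∈ T.verts := T.edge_verts _ he x (by simp)
  obtain ⟨p, hp⟩ := exists_path T hwv hxv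
  have hpr : p.reverse.IsPath := hp.reverse
  -- p.reverse : x → w
  cases hc1 : p.reverse with
  | nil => exact hwx rfl
  | cons hadj r =>
    rename_i w1
    have he1 : s(x, w1) ∈ T.edges := hadj.2
    have hw1 : w1 = y := by
      have h := unique_edge_of_deg_one hx he1 (by simp) he (by simp)
      rcases Sym2.eq_iff.1 h with ⟨_, h'⟩ | ⟨h1, _⟩
      · exact h'
      · exact absurd h1 hxy
    have hdegw1 : degOf T.edges w1 = 1 := hw1 ▸ hy
    have hwyw1 : w ≠ w1 := hw1 ▸ hwy
    have hxw1 : x ≠ w1 := hw1 ▸ hxy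
    cases hc2 : r with
    | nil => exact hwyw1 rfl
    | cons hadj2 r2 =>
      rename_i w2
      have he2 : s(w1, w2) ∈ T.edges := hadj2.2
      have hw2 : w2 = x := by
        have h := unique_edge_of_deg_one hdegw1 he2 (by simp) he1 (by simp)
        rcases Sym2.eq_iff.1 h with ⟨h1, _⟩ | ⟨_, h2⟩
        · exact absurd h1.symm hxw1
        · exact h2
      -- support of p.reverse contains x twice
      have hnodup := hpr.support_nodup
      rw [hc1, hc2] at hnodup
      simp only [Walk.support_cons, List.nodup_cons] at hnodup
      refine hnodup.1 ?_
      have h2 : x ∈ (r2.copy hw2 rfl).support := Walk.start_mem_support _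
      rw [Walk.support_copy] at h2
      simp only [Walk.support_cons, List.mem_cons]
      exact Or.inr h2

lemma interior_count (T : PhyloTree) (hbin : T.IsBinary) (h4 : 4 ≤ T.leaves.card) :
    T.interiorEdges.card + 3 = T.leaves.card := by
  classical
  have hdeg13 : ∀ v ∈ T.verts, degOf T.edges v = 1 ∨ degOf T.edges v = 3 :=
    fun v hv => deg_pos_of_binary T hbin hv
  have hverts_eq : vertsOf T.edges = T.verts := by
    apply Finset.Subset.antisymm
    · intro v hv
      obtain ⟨e, he, hve⟩ := mem_vertsOf.1 hv
      exact T.edge_verts e he v hve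
    · intro v hv
      have h1 : 0 < (T.edges.filter (fun e => v ∈ e)).card := by
        have := hdeg13 v hv
        unfold degOf at this
        omega
      obtain ⟨e, he⟩ := Finset.card_pos.1 h1
      exact mem_vertsOf.2 ⟨e, (Finset.mem_filter.1 he).1, (Finset.mem_filter.1 he).2⟩
  have htree : T.edges.card + 1 = T.verts.card :=
    tree_count T.edges T.verts T.not_diag T.edge_verts T.conn T.acyclic T.verts_nonempty
  have hhand : ∑ v ∈ T.verts, degOf T.edges v = 2 * T.edges.card := by
    rw [← hverts_eq]
    exact handshake T.edges T.not_diag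
  set n1 := T.leaves.card with hn1
  have hsplit : ∑ v ∈ T.leaves, degOf T.edges v + ∑ v ∈ T.interiorVerts, degOf T.edges v =
      ∑ v ∈ T.verts, degOf T.edges v := by
    exact Finset.sum_filter_add_sum_filter_not T.verts (fun v => degOf T.edges v = 1)
      (degOf T.edges)
  have hsumL : ∑ v ∈ T.leaves, degOf T.edges v = n1 := by
    have hh : ∀ v ∈ T.leaves, degOf T.edges v = 1 := fun v hv => (Finset.mem_filter.1 hv).2
    rw [Finset.sum_congr rfl hh, Finset.sum_const, smul_eq_mul, mul_one]
  have hsumI : ∑ v ∈ T.interiorVerts, degOf T.edges v = 3 * T.interiorVerts.card := by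
    have hh : ∀ v ∈ T.interiorVerts, degOf T.edges v = 3 :=
      fun v hv => hbin v (Finset.mem_filter.1 hv).1 (Finset.mem_filter.1 hv).2
    rw [Finset.sum_congr rfl hh, Finset.sum_const, smul_eq_mul, mul_comm]
  have hcards : T.leaves.card + T.interiorVerts.card = T.verts.card := by
    exact Finset.card_filter_add_card_filter_not (s := T.verts)
      (p := fun v => degOf T.edges v = 1)
  -- leaf-edge count
  set lam : Finset (Sym2 ℕ) :=
    T.edges.filter (fun e => ¬ ∀ x ∈ e, degOf T.edges x ≠ 1) with hlam
  have hIlam : T.interiorEdges.card + lam.card = T.edges.card := by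
    exact Finset.card_filter_add_card_filter_not (s := T.edges)
      (p := fun e => ∀ x ∈ e, degOf T.edges x ≠ 1)
  have hex : ∀ x ∈ T.leaves, ∃ e, e ∈ T.edges ∧ x ∈ e := by
    intro x hx
    have h1 : degOf T.edges x = 1 := (Finset.mem_filter.1 hx).2
    unfold degOf at h1
    obtain ⟨e, he⟩ := Finset.card_pos.1 (by omega : 0 < (T.edges.filter (fun e => x ∈ e)).card)
    exact ⟨e, (Finset.mem_filter.1 he).1, (Finset.mem_filter.1 he).2⟩
  have hlamcard : T.leaves.card = lam.card := by
    apply Finset.card_bij (fun x hx => (hex x hx).choose)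
    · intro x hx
      obtain ⟨he, hxe⟩ := (hex x hx).choose_spec
      refine Finset.mem_filter.2 ⟨he, ?_⟩
      intro hall
      exact hall x hxe (Finset.mem_filter.1 hx).2
    · intro x1 hx1 x2 hx2 heq
      by_contra hne
      obtain ⟨he1, hxe1⟩ := (hex x1 hx1).choose_spec
      obtain ⟨he2, hxe2⟩ := (hex x2 hx2).choose_spec
      rw [heq] at he1 hxe1
      have : (hex x2 hx2).choose = s(x1, x2) := sym2_eq_of_mem hxe1 hxe2 hne
      rw [this] at he1
      exact no_leaf_leaf_edge T (by omega) he1 (Finset.mem_filter.1 hx1).2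
        (Finset.mem_filter.1 hx2).2
    · intro e he
      obtain ⟨he', hnall⟩ := Finset.mem_filter.1 he
      push_neg at hnall
      obtain ⟨x, hxe, hxdeg⟩ := hnall
      have hxdeg1 : degOf T.edges x = 1 := hxdeg
      have hxL : x ∈ T.leaves :=
        Finset.mem_filter.2 ⟨T.edge_verts e he' x hxe, hxdeg1⟩
      refine ⟨x, hxL, ?_⟩
      obtain ⟨hce, hcxe⟩ := (hex x hxL).choose_spec
      exact (unique_edge_of_deg_one (e := e) (f := (hex x hxL).choose) hxdeg1 he' hxe hce hcxe).symm
  omega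

end Aux

/-- **Lemma 5.** Let `T` be a binary phylogenetic tree and `Q` an excess-free set
of quartets displayed by `T` with `L(Q) = L(T)` such that every interior edge of
`T` is distinguished by an element of `Q`. Then `(Q, Exc(Q))` is a patchwork. -/
theorem excess_free_distinguishing_is_patchwork
    (T : PhyloTree) (hbin : T.IsBinary)
    (Q : Finset PhyloTree) (hQ : ∀ q ∈ Q, IsQuartet q)
    (hdisp : ∀ q ∈ Q, T.Displays q)
    (hL : leafSet Q = T.leaves)
    (hexc : excQ Q = 0)
    (hdist : ∀ e ∈ T.interiorEdges, ∃ q ∈ Q, QuartetDistinguishes T q e) :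
    IsPatchwork (ExcSet Q) := by
  classical
  -- basic cardinalities
  have hQcard : (leafSet Q).card = Q.card + 3 := by
    unfold excQ at hexc
    omega
  have hQne : Q.Nonempty := by
    rcases Finset.eq_empty_or_nonempty Q with rfl | h
    · simp [leafSet] at hQcard
    · exact h
  have h4 : 4 ≤ T.leaves.card := by
    rw [← hL, hQcard]
    have := Finset.card_pos.2 hQne
    omega
  have hIcount : T.interiorEdges.card + 3 = T.leaves.card := Aux.interior_count T hbin h4
  -- the choice function from interior edges to distinguishing quartets
  set f : Sym2 ℕ → PhyloTree := fun e =>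
    if h : ∃ q ∈ Q, QuartetDistinguishes T q e then h.choose else T with hf
  have hfspec : ∀ e ∈ T.interiorEdges, f e ∈ Q ∧ QuartetDistinguishes T (f e) e := by
    intro e he
    obtain ⟨q, hq, hqd⟩ := hdist e he
    have hex : ∃ q ∈ Q, QuartetDistinguishes T q e := ⟨q, hq, hqd⟩
    rw [hf]
    simp only [dif_pos hex]
    obtain ⟨h1, h2⟩ := hex.choose_spec
    exact ⟨h1, h2⟩
  have hinj : Set.InjOn f ↑T.interiorEdges := by
    intro e1 he1 e2 he2 heq
    have h1 := (hfspec e1 he1).2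
    have h2 := (hfspec e2 he2).2
    rw [heq] at h1
    exact Aux.quartet_dist_unique T ((hQ _ (hfspec e2 he2).1).2) h1 h2
  have himage : T.interiorEdges.image f = Q := by
    apply Finset.eq_of_subset_of_card_le
    · intro q hq
      obtain ⟨e, he, rfl⟩ := Finset.mem_image.1 hq
      exact (hfspec e he).1
    · rw [Finset.card_image_of_injOn hinj]
      rw [hL] at hQcard
      omega
  -- the key excess-nonnegativity lemma
  have star : ∀ Q' : Finset PhyloTree, Q' ⊆ Q → Q'.Nonempty →
      Q'.card + 3 ≤ (leafSet Q').card := by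
    intro Q' hQ'Q hQ'ne
    set E' : Finset (Sym2 ℕ) := T.interiorEdges.filter (fun e => f e ∈ Q') with hE'
    have hE'sub : E' ⊆ T.interiorEdges := Finset.filter_subset _ _
    have hE'image : E'.image f = Q' := by
      apply Finset.Subset.antisymm
      · intro q hq
        obtain ⟨e, he, rfl⟩ := Finset.mem_image.1 hq
        exact (Finset.mem_filter.1 he).2
      · intro q hq
        have : q ∈ T.interiorEdges.image f := himage.symm ▸ hQ'Q hq
        obtain ⟨e, he, rfl⟩ := Finset.mem_image.1 this
        exact Finset.mem_image.2 ⟨e, Finset.mem_filter.2 ⟨he, hq⟩, rfl⟩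
    have hE'card : E'.card = Q'.card := by
      rw [← hE'image, Finset.card_image_of_injOn (hinj.mono (by exact_mod_cast hE'sub))]
    have hE'ne : E'.Nonempty := by
      rw [← Finset.card_pos, hE'card, Finset.card_pos]
      exact hQ'ne
    have hSsub : leafSet Q' ⊆ T.leaves := by
      rw [← hL]
      show Q'.sup PhyloTree.leaves ≤ Q.sup PhyloTree.leaves
      exact Finset.sup_mono hQ'Q
    have hwit : ∀ e ∈ E', ∃ a b c d : ℕ, a ∈ leafSet Q' ∧ b ∈ leafSet Q' ∧
        c ∈ leafSet Q' ∧ d ∈ leafSet Q' ∧ Distinguishes T a b c d e := by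
      intro e he
      have heI : e ∈ T.interiorEdges := hE'sub he
      have hfQ' : f e ∈ Q' := (Finset.mem_filter.1 he).2
      obtain ⟨a, b, c, d, hq, hd'⟩ := (hfspec e heI).2
      obtain ⟨ha, hb, hc, hd'', _⟩ := hq
      have hmem : ∀ x ∈ (f e).leaves, x ∈ leafSet Q' := by
        intro x hx
        exact Finset.mem_sup.2 ⟨f e, hfQ', hx⟩
      exact ⟨a, b, c, d, hmem a ha, hmem b hb, hmem c hc, hmem d hd'', hd'⟩
    have := Aux.steiner T (leafSet Q') hSsub E' hE'ne hE'sub hwit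
    omega
  -- patchwork assembly
  intro C1 hC1 C2 hC2 hint
  obtain ⟨hC1Q, hC1e⟩ := hC1
  obtain ⟨hC2Q, hC2e⟩ := hC2
  have hIQ : C1 ∩ C2 ⊆ Q := fun q hq => hC1Q (Finset.mem_inter.1 hq).1
  have hUQ : C1 ∪ C2 ⊆ Q := Finset.union_subset hC1Q hC2Q
  have hUne : (C1 ∪ C2).Nonempty :=
    hint.mono (Finset.inter_subset_left.trans Finset.subset_union_left)
  have star1 := star (C1 ∩ C2) hIQ hint
  have star2 := star (C1 ∪ C2) hUQ hUne
  have hLU : leafSet (C1 ∪ C2) = leafSet C1 ∪ leafSet C2 := Finset.sup_union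
  have hLI : leafSet (C1 ∩ C2) ⊆ leafSet C1 ∩ leafSet C2 := by
    apply Finset.subset_inter
    · show (C1 ∩ C2).sup PhyloTree.leaves ≤ C1.sup PhyloTree.leaves
      exact Finset.sup_mono Finset.inter_subset_left
    · show (C1 ∩ C2).sup PhyloTree.leaves ≤ C2.sup PhyloTree.leaves
      exact Finset.sup_mono Finset.inter_subset_right
  have hLIcard : (leafSet (C1 ∩ C2)).card ≤ (leafSet C1 ∩ leafSet C2).card :=
    Finset.card_le_card hLI
  have hLUcard : (leafSet (C1 ∪ C2)).card = (leafSet C1 ∪ leafSet C2).card := by rw [hLU]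
  have hcard1 : (leafSet C1 ∪ leafSet C2).card + (leafSet C1 ∩ leafSet C2).card =
      (leafSet C1).card + (leafSet C2).card := Finset.card_union_add_card_inter _ _
  have hcard2 : (C1 ∪ C2).card + (C1 ∩ C2).card = C1.card + C2.card :=
    Finset.card_union_add_card_inter _ _
  unfold excQ at hC1e hC2e
  refine ⟨⟨hIQ, ?_⟩, ⟨hUQ, ?_⟩⟩ <;> unfold excQ <;> omega
end
end

section
/- Let G = (V, A) be a finite digraph with an arc labeling λ assigning to each arc a 2-element subset of a set X, and suppose that any two distinct arcs of G leaving the same vertex have disjoint labels. Then every coloured cycle of G is a directed cycle, and every arc a with λ(a) = {x, y} is contained in at most one x-coloured cycle and in at most one y-coloured cycle of G. -/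
noncomputable section

attribute [local instance] Classical.propDecidable

variable {V X : Type*}

/-- The underlying undirected simple graph of the digraph with arc set `A`. -/
def underlyingGraph [DecidableEq V] (A : Finset (V × V)) : SimpleGraph V where
  Adj u v := u ≠ v ∧ ((u, v) ∈ A ∨ (v, u) ∈ A)
  symm := by
    constructor
    intro u v h
    exact ⟨h.1.symm, h.2.symm⟩
  loopless := by constructor; intro v h; exact h.1 rfl

/-- The finite edge set `E` is the edge set of a cycle of the graph `G`. -/
def IsCycleEdgeSet [DecidableEq V] (G : SimpleGraph V) (E : Finset (Sym2 V)) : Prop :=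
  ∃ (u : V) (w : G.Walk u u), w.IsCycle ∧ w.edges.toFinset = E

/-- `S` is an `x`-coloured cycle of the digraph `(V, A)` with arc labeling `lab`:
`S` is a set of arcs, all of whose labels contain `x`, whose underlying edges are
pairwise distinct and form a cycle of the underlying undirected graph. -/
def IsColouredCycleWith [DecidableEq V] (A : Finset (V × V)) (lab : V × V → Finset X)
    (x : X) (S : Finset (V × V)) : Prop :=
  S ⊆ A ∧ (∀ a ∈ S, x ∈ lab a) ∧
  Set.InjOn (fun a : V × V => s(a.1, a.2)) ↑S ∧
  IsCycleEdgeSet (underlyingGraph A) (S.image (fun a : V × V => s(a.1, a.2)))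

/-- `S` is a coloured cycle: an `x`-coloured cycle for some `x`. -/
def IsColouredCycle [DecidableEq V] (A : Finset (V × V)) (lab : V × V → Finset X)
    (S : Finset (V × V)) : Prop :=
  ∃ x : X, IsColouredCycleWith A lab x S

/-- A set of arcs forming a cycle is a directed cycle iff at every vertex the
number of arcs leaving it equals the number of arcs entering it. -/
def IsDirectedCycleSet [DecidableEq V] (S : Finset (V × V)) : Prop :=
  ∀ v : V, (S.filter (fun a => a.1 = v)).card = (S.filter (fun a => a.2 = v)).card

/-! ### Auxiliary lemmas -/

private lemma path_filter_endpoint {V : Type*} {G : SimpleGraph V} [DecidableEq V] :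
    ∀ {v u : V} (p : G.Walk v u), p.IsPath →
      (p.edges.filter (fun e => decide (u ∈ e))).length = if v = u then 0 else 1 := by
  intro v u p
  induction p with
  | nil => simp
  | @cons v w u h q ih =>
    intro hp
    rw [SimpleGraph.Walk.cons_isPath_iff] at hp
    obtain ⟨hq, hv⟩ := hp
    have hvu : v ≠ u := by
      rintro rfl
      exact hv (SimpleGraph.Walk.end_mem_support q)
    rw [if_neg hvu]
    simp only [SimpleGraph.Walk.edges_cons, List.filter_cons]
    by_cases huw : u = w
    · subst huw
      have hmem : u ∈ s(v, u) := by simp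
      have h2 := ih hq
      rw [if_pos rfl] at h2
      simp [hmem, h2]
    · have hmem : u ∉ s(v, w) := by
        simp only [Sym2.mem_iff]
        push_neg
        exact ⟨fun e => hvu e.symm, huw⟩
      have h2 := ih hq
      rw [if_neg (fun e => huw e.symm)] at h2
      simp [hmem, h2]

private lemma cycle_filter_two {V : Type*} {G : SimpleGraph V} [DecidableEq V] {u : V}
    (w : G.Walk u u) (hw : w.IsCycle) :
    (w.edges.filter (fun e => decide (u ∈ e))).length = 2 := by
  cases w with
  | nil => exact absurd rfl hw.ne_nil
  | @cons _ v _ h q =>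
    rw [SimpleGraph.Walk.cons_isCycle_iff] at hw
    obtain ⟨hq, _⟩ := hw
    have hmem : u ∈ s(u, v) := by simp
    have h2 := path_filter_endpoint q hq
    rw [if_neg h.ne'] at h2
    simp [List.filter_cons, hmem, h2]

private lemma cycle_filter_deg {V : Type*} {G : SimpleGraph V} [DecidableEq V] {u : V}
    (w : G.Walk u u) (hw : w.IsCycle) (z : V) :
    (w.edges.filter (fun e => decide (z ∈ e))).length = if z ∈ w.support then 2 else 0 := by
  by_cases hz : z ∈ w.support
  · rw [if_pos hz]
    have hperm := (SimpleGraph.Walk.rotate_edges w z hz).perm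
    have h2 := cycle_filter_two (w.rotate z hz) (hw.rotate hz)
    rw [← (hperm.filter _).length_eq]
    exact h2
  · rw [if_neg hz]
    rw [List.length_eq_zero_iff, List.filter_eq_nil_iff]
    intro e he
    induction e with
    | h p q =>
      simp only [decide_eq_true_eq, Sym2.mem_iff]
      rintro (rfl | rfl)
      · exact hz (SimpleGraph.Walk.fst_mem_support_of_mem_edges w he)
      · exact hz (SimpleGraph.Walk.snd_mem_support_of_mem_edges w he)

private lemma walk_const_class {V : Type*} {G : SimpleGraph V} (P : V → Prop) :
    ∀ {u v : V} (w : G.Walk u v),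
      (∀ p q, s(p, q) ∈ w.edges → (P p ↔ P q)) → ∀ z ∈ w.support, (P z ↔ P u) := by
  intro u v w
  induction w with
  | nil => intro _ z hz; simp at hz; subst hz; rfl
  | @cons a b c h q ih =>
    intro hedges z hz
    rw [SimpleGraph.Walk.support_cons] at hz
    rcases List.mem_cons.mp hz with rfl | hz
    · rfl
    · have hab : P a ↔ P b := hedges a b (by simp)
      have h2 := ih (fun p q hpq => hedges p q (by simp [hpq])) z hz
      rw [h2, hab]

private lemma iterate_mem {α : Type*} (σ : α → α) (S : Finset α) (hmap : ∀ b ∈ S, σ b ∈ S) :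
    ∀ (n : ℕ) (b : α), b ∈ S → σ^[n] b ∈ S := by
  intro n
  induction n with
  | zero => intro b hb; simpa using hb
  | succ n ih =>
    intro b hb
    rw [Function.iterate_succ_apply]
    exact ih _ (hmap b hb)

private lemma iterate_cancel {α : Type*} (σ : α → α) (S : Finset α)
    (hmap : ∀ b ∈ S, σ b ∈ S)
    (hinj : ∀ b ∈ S, ∀ c ∈ S, σ b = σ c → b = c) :
    ∀ (n : ℕ) (b c : α), b ∈ S → c ∈ S → σ^[n] b = σ^[n] c → b = c := by
  intro n
  induction n with
  | zero => intro b c _ _ h; simpa using h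
  | succ n ih =>
    intro b c hb hc h
    rw [Function.iterate_succ_apply, Function.iterate_succ_apply] at h
    exact hinj b hb c hc (ih _ _ (hmap b hb) (hmap c hc) h)

private lemma out_le_one {V X : Type*} [DecidableEq V] [DecidableEq X]
    {A : Finset (V × V)} {lab : V × V → Finset X}
    (hdisj : ∀ a ∈ A, ∀ b ∈ A, a ≠ b → a.1 = b.1 → Disjoint (lab a) (lab b))
    {x : X} {S : Finset (V × V)} (hSA : S ⊆ A) (hx : ∀ a ∈ S, x ∈ lab a) (v : V) :
    (S.filter (fun a => a.1 = v)).card ≤ 1 := by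
  by_contra h
  push_neg at h
  obtain ⟨a, ha, b, hb, hab⟩ := Finset.one_lt_card.mp h
  rw [Finset.mem_filter] at ha hb
  have hd := hdisj a (hSA ha.1) b (hSA hb.1) hab (ha.2.trans hb.2.symm)
  exact (Finset.disjoint_left.mp hd (hx a ha.1)) (hx b hb.1)

private lemma deg_eq {V X : Type*} [DecidableEq V] [DecidableEq X]
    {A : Finset (V × V)} {lab : V × V → Finset X}
    (harc : ∀ a ∈ A, a.1 ≠ a.2)
    {x : X} {S : Finset (V × V)} (hS : IsColouredCycleWith A lab x S)
    {u : V} {w : (underlyingGraph A).Walk u u} (hw : w.IsCycle)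
    (hE : w.edges.toFinset = S.image (fun a : V × V => s(a.1, a.2))) (v : V) :
    (S.filter (fun a => a.1 = v)).card + (S.filter (fun a => a.2 = v)).card
      = if v ∈ w.support then 2 else 0 := by
  obtain ⟨hSA, hx, hinj, _⟩ := hS
  have hdisjf : Disjoint (S.filter (fun a => a.1 = v)) (S.filter (fun a => a.2 = v)) := by
    rw [Finset.disjoint_left]
    intro a ha hb
    rw [Finset.mem_filter] at ha hb
    exact harc a (hSA ha.1) (ha.2.trans hb.2.symm)
  rw [← Finset.card_union_of_disjoint hdisjf, ← Finset.filter_or]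
  have himg : (S.filter (fun a => a.1 = v ∨ a.2 = v)).image (fun a : V × V => s(a.1, a.2))
      = (S.image (fun a : V × V => s(a.1, a.2))).filter (fun e => v ∈ e) := by
    ext e
    simp only [Finset.mem_image, Finset.mem_filter]
    constructor
    · rintro ⟨a, ha, rfl⟩
      refine ⟨⟨a, ha.1, rfl⟩, ?_⟩
      rcases ha.2 with h | h <;> simp [h]
    · rintro ⟨⟨a, ha, rfl⟩, hv⟩
      refine ⟨a, ⟨ha, ?_⟩, rfl⟩
      rw [Sym2.mem_iff] at hv
      tauto
  have hcard : (S.filter (fun a => a.1 = v ∨ a.2 = v)).card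
      = ((S.image (fun a : V × V => s(a.1, a.2))).filter (fun e => v ∈ e)).card := by
    rw [← himg]
    exact (Finset.card_image_of_injOn (hinj.mono (by
      exact_mod_cast Finset.filter_subset _ S))).symm
  rw [hcard, ← hE]
  have h1 : (w.edges.toFinset.filter (fun e => v ∈ e))
      = (w.edges.filter (fun e => decide (v ∈ e))).toFinset := by
    rw [List.toFinset_filter]
    apply Finset.filter_congr
    intro e _
    simp
  rw [h1, List.toFinset_card_of_nodup (hw.isTrail.edges_nodup.filter _)]
  exact cycle_filter_deg w hw v

private lemma claim1 {V X : Type*} [Fintype V] [DecidableEq V] [DecidableEq X]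
    {A : Finset (V × V)} {lab : V × V → Finset X}
    (harc : ∀ a ∈ A, a.1 ≠ a.2)
    (hdisj : ∀ a ∈ A, ∀ b ∈ A, a ≠ b → a.1 = b.1 → Disjoint (lab a) (lab b))
    {x : X} {S : Finset (V × V)} (hS : IsColouredCycleWith A lab x S) (v : V) :
    (S.filter (fun a => a.1 = v)).card = (S.filter (fun a => a.2 = v)).card := by
  obtain ⟨hSA, hx, hinj, u, w, hw, hE⟩ := hS
  have hS' : IsColouredCycleWith A lab x S := ⟨hSA, hx, hinj, u, w, hw, hE⟩
  have hle : ∀ z : V, (S.filter (fun a => a.1 = z)).card ≤ (S.filter (fun a => a.2 = z)).card := by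
    intro z
    have hd := deg_eq harc hS' hw hE z
    have ho := out_le_one hdisj hSA hx z
    by_cases hz : z ∈ w.support
    · rw [if_pos hz] at hd; omega
    · rw [if_neg hz] at hd; omega
  have hsum1 : S.card = ∑ z : V, (S.filter (fun a => a.1 = z)).card :=
    Finset.card_eq_sum_card_fiberwise (fun a _ => Finset.mem_univ a.1)
  have hsum2 : S.card = ∑ z : V, (S.filter (fun a => a.2 = z)).card :=
    Finset.card_eq_sum_card_fiberwise (fun a _ => Finset.mem_univ a.2)
  have := (Finset.sum_eq_sum_iff_of_le (fun i _ => hle i)).mp (hsum1.symm.trans hsum2)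
  exact this v (Finset.mem_univ v)

private lemma cycle_subset {V X : Type*} [Fintype V] [DecidableEq V] [DecidableEq X]
    {A : Finset (V × V)} {lab : V × V → Finset X}
    (harc : ∀ a ∈ A, a.1 ≠ a.2)
    (hdisj : ∀ a ∈ A, ∀ b ∈ A, a ≠ b → a.1 = b.1 → Disjoint (lab a) (lab b))
    {x : X} {a : V × V} {S1 S2 : Finset (V × V)}
    (h1 : IsColouredCycleWith A lab x S1) (h2 : IsColouredCycleWith A lab x S2)
    (ha1 : a ∈ S1) (ha2 : a ∈ S2) : S1 ⊆ S2 := by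
  classical
  -- the global successor function
  set σ : V × V → V × V := fun b =>
    if h : ∃ c, c ∈ A ∧ c.1 = b.2 ∧ x ∈ lab c then h.choose else b with hσdef
  have hσ_spec : ∀ b c : V × V, c ∈ A → c.1 = b.2 → x ∈ lab c → σ b = c := by
    intro b c hc hc1 hc2
    have hex : ∃ c, c ∈ A ∧ c.1 = b.2 ∧ x ∈ lab c := ⟨c, hc, hc1, hc2⟩
    have hspec := hex.choose_spec
    have hval : σ b = hex.choose := by rw [hσdef]; exact dif_pos hex
    rw [hval]
    by_contra hne
    exact (Finset.disjoint_left.mp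
      (hdisj _ hspec.1 c hc hne (hspec.2.1.trans hc1.symm)) hspec.2.2) hc2
  -- facts valid for any x-coloured cycle S
  have cyclefacts : ∀ S : Finset (V × V), IsColouredCycleWith A lab x S →
      (∀ b ∈ S, σ b ∈ S ∧ (σ b).1 = b.2) ∧
      (∀ b ∈ S, ∀ c ∈ S, b.1 = c.1 → b = c) ∧
      (∀ b ∈ S, ∀ c ∈ S, b.2 = c.2 → b = c) := by
    intro S hS
    obtain ⟨hSA, hx, hinj, hcyc⟩ := hS
    have hS' : IsColouredCycleWith A lab x S := ⟨hSA, hx, hinj, hcyc⟩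
    have ho : ∀ v, (S.filter (fun b => b.1 = v)).card ≤ 1 := out_le_one hdisj hSA hx
    have heq : ∀ v, (S.filter (fun b => b.1 = v)).card = (S.filter (fun b => b.2 = v)).card :=
      claim1 harc hdisj hS'
    have hout_uniq : ∀ b ∈ S, ∀ c ∈ S, b.1 = c.1 → b = c := by
      intro b hb c hc hbc
      exact Finset.card_le_one.mp (ho c.1)
        b (Finset.mem_filter.mpr ⟨hb, hbc⟩) c (Finset.mem_filter.mpr ⟨hc, rfl⟩)
    have hin_uniq : ∀ b ∈ S, ∀ c ∈ S, b.2 = c.2 → b = c := by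
      intro b hb c hc hbc
      have := (heq c.2).symm.trans_le (ho c.2)
      exact Finset.card_le_one.mp this
        b (Finset.mem_filter.mpr ⟨hb, hbc⟩) c (Finset.mem_filter.mpr ⟨hc, rfl⟩)
    refine ⟨?_, hout_uniq, hin_uniq⟩
    intro b hb
    have hin : 0 < (S.filter (fun c => c.2 = b.2)).card :=
      Finset.card_pos.mpr ⟨b, Finset.mem_filter.mpr ⟨hb, rfl⟩⟩
    have hout : 0 < (S.filter (fun c => c.1 = b.2)).card := by rw [heq]; exact hin
    obtain ⟨c, hc⟩ := Finset.card_pos.mp hout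
    rw [Finset.mem_filter] at hc
    have : σ b = c := hσ_spec b c (hSA hc.1) hc.2 (hx c hc.1)
    rw [this]
    exact ⟨hc.1, hc.2⟩
  obtain ⟨hstep1, hout1, hin1⟩ := cyclefacts S1 h1
  obtain ⟨hstep2, _, _⟩ := cyclefacts S2 h2
  have hmap1 : ∀ b ∈ S1, σ b ∈ S1 := fun b hb => (hstep1 b hb).1
  have hinj1 : ∀ b ∈ S1, ∀ c ∈ S1, σ b = σ c → b = c := by
    intro b hb c hc h
    have hbc : b.2 = c.2 := by rw [← (hstep1 b hb).2, h, (hstep1 c hc).2]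
    exact hin1 b hb c hc hbc
  have hmem1 : ∀ n : ℕ, σ^[n] a ∈ S1 := fun n => iterate_mem σ S1 hmap1 n a ha1
  -- periodicity
  have hperiod : ∃ m : ℕ, 1 ≤ m ∧ σ^[m] a = a := by
    obtain ⟨i, hi, j, hj, hij, hfij⟩ :=
      Finset.exists_ne_map_eq_of_card_lt_of_maps_to
        (s := Finset.range (S1.card + 1)) (t := S1)
        (by simp) (fun k _ => hmem1 k)
    have key : ∀ i j : ℕ, i < j → σ^[i] a = σ^[j] a → ∃ m : ℕ, 1 ≤ m ∧ σ^[m] a = a := by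
      intro i j hlt he
      refine ⟨j - i, by omega, ?_⟩
      apply iterate_cancel σ S1 hmap1 hinj1 i _ _ (hmem1 _) ha1
      rw [← Function.iterate_add_apply]
      have : i + (j - i) = j := by omega
      rw [this, ← he]
    rcases lt_or_gt_of_ne hij with h | h
    · exact key i j h hfij
    · exact key j i h hfij.symm
  obtain ⟨m, hm1, hm⟩ := hperiod
  -- the orbit predicate
  set T : V × V → Prop := fun b => b ∈ S1 ∧ ∃ k : ℕ, σ^[k] a = b with hTdef
  have hTpre : ∀ c ∈ S1, T (σ c) → T c := by
    intro c hc ⟨_, k, hk⟩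
    refine ⟨hc, k + m - 1, ?_⟩
    apply hinj1 _ (hmem1 _) c hc
    have he : (k + m - 1) + 1 = k + m := by omega
    calc σ (σ^[k + m - 1] a) = σ^[(k + m - 1) + 1] a := (Function.iterate_succ_apply' σ _ a).symm
      _ = σ^[k + m] a := by rw [he]
      _ = σ^[k] (σ^[m] a) := by rw [Function.iterate_add_apply]
      _ = σ^[k] a := by rw [hm]
      _ = σ c := hk
  have hTsucc : ∀ b, T b → T (σ b) := by
    rintro b ⟨hb, k, hk⟩
    exact ⟨hmap1 b hb, k + 1, by rw [Function.iterate_succ_apply', hk]⟩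
  -- sharing a vertex propagates T
  have hshare : ∀ (v : V) (b c : V × V), T b → c ∈ S1 → b ≠ c →
      (b.1 = v ∨ b.2 = v) → (c.1 = v ∨ c.2 = v) → T c := by
    intro v b c hTb hc hbc hbv hcv
    have hb := hTb.1
    rcases hbv with hbv | hbv <;> rcases hcv with hcv | hcv
    · exact absurd (hout1 b hb c hc (hbv.trans hcv.symm)) hbc
    · -- b.1 = v, c.2 = v : b = σ c
      have hσc : σ c = b := by
        have h1' := (hstep1 c hc).1
        have h2' := (hstep1 c hc).2
        exact hout1 (σ c) h1' b hb (h2'.trans (hcv.trans hbv.symm))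
      exact hTpre c hc (hσc.symm ▸ hTb)
    · -- b.2 = v, c.1 = v : c = σ b
      have hσb : σ b = c := by
        have h1' := (hstep1 b hb).1
        have h2' := (hstep1 b hb).2
        exact hout1 (σ b) h1' c hc (h2'.trans (hbv.trans hcv.symm))
      exact hσb ▸ hTsucc b hTb
    · exact absurd (hin1 b hb c hc (hbv.trans hcv.symm)) hbc
  -- the walk of S1
  obtain ⟨hSA1, hx1, hinj1', u, w, hw, hE⟩ := h1
  set P : V → Prop := fun z => ∃ b, T b ∧ (b.1 = z ∨ b.2 = z) with hPdef
  have hkey : ∀ (p q : V) (c : V × V), c ∈ S1 → (c.1 = p ∨ c.2 = p) → (c.1 = q ∨ c.2 = q) →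
      P p → P q := by
    intro p q c hc hcp hcq ⟨b, hTb, hbp⟩
    by_cases hbc : b = c
    · exact ⟨c, hbc ▸ hTb, hcq⟩
    · exact ⟨c, hshare p b c hTb hc hbc hbp hcp, hcq⟩
  have hedge : ∀ p q, s(p, q) ∈ w.edges → (P p ↔ P q) := by
    intro p q he
    have he' : s(p, q) ∈ S1.image (fun a : V × V => s(a.1, a.2)) := by
      rw [← hE]
      exact List.mem_toFinset.mpr he
    obtain ⟨c, hc, hceq⟩ := Finset.mem_image.mp he'
    rw [Sym2.eq_iff] at hceq
    have hcp : c.1 = p ∨ c.2 = p := by tauto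
    have hcq : c.1 = q ∨ c.2 = q := by tauto
    exact ⟨hkey p q c hc hcp hcq, hkey q p c hc hcq hcp⟩
  have hsupp : ∀ b ∈ S1, b.1 ∈ w.support := by
    intro b hb
    have : s(b.1, b.2) ∈ w.edges := by
      rw [← List.mem_toFinset, hE]
      exact Finset.mem_image.mpr ⟨b, hb, rfl⟩
    exact SimpleGraph.Walk.fst_mem_support_of_mem_edges w this
  have hall := walk_const_class P w hedge
  have hPa : P a.1 := ⟨a, ⟨ha1, 0, rfl⟩, Or.inl rfl⟩
  have hPu : P u := (hall a.1 (hsupp a ha1)).mp hPa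
  -- conclusion
  intro b hb
  have hPb : P b.1 := (hall b.1 (hsupp b hb)).mpr hPu
  obtain ⟨d, hTd, hd⟩ := hPb
  have hTb : T b := by
    by_cases hdb : d = b
    · exact hdb ▸ hTd
    · exact hshare b.1 d b hTd hb hdb hd (Or.inl rfl)
  obtain ⟨_, k, hk⟩ := hTb
  have : σ^[k] a ∈ S2 := iterate_mem σ S2 (fun c hc => (hstep2 c hc).1) k a ha2
  rwa [hk] at this

/-- If in a finite arc-labeled digraph (labels being 2-element sets) any two
distinct arcs leaving the same vertex have disjoint labels, then every coloured
cycle is a directed cycle, and every arc `a` with `λ(a) = {x, y}` lies in at most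
one `x`-coloured cycle and at most one `y`-coloured cycle. -/
theorem coloured_cycles_directed_and_unique
    {V X : Type*} [Fintype V] [DecidableEq V] [DecidableEq X]
    (A : Finset (V × V)) (lab : V × V → Finset X)
    (harc : ∀ a ∈ A, a.1 ≠ a.2)
    (hlab : ∀ a ∈ A, (lab a).card = 2)
    (hdisj : ∀ a ∈ A, ∀ b ∈ A, a ≠ b → a.1 = b.1 → Disjoint (lab a) (lab b)) :
    (∀ S : Finset (V × V), IsColouredCycle A lab S → IsDirectedCycleSet S) ∧
    (∀ a ∈ A, ∀ x ∈ lab a, ∀ S1 S2 : Finset (V × V),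
      IsColouredCycleWith A lab x S1 → IsColouredCycleWith A lab x S2 →
      a ∈ S1 → a ∈ S2 → S1 = S2) := by
  constructor
  · rintro S ⟨x, hS⟩ v
    exact claim1 harc hdisj hS v
  · intro a _ x _ S1 S2 h1 h2 ha1 ha2
    exact Finset.Subset.antisymm
      (cycle_subset harc hdisj h1 h2 ha1 ha2)
      (cycle_subset harc hdisj h2 h1 ha2 ha1)
end
end
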